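/- arXiv:2602.12551 — 4 statements merged into one kernel-verified Lean document; each statement's English description precedes it below -/
import Mathlib

section
/- Let T be a finite tournament that is neither a transitive tournament nor isomorphic to a tournament T[a,b,c] for any positive integers a, b, c. Then there exists a regular tournamenton W such that t(T, W) = 0. -/
open MeasureTheory

noncomputable section

/-- The unit interval as a subset of `ℝ`. -/
def I01 : Set ℝ := Set.Icc 0 1

/-- A tournamenton: a measurable `W : [0,1]² → [0,1]` with `W x y + W y x = 1`. -/
def IsTournamenton (W : ℝ → ℝ → ℝ) : Prop :=
  Measurable (Function.uncurry W) ∧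
  ∀ x ∈ I01, ∀ y ∈ I01, 0 ≤ W x y ∧ W x y ≤ 1 ∧ W x y + W y x = 1

/-- A tournamenton is regular if almost every vertex has out-degree `1/2`. -/
def IsRegularT (W : ℝ → ℝ → ℝ) : Prop :=
  ∀ᵐ x : ℝ, x ∈ I01 → (∫ y in I01, W x y) = 1 / 2

/-- `W` equals `1/2` almost everywhere on `[0,1]²`. -/
def ConstHalf (W : ℝ → ℝ → ℝ) : Prop :=
  ∀ᵐ p : ℝ × ℝ, p ∈ I01 ×ˢ I01 → W p.1 p.2 = 1 / 2

open scoped Classical in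
/-- Homomorphism density of the digraph with vertex set `V` and edge relation `E`
in the tournamenton `W`. -/
def homDensity {V : Type} [Fintype V] (E : V → V → Prop) (W : ℝ → ℝ → ℝ) : ℝ :=
  ∫ x in Set.univ.pi (fun _ : V => I01),
    ∏ p ∈ Finset.univ.filter (fun p : V × V => E p.1 p.2), W (x p.1) (x p.2)

/-- `E` is the edge relation of a tournament. -/
def IsTournament {V : Type} (E : V → V → Prop) : Prop :=
  (∀ v, ¬ E v v) ∧ ∀ u v : V, u ≠ v → (E u v ↔ ¬ E v u)

/-- the edge relation is transitive (for a tournament: a strict linear order). -/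
def IsTransitive {V : Type} (E : V → V → Prop) : Prop :=
  ∀ u v w : V, E u v → E v w → E u w

/-- Vertex set of the blow-up `C[a,b,c]` of the cyclic triangle. -/
abbrev CV (a b c : ℕ) := Fin a ⊕ Fin b ⊕ Fin c

/-- Which of the three parts a vertex belongs to. -/
def cpart {a b c : ℕ} : CV a b c → Fin 3
  | .inl _ => 0
  | .inr (.inl _) => 1
  | .inr (.inr _) => 2

/-- Index of a vertex inside its part. -/
def cidx {a b c : ℕ} : CV a b c → ℕ
  | .inl i => i
  | .inr (.inl i) => i
  | .inr (.inr i) => i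

/-- Edges of `C[a,b,c]`: all edges from part 0 to part 1, part 1 to part 2 and
part 2 to part 0; no edges inside parts. -/
def CEdge (a b c : ℕ) (u v : CV a b c) : Prop := cpart v = cpart u + 1

/-- Edges of the tournament `T[a,b,c]`: `C[a,b,c]` plus a transitive tournament on
each of the three parts. -/
def TEdge (a b c : ℕ) (u v : CV a b c) : Prop :=
  cpart v = cpart u + 1 ∨ (cpart u = cpart v ∧ cidx u < cidx v)

/-- Edges of `B[c]`: the digraph `C[1,1,c]` minus the edge between the two singleton
parts (a source, `c` middle vertices, a sink). -/
def BEdge (c : ℕ) (u v : CV 1 1 c) : Prop :=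
  cpart v = cpart u + 1 ∧ cpart u ≠ 0

/-- `E` is isomorphic to the tournament `T[a,b,c]`. -/
def IsoToT {V : Type} (E : V → V → Prop) (a b c : ℕ) : Prop :=
  ∃ e : V ≃ CV a b c, ∀ u v : V, E u v ↔ TEdge a b c (e u) (e v)

/-- The tournament `E` contains a subtournament isomorphic to `E'`. -/
def ContainsSub {V V' : Type} (E : V → V → Prop) (E' : V' → V' → Prop) : Prop :=
  ∃ f : V' → V, Function.Injective f ∧ ∀ u v : V', E' u v ↔ E (f u) (f v)

/-- The tournament `W₄`: a source dominating a cyclic triangle. -/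
def W4Edge (u v : Fin 4) : Prop :=
  (u = 0 ∧ v ≠ 0) ∨ (u = 1 ∧ v = 2) ∨ (u = 2 ∧ v = 3) ∨ (u = 3 ∧ v = 1)

/-- The tournament `L₄`: a sink dominated by a cyclic triangle. -/
def L4Edge (u v : Fin 4) : Prop :=
  (v = 0 ∧ u ≠ 0) ∨ (u = 1 ∧ v = 2) ∨ (u = 2 ∧ v = 3) ∨ (u = 3 ∧ v = 1)

/-- The 5-vertex carousel tournament `C₅`. -/
def C5Edge (u v : ZMod 5) : Prop := v - u = 1 ∨ v - u = 2

namespace S4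

/-- floor of 3^k x -/
def fl (k : ℕ) (x : ℝ) : ℤ := ⌊(3:ℝ)^k * x⌋

/-- k-th ternary digit -/
def dg (k : ℕ) (x : ℝ) : ℤ := fl (k+1) x - 3 * fl k x

lemma fl_succ (k : ℕ) (x : ℝ) : fl (k+1) x = 3 * fl k x + dg k x := by
  simp [dg]

lemma dg_nonneg (k : ℕ) (x : ℝ) : 0 ≤ dg k x := by
  have h1 : ((3 * fl k x : ℤ) : ℝ) ≤ (3:ℝ)^(k+1) * x := by
    push_cast
    have := Int.floor_le ((3:ℝ)^k * x)
    have hp : (3:ℝ)^(k+1) = 3 * 3^k := by ring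
    rw [hp]; unfold fl; nlinarith
  have h2 := Int.le_floor.mpr h1
  simp only [dg, fl] at *
  omega

lemma dg_lt_three (k : ℕ) (x : ℝ) : dg k x < 3 := by
  have h1 : (3:ℝ)^(k+1) * x < ((3 * fl k x + 3 : ℤ) : ℝ) := by
    push_cast
    have := Int.lt_floor_add_one ((3:ℝ)^k * x)
    have hp : (3:ℝ)^(k+1) = 3 * 3^k := by ring
    rw [hp]; unfold fl; nlinarith
  have h2 := Int.floor_lt.mpr h1
  simp only [dg, fl] at *
  omega

lemma fl_of_fl_succ (k : ℕ) (x : ℝ) : fl k x = fl (k+1) x / 3 := by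
  have h := fl_succ k x
  have h0 := dg_nonneg k x
  have h3 := dg_lt_three k x
  omega

lemma fl_eq_of_dg_eq {x y : ℝ} (h0 : fl 0 x = fl 0 y) (k : ℕ)
    (h : ∀ j < k, dg j x = dg j y) : fl k x = fl k y := by
  induction k with
  | zero => exact h0
  | succ n ih =>
    rw [fl_succ, fl_succ, ih (fun j hj => h j (by omega)), h n (by omega)]

lemma dg_eq_of_fl_eq {x y : ℝ} (k : ℕ) (h : fl k x = fl k y) :
    ∀ j < k, dg j x = dg j y := by
  induction k with
  | zero => omega
  | succ n ih =>
    intro j hj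
    have hn : fl n x = fl n y := by
      rw [fl_of_fl_succ n x, fl_of_fl_succ n y, h]
    rcases Nat.lt_succ_iff_lt_or_eq.mp hj with h' | rfl
    · exact ih hn j h'
    · have e1 := fl_succ j x
      have e2 := fl_succ j y
      omega

lemma fl_zero_of_mem {x : ℝ} (h0 : 0 ≤ x) (h1 : x < 1) : fl 0 x = 0 := by
  simp only [fl, pow_zero, one_mul]
  exact Int.floor_eq_zero_iff.mpr ⟨h0, h1⟩

lemma fl_mem {x : ℝ} (k : ℕ) (h0 : 0 ≤ x) (h1 : x < 1) :
    0 ≤ fl k x ∧ fl k x < 3^k := by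
  constructor
  · exact Int.le_floor.mpr (by push_cast; positivity)
  · refine Int.floor_lt.mpr ?_
    push_cast
    nlinarith [pow_pos (by norm_num : (0:ℝ) < 3) k]

/-- digits determine the number on [0,1) -/
lemma eq_of_dg_eq {x y : ℝ} (hx0 : 0 ≤ x) (hx1 : x < 1) (hy0 : 0 ≤ y) (hy1 : y < 1)
    (h : ∀ k, dg k x = dg k y) : x = y := by
  have hfl : ∀ k, fl k x = fl k y := fun k =>
    fl_eq_of_dg_eq (by rw [fl_zero_of_mem hx0 hx1, fl_zero_of_mem hy0 hy1]) k
      (fun j _ => h j)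
  by_contra hne
  have habs : ∀ k : ℕ, |x - y| * 3^k < 1 := by
    intro k
    have h1 : (fl k x : ℝ) ≤ 3^k * x := Int.floor_le _
    have h2 : 3^k * x < fl k x + 1 := Int.lt_floor_add_one _
    have h3 : (fl k y : ℝ) ≤ 3^k * y := Int.floor_le _
    have h4 : 3^k * y < fl k y + 1 := Int.lt_floor_add_one _
    rw [hfl k] at h1 h2
    have hpk : (0:ℝ) < 3^k := by positivity
    have h5 : |3^k * x - 3^k * y| < 1 := abs_sub_lt_iff.mpr ⟨by linarith, by linarith⟩
    have h6 : |3^k * x - 3^k * y| = 3^k * |x - y| := by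
      rw [← mul_sub, abs_mul, abs_of_pos hpk]
    nlinarith [h5, h6]
  obtain ⟨k, hk⟩ := pow_unbounded_of_one_lt (|x - y|⁻¹) (by norm_num : (1:ℝ) < 3)
  have h0 : 0 < |x - y| := abs_pos.mpr (sub_ne_zero.mpr hne)
  have h7 := mul_lt_mul_of_pos_left hk h0
  rw [mul_inv_cancel₀ (ne_of_gt h0)] at h7
  linarith [habs k]


def TernCyc (x y : ℝ) : Prop :=
  ∃ k, (∀ j < k, dg j x = dg j y) ∧ dg k y = (dg k x + 1) % 3

def TernEq (x y : ℝ) : Prop := ∀ k, dg k x = dg k y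

open scoped Classical in
def Wt (x y : ℝ) : ℝ := if TernCyc x y then 1 else if TernEq x y then 1/2 else 0

lemma terncyc_ne {x y : ℝ} {k : ℕ} (h : dg k y = (dg k x + 1) % 3) :
    dg k x ≠ dg k y := by
  have h1 := dg_nonneg k x; have h2 := dg_lt_three k x
  omega

lemma not_ternEq_of_ternCyc {x y : ℝ} (h : TernCyc x y) : ¬ TernEq x y := by
  obtain ⟨k, _, hk⟩ := h
  exact fun he => terncyc_ne hk (he k)

lemma ternCyc_not_symm {x y : ℝ} (h : TernCyc x y) : ¬ TernCyc y x := by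
  rintro ⟨k', hpre', hk'⟩
  obtain ⟨k, hpre, hk⟩ := h
  rcases lt_trichotomy k k' with hlt | rfl | hgt
  · exact terncyc_ne hk (hpre' k hlt).symm
  · have h1 := dg_nonneg k x; have h2 := dg_lt_three k x
    have h3 := dg_nonneg k y; have h4 := dg_lt_three k y
    omega
  · exact terncyc_ne hk' (hpre k' hgt).symm

lemma ternCyc_total {x y : ℝ} (h : ¬ TernEq x y) : TernCyc x y ∨ TernCyc y x := by
  have hex : ∃ k, dg k x ≠ dg k y := by
    by_contra hc; push_neg at hc; exact h hc
  classical
  set k0 := Nat.find hex with hk0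
  have hne : dg k0 x ≠ dg k0 y := Nat.find_spec hex
  have hpre : ∀ j < k0, dg j x = dg j y := fun j hj => by
    by_contra hc; exact Nat.find_min hex hj hc
  have h1 := dg_nonneg k0 x; have h2 := dg_lt_three k0 x
  have h3 := dg_nonneg k0 y; have h4 := dg_lt_three k0 y
  rcases (by omega : dg k0 y = (dg k0 x + 1) % 3 ∨ dg k0 x = (dg k0 y + 1) % 3) with h5 | h5
  · exact Or.inl ⟨k0, hpre, h5⟩
  · exact Or.inr ⟨k0, fun j hj => (hpre j hj).symm, h5⟩

lemma Wt_vals (x y : ℝ) : Wt x y = 0 ∨ Wt x y = 1/2 ∨ Wt x y = 1 := by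
  unfold Wt; split_ifs <;> simp

lemma Wt_nonneg (x y : ℝ) : 0 ≤ Wt x y := by
  unfold Wt; split_ifs <;> norm_num

lemma Wt_le_one (x y : ℝ) : Wt x y ≤ 1 := by
  unfold Wt; split_ifs <;> norm_num

lemma Wt_add (x y : ℝ) : Wt x y + Wt y x = 1 := by
  unfold Wt
  by_cases he : TernEq x y
  · have he' : TernEq y x := fun k => (he k).symm
    rw [if_neg (fun hc => not_ternEq_of_ternCyc hc he),
        if_neg (fun hc => not_ternEq_of_ternCyc hc he'), if_pos he, if_pos he']
    norm_num
  · rcases ternCyc_total he with hc | hc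
    · rw [if_pos hc, if_neg (ternCyc_not_symm hc),
        if_neg (fun he' : TernEq y x => he (fun k => (he' k).symm))]
      norm_num
    · rw [if_pos hc, if_neg (ternCyc_not_symm hc), if_neg he]
      norm_num

lemma Wt_one_iff (x y : ℝ) : Wt x y = 1 ↔ TernCyc x y := by
  unfold Wt; split_ifs with h1 h2 <;> simp [h1, *] <;> norm_num

lemma Wt_ne_zero {x y : ℝ} (h : Wt x y ≠ 0) : TernCyc x y ∨ TernEq x y := by
  unfold Wt at h; split_ifs at h with h1 h2
  · exact Or.inl h1
  · exact Or.inr h2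
  · exact absurd rfl h

lemma measurable_fl (k : ℕ) : Measurable (fl k) := by
  apply Measurable.comp Int.measurable_floor
  exact (measurable_const.mul measurable_id)

lemma measurable_dg (k : ℕ) : Measurable (dg k) :=
  (measurable_fl (k+1)).sub ((measurable_fl k).const_mul 3)

lemma measurableSet_dgeq (k : ℕ) (c : ℤ) : MeasurableSet {p : ℝ × ℝ | dg k p.2 = c} :=
  ((measurable_dg k).comp measurable_snd) (MeasurableSet.singleton c)

lemma measurableSet_ternCyc : MeasurableSet {p : ℝ × ℝ | TernCyc p.1 p.2} := by
  have : {p : ℝ × ℝ | TernCyc p.1 p.2} =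
      ⋃ k, ((⋂ j ∈ Set.Iio k, {p : ℝ × ℝ | dg j p.1 - dg j p.2 = 0}) ∩
        {p : ℝ × ℝ | dg k p.2 - (dg k p.1 + 1) % 3 = 0}) := by
    ext p
    simp only [Set.mem_setOf_eq, Set.mem_iUnion, Set.mem_inter_iff, Set.mem_iInter,
      Set.mem_Iio, TernCyc]
    constructor
    · rintro ⟨k, h1, h2⟩; exact ⟨k, fun j hj => by rw [h1 j hj]; ring, by omega⟩
    · rintro ⟨k, h1, h2⟩; exact ⟨k, fun j hj => by have := h1 j hj; omega, by omega⟩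
  rw [this]
  refine MeasurableSet.iUnion fun k => (MeasurableSet.biInter ((Set.finite_Iio k).countable)
    fun j _ => ?_).inter ?_
  · exact (((measurable_dg j).comp measurable_fst).sub
      ((measurable_dg j).comp measurable_snd)) (MeasurableSet.singleton 0)
  · exact (((measurable_dg k).comp measurable_snd).sub
      ((measurable_from_top (f := fun n : ℤ => (n+1) % 3)).comp
        ((measurable_dg k).comp measurable_fst)))
      (MeasurableSet.singleton 0)

lemma measurableSet_ternEq : MeasurableSet {p : ℝ × ℝ | TernEq p.1 p.2} := by
  have : {p : ℝ × ℝ | TernEq p.1 p.2} =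
      ⋂ k, {p : ℝ × ℝ | dg k p.1 - dg k p.2 = 0} := by
    ext p
    simp only [Set.mem_setOf_eq, Set.mem_iInter, TernEq]
    constructor
    · intro h k; rw [h k]; ring
    · intro h k; have := h k; omega
  rw [this]
  exact MeasurableSet.iInter fun k =>
    (((measurable_dg k).comp measurable_fst).sub
      ((measurable_dg k).comp measurable_snd)) (MeasurableSet.singleton 0)

lemma measurable_Wt : Measurable (Function.uncurry Wt) := by
  classical
  have : Function.uncurry Wt = fun p : ℝ × ℝ =>
      if TernCyc p.1 p.2 then (1:ℝ) else if TernEq p.1 p.2 then 1/2 else 0 := by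
    ext p; rfl
  rw [this]
  exact Measurable.ite measurableSet_ternCyc measurable_const
    (Measurable.ite measurableSet_ternEq measurable_const measurable_const)

/-! ### circle tournamenton -/

open scoped Classical in
def gC (f : ℝ) : ℝ :=
  if 0 < f ∧ f < 1/2 then 1 else if f = 0 ∨ f = 1/2 then 1/2 else 0

def Wc (x y : ℝ) : ℝ := gC (Int.fract (y - x))

lemma gC_nonneg (f : ℝ) : 0 ≤ gC f := by unfold gC; split_ifs <;> norm_num

lemma gC_le_one (f : ℝ) : gC f ≤ 1 := by unfold gC; split_ifs <;> norm_num

lemma Wc_nonneg (x y : ℝ) : 0 ≤ Wc x y := gC_nonneg _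

lemma Wc_le_one (x y : ℝ) : Wc x y ≤ 1 := gC_le_one _

lemma gC_add {a : ℝ} (h0 : 0 < a) (h1 : a < 1) : gC a + gC (1 - a) = 1 := by
  unfold gC
  rcases lt_trichotomy a (1/2) with hc | hc | hc
  · rw [if_pos ⟨h0, hc⟩, if_neg (by intro h; linarith [h.1, h.2]),
      if_neg (by push_neg; constructor <;> · intro h; linarith)]
    norm_num
  · rw [if_neg (by intro h; linarith [h.2]), if_pos (Or.inr hc),
      if_neg (by intro h; linarith [h.2]), if_pos (Or.inr (by linarith))]
    norm_num
  · rw [if_neg (by intro h; linarith [h.2]),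
      if_neg (by push_neg; constructor <;> · intro h; linarith),
      if_pos ⟨by linarith, by linarith⟩]
    norm_num

lemma Wc_add (x y : ℝ) : Wc x y + Wc y x = 1 := by
  unfold Wc
  have e : x - y = -(y - x) := by ring
  by_cases h0 : Int.fract (y - x) = 0
  · have h0' : Int.fract (x - y) = 0 := by
      rw [e, Int.fract_neg_eq_zero]; exact h0
    rw [h0, h0']
    unfold gC
    rw [if_neg (by intro h; linarith [h.1]), if_pos (Or.inl rfl)]
    norm_num
  · have h1 : Int.fract (x - y) = 1 - Int.fract (y - x) := by
      rw [e, Int.fract_neg h0]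
    rw [h1]
    exact gC_add (lt_of_le_of_ne (Int.fract_nonneg _) (Ne.symm h0)) (Int.fract_lt_one _)

lemma measurable_Wc : Measurable (Function.uncurry Wc) := by
  classical
  have hg : Measurable gC := by
    unfold gC
    refine Measurable.ite ?_ measurable_const
      (Measurable.ite ?_ measurable_const measurable_const)
    · exact measurableSet_Ioo (a := (0:ℝ)) (b := 1/2)
    · have : {f : ℝ | f = 0 ∨ f = 1/2} = {0, 1/2} := by ext f; simp [Set.mem_insert_iff]
      rw [this]
      exact (Set.Finite.insert _ (Set.finite_singleton _)).measurableSet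
  exact hg.comp ((measurable_snd.sub measurable_fst).fract)

/-- key monotonicity lemma for fract -/
lemma frlt {s t : ℝ} (hs1 : 0 < Int.fract s) (hs2 : Int.fract s < 1/2)
    (ht1 : 0 < Int.fract t) (ht2 : Int.fract t < 1/2)
    (hd1 : 0 < Int.fract (t - s)) (hd2 : Int.fract (t - s) < 1/2) :
    Int.fract s < Int.fract t := by
  set u := Int.fract t - Int.fract s with hu
  have hfr : Int.fract (t - s) = Int.fract u := by
    rw [Int.fract_eq_fract]
    exact ⟨⌊t⌋ - ⌊s⌋, by rw [hu]; unfold Int.fract; push_cast; ring⟩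
  rcases lt_trichotomy u 0 with hc | hc | hc
  · exfalso
    have hfl : ⌊u⌋ = -1 := by
      have : ((-1 : ℤ) : ℝ) ≤ u ∧ u < (-1 : ℤ) + 1 := by
        constructor <;> · push_cast; linarith
      exact Int.floor_eq_iff.mpr this
    have : Int.fract u = u + 1 := by
      unfold Int.fract; rw [hfl]; push_cast; ring
    rw [hfr, this] at hd2
    linarith
  · rw [hfr, hc] at hd1
    simp at hd1
  · linarith


lemma Wc_def : ∀ x y, Wc x y = gC (Int.fract (y - x)) := fun _ _ => rfl
lemma gC_def : ∀ f, gC f =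
    if 0 < f ∧ f < 1/2 then 1 else if f = 0 ∨ f = 1/2 then (1:ℝ)/2 else 0 := fun _ => rfl

lemma Wc_eq_indicator (x : ℝ) (hx0 : 0 ≤ x) (hx1 : x ≤ 1) (y : ℝ)
    (hy : y ∈ Set.Icc (0:ℝ) 1) (hbad : y ∉ ({x, x+1, x-1, x+1/2, x-1/2} : Set ℝ)) :
    Wc x y = ((Set.Ioo x (x+1/2) ∪ Set.Ioo (x-1) (x-1/2)) ∩ Set.Icc 0 1).indicator
      (fun _ => (1:ℝ)) y := by
  set B := (Set.Ioo x (x+1/2) ∪ Set.Ioo (x-1) (x-1/2)) ∩ Set.Icc (0:ℝ) 1 with hBdef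
  simp only [Set.mem_insert_iff, Set.mem_singleton_iff, not_or] at hbad
  obtain ⟨hb1, hb2, hb3, hb4, hb5⟩ := hbad
  obtain ⟨hy0, hy1⟩ := hy
  rw [Wc_def]
  rcases lt_trichotomy y x with hc | hc | hc
  · -- y < x, fract (y - x) = y - x + 1
    have hgt : x - 1 < y := lt_of_le_of_ne (by linarith) (fun h => hb3 h.symm)
    have hfr : Int.fract (y - x) = y - x + 1 := by
      have hf : ⌊y - x⌋ = -1 := by
        refine Int.floor_eq_iff.mpr ⟨by push_cast; linarith, by push_cast; linarith⟩
      unfold Int.fract; rw [hf]; push_cast; ring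
    rw [gC_def, hfr]
    rcases lt_trichotomy y (x - 1/2) with hd | hd | hd
    · rw [if_pos ⟨by linarith, by linarith⟩,
        Set.indicator_of_mem (show y ∈ B from ⟨Or.inr ⟨hgt, hd⟩, hy0, hy1⟩)]
    · exact absurd hd hb5
    · rw [if_neg (by intro h; linarith [h.2]),
        if_neg (by push_neg; exact ⟨fun h => hb3 (by linarith), fun h => hb5 (by linarith)⟩),
        Set.indicator_of_notMem (show y ∉ B by
          rintro ⟨(h | h), -⟩
          · linarith [h.1]
          · linarith [h.2])]
  · exact absurd hc hb1
  · -- x < y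
    have hfr : Int.fract (y - x) = y - x := by
      rw [Int.fract_eq_self]
      refine ⟨by linarith, ?_⟩
      rcases lt_or_eq_of_le (by linarith : y - x ≤ 1) with h | h
      · exact h
      · exact absurd (by linarith : y = x + 1) hb2
    rw [gC_def, hfr]
    rcases lt_trichotomy y (x + 1/2) with hd | hd | hd
    · rw [if_pos ⟨by linarith, by linarith⟩,
        Set.indicator_of_mem (show y ∈ B from ⟨Or.inl ⟨hc, hd⟩, hy0, hy1⟩)]
    · exact absurd hd hb4
    · rw [if_neg (by intro h; linarith [h.2]),
        if_neg (by push_neg; exact ⟨fun h => hb1 (by linarith), fun h => hb4 (by linarith)⟩),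
        Set.indicator_of_notMem (show y ∉ B by
          rintro ⟨(h | h), -⟩
          · linarith [h.2]
          · linarith [h.1, h.2])]

lemma volume_circle_set (x : ℝ) (hx0 : 0 ≤ x) (hx1 : x ≤ 1) :
    volume ((Set.Ioo x (x+1/2) ∪ Set.Ioo (x-1) (x-1/2)) ∩ Set.Icc 0 1)
      = ENNReal.ofReal (1/2) := by
  have hdisj : Disjoint (Set.Ioo x (x+1/2) ∩ Set.Icc (0:ℝ) 1)
      (Set.Ioo (x-1) (x-1/2) ∩ Set.Icc 0 1) := by
    refine Set.disjoint_left.mpr ?_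
    rintro y ⟨h1, -⟩ ⟨h2, -⟩
    linarith [h1.1, h2.2]
  rw [Set.union_inter_distrib_right, measure_union hdisj
    ((measurableSet_Ioo).inter measurableSet_Icc)]
  have hp1 : volume (Set.Ioo x (x+1/2) ∩ Set.Icc (0:ℝ) 1)
      = ENNReal.ofReal (min (x+1/2) 1 - x) := by
    apply le_antisymm
    · calc volume (Set.Ioo x (x+1/2) ∩ Set.Icc (0:ℝ) 1)
          ≤ volume (Set.Icc x (min (x+1/2) 1)) := by
            apply measure_mono
            rintro y ⟨⟨ha, hb⟩, ⟨hc, hd⟩⟩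
            exact ⟨le_of_lt ha, le_min (le_of_lt hb) hd⟩
        _ = ENNReal.ofReal (min (x+1/2) 1 - x) := Real.volume_Icc
    · calc ENNReal.ofReal (min (x+1/2) 1 - x) = volume (Set.Ioo x (min (x+1/2) 1)) :=
            Real.volume_Ioo.symm
        _ ≤ volume (Set.Ioo x (x+1/2) ∩ Set.Icc (0:ℝ) 1) := by
            apply measure_mono
            rintro y ⟨ha, hb⟩
            rw [lt_min_iff] at hb
            exact ⟨⟨ha, hb.1⟩, ⟨by linarith [hb.2], le_of_lt hb.2⟩⟩
  have hp2 : volume (Set.Ioo (x-1) (x-1/2) ∩ Set.Icc (0:ℝ) 1)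
      = ENNReal.ofReal (max (x-1/2) 0) := by
    apply le_antisymm
    · calc volume (Set.Ioo (x-1) (x-1/2) ∩ Set.Icc (0:ℝ) 1)
          ≤ volume (Set.Icc 0 (max (x-1/2) 0)) := by
            apply measure_mono
            rintro y ⟨⟨ha, hb⟩, ⟨hc, hd⟩⟩
            exact ⟨hc, le_max_of_le_left (le_of_lt hb)⟩
        _ = ENNReal.ofReal (max (x-1/2) 0 - 0) := Real.volume_Icc
        _ = ENNReal.ofReal (max (x-1/2) 0) := by rw [sub_zero]
    · calc ENNReal.ofReal (max (x-1/2) 0) = volume (Set.Ioo 0 (max (x-1/2) 0)) := by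
            rw [Real.volume_Ioo, sub_zero]
        _ ≤ volume (Set.Ioo (x-1) (x-1/2) ∩ Set.Icc (0:ℝ) 1) := by
            apply measure_mono
            rintro y ⟨ha, hb⟩
            rcases le_or_gt (x - 1/2) 0 with h | h
            · rw [max_eq_right h] at hb; exact absurd hb (by linarith)
            · rw [max_eq_left (le_of_lt h)] at hb
              exact ⟨⟨by linarith, hb⟩, le_of_lt ha, by linarith⟩
  rw [hp1, hp2]
  rcases le_or_gt x (1/2) with h | h
  · rw [min_eq_left (by linarith), max_eq_right (by linarith)]
    simp only [ENNReal.ofReal_zero, add_zero]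
    norm_num
  · rw [min_eq_right (by linarith), max_eq_left (by linarith)]
    rw [← ENNReal.ofReal_add (by linarith) (by linarith)]
    norm_num

lemma Wc_regular (x : ℝ) (hx : x ∈ Set.Icc (0:ℝ) 1) :
    ∫ y in Set.Icc (0:ℝ) 1, Wc x y = 1/2 := by
  obtain ⟨hx0, hx1⟩ := hx
  set B := (Set.Ioo x (x+1/2) ∪ Set.Ioo (x-1) (x-1/2)) ∩ Set.Icc (0:ℝ) 1 with hB
  have hBm : MeasurableSet B :=
    (measurableSet_Ioo.union measurableSet_Ioo).inter measurableSet_Icc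
  have h1 : ∫ y in Set.Icc (0:ℝ) 1, Wc x y
      = ∫ y in Set.Icc (0:ℝ) 1, B.indicator (fun _ => (1:ℝ)) y := by
    apply setIntegral_congr_ae measurableSet_Icc
    filter_upwards [measure_eq_zero_iff_ae_notMem.mp
      ((Set.toFinite ({x, x+1, x-1, x+1/2, x-1/2} : Set ℝ)).measure_zero volume)]
      with y hy hymem
    exact Wc_eq_indicator x hx0 hx1 y hymem hy
  rw [h1, setIntegral_indicator hBm, Set.inter_eq_self_of_subset_right
    (by rw [hB]; exact Set.inter_subset_right), setIntegral_const,
    measureReal_def, volume_circle_set x hx0 hx1, smul_eq_mul, mul_one, ENNReal.toReal_ofReal (by norm_num)]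


/-- the union of intervals where `Wt x y = 1` -/
def mJ (x : ℝ) (k : ℕ) : ℤ := 3 * fl k x + (dg k x + 1) % 3
def J (x : ℝ) (k : ℕ) : Set ℝ :=
  Set.Ico ((mJ x k : ℝ) / 3^(k+1)) (((mJ x k : ℝ) + 1) / 3^(k+1))

lemma mem_J_iff (x y : ℝ) (k : ℕ) : y ∈ J x k ↔ fl (k+1) y = mJ x k := by
  unfold J
  rw [Set.mem_Ico]
  have hp : (0:ℝ) < 3^(k+1) := by positivity
  constructor
  · rintro ⟨h1, h2⟩
    refine Int.floor_eq_iff.mpr ⟨?_, ?_⟩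
    · rw [div_le_iff₀ hp] at h1; linarith
    · rw [lt_div_iff₀ hp] at h2; push_cast at h2 ⊢; linarith
  · intro h
    have h1 := Int.floor_le ((3:ℝ)^(k+1) * y)
    have h2 := Int.lt_floor_add_one ((3:ℝ)^(k+1) * y)
    unfold fl at h
    rw [h] at h1 h2
    constructor
    · rw [div_le_iff₀ hp]; linarith
    · rw [lt_div_iff₀ hp]; push_cast; linarith

lemma fl_eq_iff_dg_pre {x y : ℝ} (hx0 : 0 ≤ x) (hx1 : x < 1) (hy0 : 0 ≤ y) (hy1 : y < 1)
    (k : ℕ) : fl k y = fl k x ↔ ∀ j < k, dg j y = dg j x := by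
  constructor
  · exact dg_eq_of_fl_eq k
  · exact fl_eq_of_dg_eq (by rw [fl_zero_of_mem hy0 hy1, fl_zero_of_mem hx0 hx1])  k

lemma mem_J_char {x y : ℝ} (hx0 : 0 ≤ x) (hx1 : x < 1) (hy0 : 0 ≤ y) (hy1 : y < 1)
    (k : ℕ) : y ∈ J x k ↔ (∀ j < k, dg j x = dg j y) ∧ dg k y = (dg k x + 1) % 3 := by
  rw [mem_J_iff]
  have e1 : fl (k+1) y = 3 * fl k y + dg k y := fl_succ k y
  have e2 : mJ x k = 3 * fl k x + (dg k x + 1) % 3 := rfl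
  have r1 := dg_nonneg k y; have r2 := dg_lt_three k y
  have r3 := dg_nonneg k x; have r4 := dg_lt_three k x
  constructor
  · intro h
    have hfl : fl k y = fl k x := by omega
    have hdg : dg k y = (dg k x + 1) % 3 := by omega
    exact ⟨fun j hj => ((fl_eq_iff_dg_pre hx0 hx1 hy0 hy1 k).mp hfl j hj).symm, hdg⟩
  · rintro ⟨h1, h2⟩
    have hfl : fl k y = fl k x :=
      (fl_eq_iff_dg_pre hx0 hx1 hy0 hy1 k).mpr (fun j hj => (h1 j hj).symm)
    omega

lemma J_subset {x : ℝ} (hx0 : 0 ≤ x) (hx1 : x < 1) (k : ℕ) :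
    J x k ⊆ Set.Ico (0:ℝ) 1 := by
  have hm := fl_mem k hx0 hx1
  have hc1 : (0:ℤ) ≤ (dg k x + 1) % 3 := Int.emod_nonneg _ (by norm_num)
  have hc2 : (dg k x + 1) % 3 < 3 := Int.emod_lt_of_pos _ (by norm_num)
  have hmlo : (0:ℤ) ≤ mJ x k := by unfold mJ; omega
  have hmhi : mJ x k + 1 ≤ 3^(k+1) := by
    unfold mJ
    have : (3:ℤ)^(k+1) = 3 * 3^k := by ring
    omega
  intro y hy
  obtain ⟨h1, h2⟩ := hy
  have hp : (0:ℝ) < 3^(k+1) := by positivity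
  constructor
  · have : (0:ℝ) ≤ (mJ x k : ℝ) := by exact_mod_cast hmlo
    calc (0:ℝ) ≤ (mJ x k : ℝ) / 3^(k+1) := by positivity
      _ ≤ y := h1
  · have hle : ((mJ x k : ℝ) + 1) ≤ 3^(k+1) := by
      push_cast
      exact_mod_cast (by exact_mod_cast hmhi : ((mJ x k + 1 : ℤ) : ℝ) ≤ ((3:ℤ)^(k+1) : ℝ))
    calc y < ((mJ x k : ℝ) + 1) / 3^(k+1) := h2
      _ ≤ 1 := by rw [div_le_one hp]; linarith

lemma J_disjoint_aux {x y : ℝ} {k l : ℕ} (hlt : k < l)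
    (hyk : y ∈ J x k) (hyl : y ∈ J x l) : False := by
  rw [mem_J_iff] at hyk hyl
  have e1 : fl (l+1) y = 3 * fl l y + dg l y := fl_succ l y
  have r1 := dg_nonneg l y; have r2 := dg_lt_three l y
  have hc1 : (0:ℤ) ≤ (dg l x + 1) % 3 := Int.emod_nonneg _ (by norm_num)
  have hc2 : (dg l x + 1) % 3 < 3 := Int.emod_lt_of_pos _ (by norm_num)
  have hfl : fl l y = fl l x := by unfold mJ at hyl; omega
  have hdgk : dg k y = dg k x := dg_eq_of_fl_eq l hfl k hlt
  have e2 : fl (k+1) y = 3 * fl k y + dg k y := fl_succ k y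
  have s1 := dg_nonneg k y; have s2 := dg_lt_three k y
  have s3 := dg_nonneg k x; have s4 := dg_lt_three k x
  have t1 : (0:ℤ) ≤ (dg k x + 1) % 3 := Int.emod_nonneg _ (by norm_num)
  have t2 : (dg k x + 1) % 3 < 3 := Int.emod_lt_of_pos _ (by norm_num)
  have : dg k y = (dg k x + 1) % 3 := by unfold mJ at hyk; omega
  omega

lemma J_disjoint {x : ℝ} : Pairwise (Function.onFun Disjoint (J x)) := by
  intro k l hkl
  rw [Function.onFun]
  refine Set.disjoint_left.mpr ?_
  intro y hyk hyl
  rcases lt_or_gt_of_ne hkl with h | h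
  · exact J_disjoint_aux h hyk hyl
  · exact J_disjoint_aux h hyl hyk

lemma volume_J (x : ℝ) (k : ℕ) : volume (J x k) = ENNReal.ofReal ((1/3:ℝ)^(k+1)) := by
  unfold J
  rw [Real.volume_Ico]
  congr 1
  have hp : (0:ℝ) < 3^(k+1) := by positivity
  field_simp
  rw [← mul_pow]; norm_num

lemma volume_U (x : ℝ) : volume (⋃ k, J x k) = ENNReal.ofReal (1/2) := by
  rw [measure_iUnion J_disjoint (fun k => measurableSet_Ico)]
  have h1 : ∀ k, volume (J x k) = ENNReal.ofReal ((1/3:ℝ)^(k+1)) := volume_J x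
  simp_rw [h1]
  rw [← ENNReal.ofReal_tsum_of_nonneg (fun k => by positivity)
    (by
      have : Summable (fun k : ℕ => (1/3:ℝ)^k) := summable_geometric_of_lt_one (by norm_num) (by norm_num)
      exact this.comp_injective (add_left_injective 1) |>.congr (fun k => rfl))]
  congr 1
  have hs : Summable (fun k : ℕ => (1/3:ℝ)^k) := summable_geometric_of_lt_one (by norm_num) (by norm_num)
  have : (fun k : ℕ => (1/3:ℝ)^(k+1)) = fun k => (1/3) * (1/3)^k := by
    funext k; ring
  rw [this, tsum_mul_left, tsum_geometric_of_lt_one (by norm_num) (by norm_num)]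
  norm_num

lemma dg_one (k : ℕ) : dg k 1 = 0 := by
  have h : ∀ j : ℕ, fl j 1 = 3^j := by
    intro j; unfold fl; rw [mul_one]
    rw [show ((3:ℝ)^j) = ((3^j : ℤ) : ℝ) by push_cast; ring, Int.floor_intCast]
  unfold dg; rw [h, h]; ring

lemma dg_zero (k : ℕ) : dg k 0 = 0 := by
  unfold dg fl; simp

lemma ternEq_subset {x : ℝ} (hx0 : 0 ≤ x) (hx1 : x < 1) :
    {y | TernEq x y} ∩ Set.Icc (0:ℝ) 1 ⊆ {x, 1} := by
  rintro y ⟨hte, hy0, hy1⟩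
  rcases lt_or_eq_of_le hy1 with h | h
  · exact Or.inl (eq_of_dg_eq hx0 hx1 hy0 h hte).symm
  · exact Or.inr h

lemma Wt_regular (x : ℝ) (hx0 : 0 ≤ x) (hx1 : x < 1) :
    ∫ y in Set.Icc (0:ℝ) 1, Wt x y = 1/2 := by
  classical
  set U := ⋃ k, J x k with hU
  have hUm : MeasurableSet U := MeasurableSet.iUnion fun k => measurableSet_Ico
  have hUsub : U ⊆ Set.Icc (0:ℝ) 1 := by
    rw [hU]
    exact Set.iUnion_subset fun k => (J_subset hx0 hx1 k).trans Set.Ico_subset_Icc_self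
  have h1 : ∫ y in Set.Icc (0:ℝ) 1, Wt x y
      = ∫ y in Set.Icc (0:ℝ) 1, U.indicator (fun _ => (1:ℝ)) y := by
    apply setIntegral_congr_ae measurableSet_Icc
    filter_upwards [measure_eq_zero_iff_ae_notMem.mp
      ((Set.toFinite ({x, 1} : Set ℝ)).measure_zero volume)] with y hy hymem
    simp only [Set.mem_insert_iff, Set.mem_singleton_iff, not_or] at hy
    obtain ⟨hyx, hy1'⟩ := hy
    have hy01 : 0 ≤ y ∧ y < 1 := ⟨hymem.1, lt_of_le_of_ne hymem.2 hy1'⟩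
    have hUchar : y ∈ U ↔ TernCyc x y := by
      rw [hU, Set.mem_iUnion]
      constructor
      · rintro ⟨k, hk⟩
        exact ⟨k, (mem_J_char hx0 hx1 hy01.1 hy01.2 k).mp hk⟩
      · rintro ⟨k, hk⟩
        exact ⟨k, (mem_J_char hx0 hx1 hy01.1 hy01.2 k).mpr hk⟩
    by_cases hc : TernCyc x y
    · rw [Wt, if_pos hc, Set.indicator_of_mem (hUchar.mpr hc)]
    · have hne : ¬ TernEq x y := by
        intro hte
        exact hyx (eq_of_dg_eq hx0 hx1 hy01.1 hy01.2 hte).symm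
      rw [Wt, if_neg hc, if_neg hne, Set.indicator_of_notMem (fun hm => hc (hUchar.mp hm))]
  rw [h1, setIntegral_indicator hUm,
    Set.inter_eq_self_of_subset_right hUsub, setIntegral_const, measureReal_def, volume_U,
    smul_eq_mul, mul_one, ENNReal.toReal_ofReal (by norm_num)]



lemma wc_pos_frac {x y : ℝ} (h : Wc x y ≠ 0)
    (hxy : (x - y) ∉ Set.range (fun n : ℤ => (n:ℝ)/2)) :
    0 < Int.fract (y - x) ∧ Int.fract (y - x) < 1/2 := by
  unfold Wc gC at h
  split_ifs at h with h1 h2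
  · exact h1
  · exfalso
    apply hxy
    unfold Int.fract at h2
    rcases h2 with h2 | h2
    · exact ⟨-2 * ⌊y - x⌋, by push_cast; linarith⟩
    · exact ⟨-2 * ⌊y - x⌋ - 1, by push_cast; linarith⟩
  · exact absurd rfl h

lemma ternEq_sub_int {x y : ℝ} (hx : x ∈ Set.Icc (0:ℝ) 1) (hy : y ∈ Set.Icc (0:ℝ) 1)
    (h : TernEq x y) : ∃ n : ℤ, x - y = (n:ℝ) := by
  rcases lt_or_eq_of_le hx.2 with hx1 | hx1 <;> rcases lt_or_eq_of_le hy.2 with hy1 | hy1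
  · exact ⟨0, by rw [eq_of_dg_eq hx.1 hx1 hy.1 hy1 h]; norm_num⟩
  · have hx0 : x = 0 := eq_of_dg_eq hx.1 hx1 (le_refl 0) (by norm_num)
      (fun k => by rw [h k, hy1, dg_one, dg_zero])
    exact ⟨-1, by rw [hx0, hy1]; push_cast; ring⟩
  · have hy0 : y = 0 := eq_of_dg_eq hy.1 hy1 (le_refl 0) (by norm_num)
      (fun k => by rw [← h k, hx1, dg_one, dg_zero])
    exact ⟨1, by rw [hy0, hx1]; push_cast; ring⟩
  · exact ⟨0, by rw [hx1, hy1]; norm_num⟩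


variable {V : Type} [Fintype V]

lemma hyperplane_null (u v : V) (huv : u ≠ v) (c : ℝ) :
    volume {x : V → ℝ | x u - x v = c} = 0 := by
  classical
  let f : (V → ℝ) →ₗ[ℝ] ℝ :=
    LinearMap.proj (R := ℝ) (φ := fun _ : V => ℝ) u - LinearMap.proj (R := ℝ) (φ := fun _ : V => ℝ) v
  have hf : f (Pi.single u 1) = 1 := by
    simp [f, Pi.single_eq_same, Pi.single_eq_of_ne (Ne.symm huv)]
  have hker : LinearMap.ker f ≠ ⊤ := by
    intro h
    have : Pi.single u (1:ℝ) ∈ LinearMap.ker f := h ▸ Submodule.mem_top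
    rw [LinearMap.mem_ker, hf] at this
    norm_num at this
  rcases Set.eq_empty_or_nonempty {x : V → ℝ | x u - x v = c} with he | ⟨x₀, hx₀⟩
  · rw [he]; exact measure_empty
  · have h₀ : x₀ u - x₀ v = c := hx₀
    have hfz : ∀ z : V → ℝ, f z = z u - z v := fun z => rfl
    have heq : {x : V → ℝ | x u - x v = c}
        = (AffineSubspace.mk' x₀ (LinearMap.ker f) : Set (V → ℝ)) := by
      ext x
      rw [SetLike.mem_coe, AffineSubspace.mem_mk', LinearMap.mem_ker,
        vsub_eq_sub, map_sub, hfz, hfz]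
      simp only [Set.mem_setOf_eq]
      constructor
      · intro h; rw [h, h₀]; ring
      · intro h; linarith
    rw [heq]
    refine Measure.addHaar_affineSubspace _ _ ?_
    intro htop
    apply hker
    have h1 := AffineSubspace.direction_mk' x₀ (LinearMap.ker f)
    rw [htop, AffineSubspace.direction_top] at h1
    exact h1.symm

lemma bad_null (C : Set ℝ) (hC : C.Countable) :
    volume {x : V → ℝ | ∃ u v : V, u ≠ v ∧ x u - x v ∈ C} = 0 := by
  classical
  have : {x : V → ℝ | ∃ u v : V, u ≠ v ∧ x u - x v ∈ C} ⊆
      ⋃ u : V, ⋃ v : V, ⋃ c ∈ C, {x : V → ℝ | u ≠ v ∧ x u - x v = c} := by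
    rintro x ⟨u, v, huv, hc⟩
    exact Set.mem_iUnion.mpr ⟨u, Set.mem_iUnion.mpr ⟨v, Set.mem_iUnion.mpr ⟨x u - x v,
      Set.mem_iUnion.mpr ⟨hc, huv, rfl⟩⟩⟩⟩
  refine measure_mono_null this ?_
  refine measure_iUnion_null fun u => measure_iUnion_null fun v => ?_
  refine (measure_biUnion_null_iff hC).mpr fun c _ => ?_
  by_cases huv : u = v
  · refine measure_mono_null ?_ (measure_empty (μ := volume))
    rintro x ⟨h, -⟩; exact absurd huv h
  · refine measure_mono_null (fun x hx => hx.2) (hyperplane_null u v huv c)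

open scoped Classical in
lemma density_zero (E : V → V → Prop) (W : ℝ → ℝ → ℝ)
    (C : Set ℝ) (hC : C.Countable)
    (hmain : ∀ x : V → ℝ, x ∈ Set.univ.pi (fun _ : V => I01) →
      (∀ u v : V, u ≠ v → x u - x v ∉ C) →
      ∃ p ∈ Finset.univ.filter (fun p : V × V => E p.1 p.2), W (x p.1) (x p.2) = 0) :
    homDensity E W = 0 := by
  classical
  apply integral_eq_zero_of_ae
  have hae : ∀ᵐ x : V → ℝ, ¬ ∃ u v : V, u ≠ v ∧ x u - x v ∈ C :=
    measure_eq_zero_iff_ae_notMem.mp (bad_null C hC)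
  refine (ae_restrict_iff' ?_).mpr ?_
  · exact MeasurableSet.univ_pi fun _ => measurableSet_Icc
  · filter_upwards [hae] with x hx hxpi
    obtain ⟨p, hp, hp0⟩ := hmain x hxpi (fun u v huv hc => hx ⟨u, v, huv, hc⟩)
    exact Finset.prod_eq_zero hp hp0


section Comb
variable [DecidableEq V] (E : V → V → Prop)

def TransOn (s : Finset V) : Prop :=
  ∀ u ∈ s, ∀ v ∈ s, ∀ w ∈ s, E u v → E v w → E u w
def NoW4 (s : Finset V) : Prop :=
  ∀ a ∈ s, ∀ b ∈ s, ∀ c ∈ s, ∀ d ∈ s,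
    E a b → E a c → E a d → E b c → E c d → E d b → False
def NoL4 (s : Finset V) : Prop :=
  ∀ a ∈ s, ∀ b ∈ s, ∀ c ∈ s, ∀ d ∈ s,
    E b a → E c a → E d a → E b c → E c d → E d b → False
def TriOn (s : Finset V) : Prop :=
  ∃ A B C : Finset V, A.Nonempty ∧ B.Nonempty ∧ C.Nonempty ∧ A ∪ B ∪ C = s ∧
    (∀ u ∈ A, ∀ v ∈ B, E u v) ∧ (∀ u ∈ B, ∀ v ∈ C, E u v) ∧
    (∀ u ∈ C, ∀ v ∈ A, E u v) ∧ TransOn E A ∧ TransOn E B ∧ TransOn E C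

variable {E}

section Tournament
variable (hirr : ∀ v, ¬ E v v) (hstr : ∀ u v : V, u ≠ v → (E u v ↔ ¬ E v u))

include hirr in
lemma E_ne {u v : V} (h : E u v) : u ≠ v := fun he => hirr v (he ▸ h)

include hirr hstr in
lemma noBoth {u v : V} (h1 : E u v) (h2 : E v u) : False :=
  (hstr u v (E_ne hirr h1)).mp h1 h2

include hstr in
lemma total {u v : V} (huv : u ≠ v) (h : ¬ E u v) : E v u := by
  by_contra h2
  exact h ((hstr u v huv).mpr h2)

lemma tri_of_triOn (h : TriOn E s) :
    ∃ a ∈ s, ∃ b ∈ s, ∃ c ∈ s, E a b ∧ E b c ∧ E c a := by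
  obtain ⟨A, B, C, ⟨a, ha⟩, ⟨b, hb⟩, ⟨c, hc⟩, hun, hAB, hBC, hCA, -, -, -⟩ := h
  refine ⟨a, ?_, b, ?_, c, ?_, hAB a ha b hb, hBC b hb c hc, hCA c hc a ha⟩ <;>
    rw [← hun] <;> simp [Finset.mem_union, ha, hb, hc]

include hirr hstr in
lemma transJoin {A B s : Finset V} (hAB : ∀ u ∈ A, ∀ v ∈ B, E u v)
    (hA : TransOn E A) (hB : TransOn E B) (hs : A ∪ B = s) : TransOn E s := by
  intro u hu v hv w hw h1 h2
  rw [← hs, Finset.mem_union] at hu hv hw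
  rcases hu with hu | hu <;> rcases hv with hv | hv <;> rcases hw with hw | hw
  · exact hA u hu v hv w hw h1 h2
  · exact hAB u hu w hw
  · exact absurd h2 (fun h2 => noBoth hirr hstr h2 (hAB w hw v hv))
  · exact hAB u hu w hw
  · exact absurd h1 (fun h1 => noBoth hirr hstr h1 (hAB v hv u hu))
  · exact absurd h1 (fun h1 => noBoth hirr hstr h1 (hAB v hv u hu))
  · exact absurd h2 (fun h2 => noBoth hirr hstr h2 (hAB w hw v hv))
  · exact hB u hu v hv w hw h1 h2

include hirr hstr in
lemma keyind (g : V → ℕ → ℤ)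
    (hg3 : ∀ v k, 0 ≤ g v k ∧ g v k < 3)
    (hE : ∀ u v : V, u ≠ v →
      (E u v ↔ ∃ k, (∀ j < k, g u j = g v j) ∧ g v k = (g u k + 1) % 3)) :
    ∀ n (s : Finset V), s.card ≤ n → (∀ u ∈ s, ∀ v ∈ s, u ≠ v → g u ≠ g v) →
      NoW4 E s → NoL4 E s → TransOn E s ∨ TriOn E s := by
  classical
  intro n
  induction n with
  | zero =>
    intro s hcard _ _ _
    left
    intro u hu
    have hse : s = ∅ := Finset.card_eq_zero.mp (Nat.le_zero.mp hcard)
    rw [hse] at hu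
    exact absurd hu (Finset.notMem_empty u)
  | succ n ih =>
    intro s hcard hginj hw4 hl4
    by_cases hsmall : ∃ u ∈ s, ∃ v ∈ s, u ≠ v
    swap
    · left
      push_neg at hsmall
      intro u hu v hv w hw h1 _
      exact absurd h1 ((hsmall u hu v hv) ▸ hirr v)
    obtain ⟨u1, hu1, v1, hv1, huv1⟩ := hsmall
    have hex : ∃ k, ∃ u ∈ s, ∃ v ∈ s, g u k ≠ g v k := by
      by_contra h
      push_neg at h
      exact hginj u1 hu1 v1 hv1 huv1 (funext fun k => h k u1 hu1 v1 hv1)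
    set m := Nat.find hex with hm
    obtain ⟨ua, hua, va, hva, hda⟩ := Nat.find_spec hex
    rw [← hm] at hda
    have hbelow : ∀ k < m, ∀ u ∈ s, ∀ v ∈ s, g u k = g v k := by
      intro k hk
      by_contra hc
      push_neg at hc
      exact Nat.find_min hex hk hc
    have hcross : ∀ u ∈ s, ∀ v ∈ s, g u m ≠ g v m →
        (E u v ↔ g v m = (g u m + 1) % 3) := by
      intro u hu v hv hd
      have huv : u ≠ v := fun h => hd (h ▸ rfl)
      have fwd : ∀ p ∈ s, ∀ q ∈ s, g p m ≠ g q m → E p q →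
          g q m = (g p m + 1) % 3 := by
        intro p hp q hq hd' hpq
        obtain ⟨k, hpre, hk⟩ := (hE p q (fun h => hd' (h ▸ rfl))).mp hpq
        have hr1 := (hg3 p k).1; have hr2 := (hg3 p k).2
        have hr3 := (hg3 q k).1; have hr4 := (hg3 q k).2
        have hkm : m ≤ k := Nat.find_min' hex ⟨p, hp, q, hq, by omega⟩
        rcases eq_or_lt_of_le hkm with rfl | hlt
        · exact hk
        · exact absurd (hpre m hlt) hd'
      constructor
      · exact fwd u hu v hv hd
      · intro hv'
        by_contra hnE
        have hvu := fwd v hv u hu (Ne.symm hd) (total hstr huv hnE)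
        have hr1 := (hg3 u m).1; have hr2 := (hg3 u m).2
        have hr3 := (hg3 v m).1; have hr4 := (hg3 v m).2
        omega
    set s0 := s.filter (fun v => g v m = 0) with hs0
    set s1 := s.filter (fun v => g v m = 1) with hs1
    set s2 := s.filter (fun v => g v m = 2) with hs2
    have hunion : s0 ∪ s1 ∪ s2 = s := by
      ext v
      simp only [hs0, hs1, hs2, Finset.mem_union, Finset.mem_filter]
      constructor
      · rintro ((⟨h, -⟩ | ⟨h, -⟩) | ⟨h, -⟩) <;> exact h
      · intro hv
        have h1 := (hg3 v m).1; have h2 := (hg3 v m).2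
        rcases (by omega : g v m = 0 ∨ g v m = 1 ∨ g v m = 2) with h | h | h <;>
          simp [hv, h]
    have hsub0 : s0 ⊆ s := Finset.filter_subset _ s
    have hsub1 : s1 ⊆ s := Finset.filter_subset _ s
    have hsub2 : s2 ⊆ s := Finset.filter_subset _ s
    have hcardt : ∀ t : Finset V, t ⊆ s → (∃ x ∈ s, x ∉ t) → t.card ≤ n := by
      rintro t hts ⟨x, hx, hxt⟩
      have : t ⊂ s := Finset.ssubset_iff_of_subset hts |>.mpr ⟨x, hx, hxt⟩
      have := Finset.card_lt_card this
      omega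
    have hval : ∀ t : Finset V, ∀ i : ℤ, t = s.filter (fun v => g v m = i) →
        t.card ≤ n := by
      intro t i ht
      refine hcardt t (by rw [ht]; exact Finset.filter_subset _ s) ?_
      by_cases hia : g ua m = i
      · refine ⟨va, hva, ?_⟩
        rw [ht, Finset.mem_filter]
        rintro ⟨-, h⟩
        exact hda (hia.trans h.symm)
      · exact ⟨ua, hua, by rw [ht, Finset.mem_filter]; rintro ⟨-, h⟩; exact hia h⟩
    have hrec : ∀ t : Finset V, t ⊆ s → t.card ≤ n → TransOn E t ∨ TriOn E t := by
      intro t hts hc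
      refine ih t hc (fun u hu v hv => hginj u (hts hu) v (hts hv)) ?_ ?_
      · intro a ha b hb c hc' d hd
        exact hw4 a (hts ha) b (hts hb) c (hts hc') d (hts hd)
      · intro a ha b hb c hc' d hd
        exact hl4 a (hts ha) b (hts hb) c (hts hc') d (hts hd)
    have htr : ∀ t : Finset V, ∀ i : ℤ, t = s.filter (fun v => g v m = i) →
        TransOn E t := by
      intro t i ht
      have hts' : t ⊆ s := by rw [ht]; exact Finset.filter_subset _ s
      rcases hrec t hts' (hval t i ht) with h | h
      · exact h
      · exfalso
        obtain ⟨a, ha, b, hb, c, hc', hab, hbc, hca⟩ := tri_of_triOn h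
        have ha2 := ha; rw [ht] at ha2
        have hb2 := hb; rw [ht] at hb2
        have hc2 := hc'; rw [ht] at hc2
        have hgam : g a m = i := (Finset.mem_filter.mp ha2).2
        have has : a ∈ s := hts' ha
        have hbs : b ∈ s := hts' hb
        have hcs : c ∈ s := hts' hc'
        have hgbm : g b m = i := (Finset.mem_filter.mp hb2).2
        have hgcm : g c m = i := (Finset.mem_filter.mp hc2).2
        -- pick w outside the class
        obtain ⟨w, hws, hwd⟩ : ∃ w ∈ s, g w m ≠ i := by
          by_cases hia : g ua m = i
          · exact ⟨va, hva, fun h => hda (hia.trans h.symm)⟩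
          · exact ⟨ua, hua, hia⟩
        have hr1 := (hg3 w m).1; have hr2 := (hg3 w m).2
        have hr3 := (hg3 a m).1; have hr4 := (hg3 a m).2
        rw [hgam] at hr3 hr4
        rcases (by omega : i = (g w m + 1) % 3 ∨ g w m = (i + 1) % 3) with hc2 | hc2
        · -- w beats the class : W4
          have hwin : ∀ x ∈ s, g x m = i → E w x := by
            intro x hx hgx
            exact (hcross w hws x hx (by omega)).mpr (by omega)
          exact hw4 w hws a has b hbs c hcs (hwin a has hgam) (hwin b hbs hgbm)
            (hwin c hcs hgcm) hab hbc hca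
        · -- the class beats w : L4
          have hlose : ∀ x ∈ s, g x m = i → E x w := by
            intro x hx hgx
            exact (hcross x hx w hws (by omega)).mpr (by omega)
          exact hl4 w hws a has b hbs c hcs (hlose a has hgam) (hlose b hbs hgbm)
            (hlose c hcs hgcm) hab hbc hca
    have htr0 : TransOn E s0 := htr s0 0 hs0
    have htr1 : TransOn E s1 := htr s1 1 hs1
    have htr2 : TransOn E s2 := htr s2 2 hs2
    have hmem : ∀ v ∈ s, (v ∈ s0 ↔ g v m = 0) ∧ (v ∈ s1 ↔ g v m = 1) ∧
        (v ∈ s2 ↔ g v m = 2) := by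
      intro v hv
      simp [hs0, hs1, hs2, Finset.mem_filter, hv]
    have hcr : ∀ i j : ℤ, j = (i + 1) % 3 →
        ∀ u ∈ s.filter (fun v => g v m = i), ∀ v ∈ s.filter (fun v => g v m = j),
          E u v := by
      intro i j hij u hu v hv
      rw [Finset.mem_filter] at hu hv
      have h1 := (hg3 u m).1; have h2 := (hg3 u m).2
      have h3 := (hg3 v m).1; have h4 := (hg3 v m).2
      exact (hcross u hu.1 v hv.1 (by omega)).mpr (by omega)
    have hcr01 : ∀ u ∈ s0, ∀ v ∈ s1, E u v := hcr 0 1 (by norm_num)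
    have hcr12 : ∀ u ∈ s1, ∀ v ∈ s2, E u v := hcr 1 2 (by norm_num)
    have hcr20 : ∀ u ∈ s2, ∀ v ∈ s0, E u v := hcr 2 0 (by norm_num)
    -- which classes are nonempty?
    have hclass : ∀ v ∈ s, v ∈ s0 ∨ v ∈ s1 ∨ v ∈ s2 := by
      intro v hv
      rw [← hunion] at hv
      rcases Finset.mem_union.mp hv with h | h
      · rcases Finset.mem_union.mp h with h' | h'
        · exact Or.inl h'
        · exact Or.inr (Or.inl h')
      · exact Or.inr (Or.inr h)
    by_cases h0 : s0 = ∅ <;> by_cases h1 : s1 = ∅ <;> by_cases h2 : s2 = ∅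
    · -- all empty: impossible
      exfalso
      rcases hclass ua hua with h | h | h
      · rw [h0] at h; exact Finset.notMem_empty _ h
      · rw [h1] at h; exact Finset.notMem_empty _ h
      · rw [h2] at h; exact Finset.notMem_empty _ h
    · -- only s2
      exfalso
      have : ∀ v ∈ s, v ∈ s2 := by
        intro v hv
        rcases hclass v hv with h | h | h
        · rw [h0] at h; exact absurd h (Finset.notMem_empty _)
        · rw [h1] at h; exact absurd h (Finset.notMem_empty _)
        · exact h
      have e1 := ((hmem ua hua).2.2).mp (this ua hua)
      have e2 := ((hmem va hva).2.2).mp (this va hva)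
      omega
    · -- only s1
      exfalso
      have : ∀ v ∈ s, v ∈ s1 := by
        intro v hv
        rcases hclass v hv with h | h | h
        · rw [h0] at h; exact absurd h (Finset.notMem_empty _)
        · exact h
        · rw [h2] at h; exact absurd h (Finset.notMem_empty _)
      have e1 := ((hmem ua hua).2.1).mp (this ua hua)
      have e2 := ((hmem va hva).2.1).mp (this va hva)
      omega
    · -- s1 s2 nonempty, s0 empty
      left
      refine transJoin hirr hstr hcr12 htr1 htr2 ?_
      rw [← hunion, h0]
      simp
    · -- only s0
      exfalso
      have : ∀ v ∈ s, v ∈ s0 := by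
        intro v hv
        rcases hclass v hv with h | h | h
        · exact h
        · rw [h1] at h; exact absurd h (Finset.notMem_empty _)
        · rw [h2] at h; exact absurd h (Finset.notMem_empty _)
      have e1 := ((hmem ua hua).1).mp (this ua hua)
      have e2 := ((hmem va hva).1).mp (this va hva)
      omega
    · -- s0 s2 nonempty, s1 empty
      left
      refine transJoin hirr hstr hcr20 htr2 htr0 ?_
      rw [← hunion, h1]
      rw [Finset.union_empty, Finset.union_comm]
    · -- s0 s1 nonempty, s2 empty
      left
      refine transJoin hirr hstr hcr01 htr0 htr1 ?_
      rw [← hunion, h2]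
      simp
    · -- all nonempty
      right
      exact ⟨s0, s1, s2, Finset.nonempty_of_ne_empty h0, Finset.nonempty_of_ne_empty h1,
        Finset.nonempty_of_ne_empty h2, hunion, hcr01, hcr12, hcr20, htr0, htr1, htr2⟩




include hirr hstr in
lemma orderPart (A : Finset V) (htr : TransOn E A) :
    ∃ φ : {v // v ∈ A} → Fin A.card, Function.Bijective φ ∧
      ∀ u v : {v // v ∈ A}, E u.1 v.1 ↔ φ u < φ v := by
  classical
  let r : {v // v ∈ A} → {v // v ∈ A} → Prop := fun u v => E u.1 v.1
  haveI h1 : IsTrans _ r := ⟨fun a b c hab hbc => htr _ a.2 _ b.2 _ c.2 hab hbc⟩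
  haveI h2 : IsIrrefl _ r := ⟨fun a => hirr a.1⟩
  haveI h3 : IsTrichotomous _ r := ⟨fun a b hab' hba' => by
    by_contra hab
    have hne : a.1 ≠ b.1 := fun h => hab (Subtype.ext h)
    exact hab' ((hstr a.1 b.1 hne).mpr hba')⟩
  haveI h3b : IsStrictOrder _ r := ⟨⟩
  haveI h4 : IsStrictTotalOrder _ r := ⟨⟩
  letI hdr : DecidableRel r := Classical.decRel r
  letI lo : LinearOrder {v // v ∈ A} := linearOrderOfSTO r
  have hltr : ∀ u v : {v // v ∈ A}, u < v ↔ r u v := fun u v => Iff.rfl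
  have hcard : Fintype.card {v // v ∈ A} = A.card := Fintype.card_coe A
  let e := (monoEquivOfFin {v // v ∈ A} hcard).symm
  refine ⟨e, e.toEquiv.bijective, fun u v => ?_⟩
  rw [show (E u.1 v.1) = r u v from rfl, ← hltr u v]
  exact (OrderIso.lt_iff_lt e).symm

lemma TEdge_AA {a b c : ℕ} {i j : Fin a} :
    TEdge a b c (.inl i) (.inl j) ↔ (i:ℕ) < (j:ℕ) := by
  unfold TEdge cpart cidx
  constructor
  · rintro (h | ⟨-, h⟩)
    · exact absurd h (show ¬ (0:Fin 3) = 0 + 1 by decide)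
    · exact h
  · intro h; exact Or.inr ⟨rfl, h⟩

lemma TEdge_BB {a b c : ℕ} {i j : Fin b} :
    TEdge a b c (.inr (.inl i)) (.inr (.inl j)) ↔ (i:ℕ) < (j:ℕ) := by
  unfold TEdge cpart cidx
  constructor
  · rintro (h | ⟨-, h⟩)
    · exact absurd h (show ¬ (1:Fin 3) = 1 + 1 by decide)
    · exact h
  · intro h; exact Or.inr ⟨rfl, h⟩

lemma TEdge_CC {a b c : ℕ} {i j : Fin c} :
    TEdge a b c (.inr (.inr i)) (.inr (.inr j)) ↔ (i:ℕ) < (j:ℕ) := by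
  unfold TEdge cpart cidx
  constructor
  · rintro (h | ⟨-, h⟩)
    · exact absurd h (show ¬ (2:Fin 3) = 2 + 1 by decide)
    · exact h
  · intro h; exact Or.inr ⟨rfl, h⟩

lemma TEdge_AB {a b c : ℕ} {i : Fin a} {j : Fin b} :
    TEdge a b c (.inl i) (.inr (.inl j)) := by
  unfold TEdge cpart; exact Or.inl (show (1:Fin 3) = 0 + 1 by decide)

lemma TEdge_BC {a b c : ℕ} {i : Fin b} {j : Fin c} :
    TEdge a b c (.inr (.inl i)) (.inr (.inr j)) := by
  unfold TEdge cpart; exact Or.inl (show (2:Fin 3) = 1 + 1 by decide)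

lemma TEdge_CA {a b c : ℕ} {i : Fin c} {j : Fin a} :
    TEdge a b c (.inr (.inr i)) (.inl j) := by
  unfold TEdge cpart; exact Or.inl (show (0:Fin 3) = 2 + 1 by decide)

lemma TEdge_not_BA {a b c : ℕ} {i : Fin b} {j : Fin a} :
    ¬ TEdge a b c (.inr (.inl i)) (.inl j) := by
  unfold TEdge cpart
  rintro (h | ⟨h, -⟩)
  · exact absurd h (show ¬ (0:Fin 3) = 1 + 1 by decide)
  · exact absurd h (show ¬ (1:Fin 3) = 0 by decide)

lemma TEdge_not_CB {a b c : ℕ} {i : Fin c} {j : Fin b} :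
    ¬ TEdge a b c (.inr (.inr i)) (.inr (.inl j)) := by
  unfold TEdge cpart
  rintro (h | ⟨h, -⟩)
  · exact absurd h (show ¬ (1:Fin 3) = 2 + 1 by decide)
  · exact absurd h (show ¬ (2:Fin 3) = 1 by decide)

lemma TEdge_not_AC {a b c : ℕ} {i : Fin a} {j : Fin c} :
    ¬ TEdge a b c (.inl i) (.inr (.inr j)) := by
  unfold TEdge cpart
  rintro (h | ⟨h, -⟩)
  · exact absurd h (show ¬ (2:Fin 3) = 0 + 1 by decide)
  · exact absurd h (show ¬ (0:Fin 3) = 2 by decide)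

include hirr hstr in
lemma iso_of_triOn (h : TriOn E Finset.univ) :
    ∃ a b c : ℕ, 0 < a ∧ 0 < b ∧ 0 < c ∧ IsoToT E a b c := by
  classical
  obtain ⟨A, B, C, hA, hB, hC, hun, hAB, hBC, hCA, htA, htB, htC⟩ := h
  obtain ⟨φA, hφAb, hφA⟩ := orderPart hirr hstr A htA
  obtain ⟨φB, hφBb, hφB⟩ := orderPart hirr hstr B htB
  obtain ⟨φC, hφCb, hφC⟩ := orderPart hirr hstr C htC
  -- disjointness
  have hdAB : ∀ v, v ∈ A → v ∈ B → False := fun v h1 h2 => hirr v (hAB v h1 v h2)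
  have hdBC : ∀ v, v ∈ B → v ∈ C → False := fun v h1 h2 => hirr v (hBC v h1 v h2)
  have hdCA : ∀ v, v ∈ C → v ∈ A → False := fun v h1 h2 => hirr v (hCA v h1 v h2)
  have hcover : ∀ v : V, v ∈ A ∨ v ∈ B ∨ v ∈ C := by
    intro v
    have : v ∈ A ∪ B ∪ C := hun ▸ Finset.mem_univ v
    rcases Finset.mem_union.mp this with h | h
    · rcases Finset.mem_union.mp h with h' | h'
      · exact Or.inl h'
      · exact Or.inr (Or.inl h')
    · exact Or.inr (Or.inr h)
  refine ⟨A.card, B.card, C.card, Finset.card_pos.mpr hA, Finset.card_pos.mpr hB,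
    Finset.card_pos.mpr hC, ?_⟩
  let f : V → CV A.card B.card C.card := fun v =>
    if h : v ∈ A then .inl (φA ⟨v, h⟩)
    else if h' : v ∈ B then .inr (.inl (φB ⟨v, h'⟩))
    else .inr (.inr (φC ⟨v, (hcover v).resolve_left h |>.resolve_left h'⟩))
  have hfA : ∀ v (h : v ∈ A), f v = .inl (φA ⟨v, h⟩) := by
    intro v h; simp only [f, dif_pos h]
  have hfB : ∀ v (h : v ∈ B), f v = .inr (.inl (φB ⟨v, h⟩)) := by
    intro v h
    have hnA : ¬ v ∈ A := fun h' => hdAB v h' h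
    simp only [f, dif_neg hnA, dif_pos h]
  have hfC : ∀ v (h : v ∈ C), f v = .inr (.inr (φC ⟨v, h⟩)) := by
    intro v h
    have hnA : ¬ v ∈ A := fun h' => hdCA v h h'
    have hnB : ¬ v ∈ B := fun h' => hdBC v h' h
    simp only [f, dif_neg hnA, dif_neg hnB]
  have hinj : Function.Injective f := by
    intro u v huv
    rcases hcover u with hu | hu | hu <;> rcases hcover v with hv | hv | hv
    · rw [hfA u hu, hfA v hv] at huv
      have := hφAb.1 (Sum.inl.inj huv)
      exact congrArg Subtype.val this
    · rw [hfA u hu, hfB v hv] at huv; exact absurd huv (by simp)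
    · rw [hfA u hu, hfC v hv] at huv; exact absurd huv (by simp)
    · rw [hfB u hu, hfA v hv] at huv; exact absurd huv (by simp)
    · rw [hfB u hu, hfB v hv] at huv
      have := hφBb.1 (Sum.inl.inj (Sum.inr.inj huv))
      exact congrArg Subtype.val this
    · rw [hfB u hu, hfC v hv] at huv; exact absurd huv (by simp)
    · rw [hfC u hu, hfA v hv] at huv; exact absurd huv (by simp)
    · rw [hfC u hu, hfB v hv] at huv; exact absurd huv (by simp)
    · rw [hfC u hu, hfC v hv] at huv
      have := hφCb.1 (Sum.inr.inj (Sum.inr.inj huv))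
      exact congrArg Subtype.val this
  have hcards : Fintype.card V = Fintype.card (CV A.card B.card C.card) := by
    simp only [Fintype.card_sum, Fintype.card_fin]
    have hdisj1 : Disjoint A B := Finset.disjoint_left.mpr (fun {a} ha hb => hdAB a ha hb)
    have hdisj2 : Disjoint (A ∪ B) C := Finset.disjoint_left.mpr (by
      intro a ha hc
      rcases Finset.mem_union.mp ha with h | h
      · exact hdCA a hc h
      · exact hdBC a h hc)
    rw [← Finset.card_univ, ← hun, Finset.card_union_of_disjoint hdisj2,
      Finset.card_union_of_disjoint hdisj1]
    omega
  have hbij : Function.Bijective f := (Fintype.bijective_iff_injective_and_card f).mpr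
    ⟨hinj, hcards⟩
  let e := Equiv.ofBijective f hbij
  refine ⟨e, ?_⟩
  intro u v
  have he : ∀ w, e w = f w := fun w => rfl
  have hne_of_mem : ∀ {p q : V} {P Q : Finset V}, p ∈ P → q ∈ Q →
      (∀ x, x ∈ P → x ∈ Q → False) → p ≠ q := by
    rintro p q P Q hp hq hPQ rfl
    exact hPQ p hp hq
  rcases hcover u with hu | hu | hu <;> rcases hcover v with hv | hv | hv <;>
    rw [he, he]
  · -- A A
    rw [hfA u hu, hfA v hv, TEdge_AA, ← Fin.lt_def]
    exact hφA ⟨u, hu⟩ ⟨v, hv⟩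
  · -- A B
    rw [hfA u hu, hfB v hv]
    exact iff_of_true (hAB u hu v hv) TEdge_AB
  · -- A C
    rw [hfA u hu, hfC v hv]
    have hvu : E v u := hCA v hv u hu
    have hne : u ≠ v := fun h => hdCA v hv (h ▸ hu)
    exact iff_of_false (fun h => (hstr u v hne).mp h hvu) TEdge_not_AC
  · -- B A
    rw [hfB u hu, hfA v hv]
    have hvu : E v u := hAB v hv u hu
    have hne : u ≠ v := fun h => hdAB v hv (h ▸ hu)
    exact iff_of_false (fun h => (hstr u v hne).mp h hvu) TEdge_not_BA
  · -- B B
    rw [hfB u hu, hfB v hv, TEdge_BB, ← Fin.lt_def]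
    exact hφB ⟨u, hu⟩ ⟨v, hv⟩
  · -- B C
    rw [hfB u hu, hfC v hv]
    exact iff_of_true (hBC u hu v hv) TEdge_BC
  · -- C A
    rw [hfC u hu, hfA v hv]
    exact iff_of_true (hCA u hu v hv) TEdge_CA
  · -- C B
    rw [hfC u hu, hfB v hv]
    have hvu : E v u := hBC v hv u hu
    have hne : u ≠ v := fun h => hdBC v hv (h ▸ hu)
    exact iff_of_false (fun h => (hstr u v hne).mp h hvu) TEdge_not_CB
  · -- C C
    rw [hfC u hu, hfC v hv, TEdge_CC, ← Fin.lt_def]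
    exact hφC ⟨u, hu⟩ ⟨v, hv⟩


end Tournament
end Comb

end S4


open scoped Classical in
theorem stmt4' {V : Type} [Fintype V] (E : V → V → Prop) (hT : IsTournament E)
    (hnt : ¬ IsTransitive E)
    (hni : ∀ a b c : ℕ, 0 < a → 0 < b → 0 < c → ¬ IsoToT E a b c) :
    ∃ W : ℝ → ℝ → ℝ, IsTournamenton W ∧ IsRegularT W ∧ homDensity E W = 0 := by
  classical
  obtain ⟨hirr, hstr⟩ := hT
  by_cases hWL : (∃ a b c d : V, E a b ∧ E a c ∧ E a d ∧ E b c ∧ E c d ∧ E d b) ∨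
      (∃ a b c d : V, E b a ∧ E c a ∧ E d a ∧ E b c ∧ E c d ∧ E d b)
  · -- circle tournamenton kills W4 / L4
    refine ⟨S4.Wc, ⟨S4.measurable_Wc, fun x _ y _ =>
      ⟨S4.Wc_nonneg x y, S4.Wc_le_one x y, S4.Wc_add x y⟩⟩, ?_, ?_⟩
    · exact Filter.Eventually.of_forall (fun x hx => S4.Wc_regular x hx)
    · apply S4.density_zero E S4.Wc (Set.range (fun n : ℤ => (n:ℝ)/2))
        (Set.countable_range _)
      intro x _ hdiff
      by_contra hno
      push_neg at hno
      have key : ∀ u v : V, E u v →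
          0 < Int.fract (x v - x u) ∧ Int.fract (x v - x u) < 1/2 := by
        intro u v he
        have hne : u ≠ v := S4.E_ne hirr he
        have hW := hno (u, v) (Finset.mem_filter.mpr ⟨Finset.mem_univ _, he⟩)
        exact S4.wc_pos_frac hW (hdiff u v hne)
      rcases hWL with ⟨a, b, c, d, h1, h2, h3, h4, h5, h6⟩ |
          ⟨a, b, c, d, h1, h2, h3, h4, h5, h6⟩
      · -- W4 : a → b,c,d ; b → c → d → b
        have Fb := key a b h1
        have Fc := key a c h2
        have Fd := key a d h3
        have Fbc := key b c h4
        have Fcd := key c d h5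
        have Fdb := key d b h6
        have L1 : Int.fract (x b - x a) < Int.fract (x c - x a) := by
          refine S4.frlt Fb.1 Fb.2 Fc.1 Fc.2 ?_ ?_
          · rw [show (x c - x a) - (x b - x a) = x c - x b by ring]; exact Fbc.1
          · rw [show (x c - x a) - (x b - x a) = x c - x b by ring]; exact Fbc.2
        have L2 : Int.fract (x c - x a) < Int.fract (x d - x a) := by
          refine S4.frlt Fc.1 Fc.2 Fd.1 Fd.2 ?_ ?_
          · rw [show (x d - x a) - (x c - x a) = x d - x c by ring]; exact Fcd.1
          · rw [show (x d - x a) - (x c - x a) = x d - x c by ring]; exact Fcd.2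
        have L3 : Int.fract (x d - x a) < Int.fract (x b - x a) := by
          refine S4.frlt Fd.1 Fd.2 Fb.1 Fb.2 ?_ ?_
          · rw [show (x b - x a) - (x d - x a) = x b - x d by ring]; exact Fdb.1
          · rw [show (x b - x a) - (x d - x a) = x b - x d by ring]; exact Fdb.2
        linarith
      · -- L4 : b,c,d → a ; b → c → d → b
        have Fb := key b a h1
        have Fc := key c a h2
        have Fd := key d a h3
        have Fbc := key b c h4
        have Fcd := key c d h5
        have Fdb := key d b h6
        have L1 : Int.fract (x a - x c) < Int.fract (x a - x b) := by
          refine S4.frlt Fc.1 Fc.2 Fb.1 Fb.2 ?_ ?_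
          · rw [show (x a - x b) - (x a - x c) = x c - x b by ring]; exact Fbc.1
          · rw [show (x a - x b) - (x a - x c) = x c - x b by ring]; exact Fbc.2
        have L2 : Int.fract (x a - x d) < Int.fract (x a - x c) := by
          refine S4.frlt Fd.1 Fd.2 Fc.1 Fc.2 ?_ ?_
          · rw [show (x a - x c) - (x a - x d) = x d - x c by ring]; exact Fcd.1
          · rw [show (x a - x c) - (x a - x d) = x d - x c by ring]; exact Fcd.2
        have L3 : Int.fract (x a - x b) < Int.fract (x a - x d) := by
          refine S4.frlt Fb.1 Fb.2 Fd.1 Fd.2 ?_ ?_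
          · rw [show (x a - x d) - (x a - x b) = x b - x d by ring]; exact Fdb.1
          · rw [show (x a - x d) - (x a - x b) = x b - x d by ring]; exact Fdb.2
        linarith
  · -- ternary tournamenton
    push_neg at hWL
    obtain ⟨hW4, hL4⟩ := hWL
    refine ⟨S4.Wt, ⟨S4.measurable_Wt, fun x _ y _ =>
      ⟨S4.Wt_nonneg x y, S4.Wt_le_one x y, S4.Wt_add x y⟩⟩, ?_, ?_⟩
    · have h1 : ∀ᵐ x : ℝ, x ∉ ({1} : Set ℝ) :=
        measure_eq_zero_iff_ae_notMem.mp (measure_singleton 1)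
      filter_upwards [h1] with x hx hxI
      exact S4.Wt_regular x hxI.1 (lt_of_le_of_ne hxI.2 (fun h => hx h))
    · apply S4.density_zero E S4.Wt (Set.range (Int.cast : ℤ → ℝ))
        (Set.countable_range _)
      intro x hxpi hdiff
      by_contra hno
      push_neg at hno
      have hxmem : ∀ v : V, x v ∈ Set.Icc (0:ℝ) 1 := fun v => hxpi v (Set.mem_univ v)
      have hdint : ∀ u v : V, u ≠ v → ¬ S4.TernEq (x u) (x v) := by
        intro u v huv hte
        obtain ⟨n, hn⟩ := S4.ternEq_sub_int (hxmem u) (hxmem v) hte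
        exact hdiff u v huv ⟨n, hn.symm⟩
      have hEfwd : ∀ u v : V, E u v → S4.TernCyc (x u) (x v) := by
        intro u v he
        have hne : u ≠ v := S4.E_ne hirr he
        have hW := hno (u, v) (Finset.mem_filter.mpr ⟨Finset.mem_univ _, he⟩)
        rcases S4.Wt_ne_zero hW with h | h
        · exact h
        · exact absurd h (hdint u v hne)
      have hE : ∀ u v : V, u ≠ v → (E u v ↔ ∃ k,
          (∀ j < k, (fun k => S4.dg k (x u)) j = (fun k => S4.dg k (x v)) j) ∧
            (fun k => S4.dg k (x v)) k = ((fun k => S4.dg k (x u)) k + 1) % 3) := by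
        intro u v huv
        constructor
        · exact fun he => hEfwd u v he
        · intro hcyc
          by_contra hne
          exact S4.ternCyc_not_symm (hEfwd v u (S4.total hstr huv hne)) hcyc
      have hres := S4.keyind hirr hstr (fun v k => S4.dg k (x v))
        (fun v k => ⟨S4.dg_nonneg _ _, S4.dg_lt_three _ _⟩) hE
        (Fintype.card V) Finset.univ (le_of_eq (Finset.card_univ))
        (fun u _ v _ huv heq => hdint u v huv (fun k => congrFun heq k))
        (fun a _ b _ c _ d _ h1 h2 h3 h4 h5 h6 => hW4 a b c d h1 h2 h3 h4 h5 h6)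
        (fun a _ b _ c _ d _ h1 h2 h3 h4 h5 h6 => hL4 a b c d h1 h2 h3 h4 h5 h6)
      rcases hres with h | h
      · exact hnt (fun u v w => h u (Finset.mem_univ u) v (Finset.mem_univ v) w
          (Finset.mem_univ w))
      · obtain ⟨a, b, c, ha, hb, hc, hiso⟩ := S4.iso_of_triOn hirr hstr h
        exact hni a b c ha hb hc hiso


theorem stmt4 {V : Type} [Fintype V] (E : V → V → Prop) (hT : IsTournament E)
    (hnt : ¬ IsTransitive E)
    (hni : ∀ a b c : ℕ, 0 < a → 0 < b → 0 < c → ¬ IsoToT E a b c) :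
    ∃ W : ℝ → ℝ → ℝ, IsTournamenton W ∧ IsRegularT W ∧ homDensity E W = 0 := by
  exact stmt4' E hT hnt hni

end
end

section
/- Every non-transitive finite tournament that contains no subtournament isomorphic to W₄, no subtournament isomorphic to L₄, and no subtournament isomorphic to C₅ is isomorphic to T[a,b,c] for some positive integers a, b, c. -/
open MeasureTheory

noncomputable section

section TournAux

variable {V : Type} {E : V → V → Prop}

lemma tasym (hT : IsTournament E) {a b : V} (h : E a b) : ¬ E b a := by
  intro h'
  by_cases hab : a = b
  · exact hT.1 a (hab ▸ h)
  · exact ((hT.2 a b hab).mp h) h'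

lemma ttotal (hT : IsTournament E) {a b : V} (hab : a ≠ b) : E a b ∨ E b a := by
  by_cases h : E a b
  · exact Or.inl h
  · right; by_contra h'
    exact h ((hT.2 a b hab).mpr h')

lemma containsW4 (hT : IsTournament E) {s t1 t2 t3 : V}
    (h12 : E t1 t2) (h23 : E t2 t3) (h31 : E t3 t1)
    (hs1 : E s t1) (hs2 : E s t2) (hs3 : E s t3) : ContainsSub E W4Edge := by
  have n21 := tasym hT h12
  have n32 := tasym hT h23
  have n13 := tasym hT h31
  have n1s := tasym hT hs1
  have n2s := tasym hT hs2
  have n3s := tasym hT hs3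
  have ne12 : t1 ≠ t2 := fun h => hT.1 _ (h ▸ h12)
  have ne23 : t2 ≠ t3 := fun h => hT.1 _ (h ▸ h23)
  have ne31 : t3 ≠ t1 := fun h => hT.1 _ (h ▸ h31)
  have nes1 : s ≠ t1 := fun h => hT.1 _ (h ▸ hs1)
  have nes2 : s ≠ t2 := fun h => hT.1 _ (h ▸ hs2)
  have nes3 : s ≠ t3 := fun h => hT.1 _ (h ▸ hs3)
  refine ⟨![s, t1, t2, t3], ?_, ?_⟩
  · intro u v huv
    fin_cases u <;> fin_cases v <;> simp_all
  · intro u v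
    fin_cases u <;> fin_cases v <;>
      simp_all [W4Edge, hT.1 s, hT.1 t1, hT.1 t2, hT.1 t3]

lemma containsL4 (hT : IsTournament E) {s t1 t2 t3 : V}
    (h12 : E t1 t2) (h23 : E t2 t3) (h31 : E t3 t1)
    (h1s : E t1 s) (h2s : E t2 s) (h3s : E t3 s) : ContainsSub E L4Edge := by
  have n21 := tasym hT h12
  have n32 := tasym hT h23
  have n13 := tasym hT h31
  have ns1 := tasym hT h1s
  have ns2 := tasym hT h2s
  have ns3 := tasym hT h3s
  have ne12 : t1 ≠ t2 := fun h => hT.1 _ (h ▸ h12)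
  have ne23 : t2 ≠ t3 := fun h => hT.1 _ (h ▸ h23)
  have ne31 : t3 ≠ t1 := fun h => hT.1 _ (h ▸ h31)
  have ne1s : t1 ≠ s := fun h => hT.1 _ (h ▸ h1s)
  have ne2s : t2 ≠ s := fun h => hT.1 _ (h ▸ h2s)
  have ne3s : t3 ≠ s := fun h => hT.1 _ (h ▸ h3s)
  refine ⟨![s, t1, t2, t3], ?_, ?_⟩
  · intro u v huv
    fin_cases u <;> fin_cases v <;> simp_all
  · intro u v
    fin_cases u <;> fin_cases v <;>
      simp_all [L4Edge, hT.1 s, hT.1 t1, hT.1 t2, hT.1 t3]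

lemma c5table : ∀ u v : ZMod 5, C5Edge u v ↔
    u.val * 5 + v.val ∈ [1,2,7,8,13,14,19,15,20,21] := by
  simp only [C5Edge]; decide

open Fin.NatCast in
lemma containsC5 (hT : IsTournament E) {a0 a1 a2 a3 a4 : V}
    (e01 : E a0 a1) (e02 : E a0 a2) (e12 : E a1 a2) (e13 : E a1 a3)
    (e23 : E a2 a3) (e24 : E a2 a4) (e34 : E a3 a4) (e30 : E a3 a0)
    (e40 : E a4 a0) (e41 : E a4 a1) : ContainsSub E C5Edge := by
  have n10 := tasym hT e01
  have n20 := tasym hT e02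
  have n21 := tasym hT e12
  have n31 := tasym hT e13
  have n32 := tasym hT e23
  have n42 := tasym hT e24
  have n43 := tasym hT e34
  have n03 := tasym hT e30
  have n04 := tasym hT e40
  have n14 := tasym hT e41
  have ne01 : a0 ≠ a1 := fun h => hT.1 _ (h ▸ e01)
  have ne02 : a0 ≠ a2 := fun h => hT.1 _ (h ▸ e02)
  have ne12 : a1 ≠ a2 := fun h => hT.1 _ (h ▸ e12)
  have ne13 : a1 ≠ a3 := fun h => hT.1 _ (h ▸ e13)
  have ne23 : a2 ≠ a3 := fun h => hT.1 _ (h ▸ e23)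
  have ne24 : a2 ≠ a4 := fun h => hT.1 _ (h ▸ e24)
  have ne34 : a3 ≠ a4 := fun h => hT.1 _ (h ▸ e34)
  have ne30 : a3 ≠ a0 := fun h => hT.1 _ (h ▸ e30)
  have ne40 : a4 ≠ a0 := fun h => hT.1 _ (h ▸ e40)
  have ne41 : a4 ≠ a1 := fun h => hT.1 _ (h ▸ e41)
  refine ⟨fun i => ![a0, a1, a2, a3, a4] (ZMod.val i), ?_, ?_⟩
  · intro u v huv
    fin_cases u <;> fin_cases v <;> simp_all [ZMod.val] <;> rfl
  · intro u v
    rw [c5table u v]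
    fin_cases u <;> fin_cases v <;>
      simp_all [ZMod.val, hT.1 a0, hT.1 a1, hT.1 a2, hT.1 a3, hT.1 a4]


lemma TEdgeAA (a b c : ℕ) (i j : Fin a) : TEdge a b c (.inl i) (.inl j) ↔ i < j := by
  rw [TEdge]
  simp only [cpart, cidx]
  constructor
  · rintro (h | ⟨-, h⟩)
    · exact absurd h (by decide)
    · exact h
  · intro h
    exact Or.inr ⟨by trivial, h⟩

lemma TEdgeBB (a b c : ℕ) (i j : Fin b) :
    TEdge a b c (.inr (.inl i)) (.inr (.inl j)) ↔ i < j := by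
  rw [TEdge]
  simp only [cpart, cidx]
  constructor
  · rintro (h | ⟨-, h⟩)
    · exact absurd h (by decide)
    · exact h
  · intro h
    exact Or.inr ⟨by trivial, h⟩

lemma TEdgeCC (a b c : ℕ) (i j : Fin c) :
    TEdge a b c (.inr (.inr i)) (.inr (.inr j)) ↔ i < j := by
  rw [TEdge]
  simp only [cpart, cidx]
  constructor
  · rintro (h | ⟨-, h⟩)
    · exact absurd h (by decide)
    · exact h
  · intro h
    exact Or.inr ⟨by trivial, h⟩

lemma crossLemma (hT : IsTournament E) (hW4 : ¬ ContainsSub E W4Edge)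
    (hL4 : ¬ ContainsSub E L4Edge) (hC5 : ¬ ContainsSub E C5Edge)
    {x y z u v : V} (hxy : E x y) (hyz : E y z) (hzx : E z x)
    (hu1 : E u y) (hu2 : E z u) (hv1 : E v z) (hv2 : E x v) : E u v := by
  by_cases hux : u = x
  · exact hux ▸ hv2
  by_cases hvy : v = y
  · exact hvy ▸ hu1
  by_contra hcon
  have huv : u ≠ v := by
    intro h
    rw [h] at hu2
    exact tasym hT hv1 hu2
  have hvu : E v u := (ttotal hT huv).resolve_left hcon
  rcases ttotal hT hux with h1 | h1
  · rcases ttotal hT hvy with h2 | h2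
    · exact hW4 (containsW4 hT hyz hu2 hu1 h2 hv1 hvu)
    · exact hC5 (containsC5 hT hxy hv2 h2 hyz hv1 hvu hu2 hzx h1 hu1)
  · rcases ttotal hT hvy with h2 | h2
    · exact hL4 (containsL4 hT hv2 hv1 hzx h1 hvu hu2)
    · exact hW4 (containsW4 hT h2 hvu hu1 hxy hv2 h1)

open scoped Classical in
lemma orderEmb (hT : IsTournament E) (hL4 : ¬ ContainsSub E L4Edge)
    (s : V) (P : V → Prop) [Fintype {v // P v}] (hP : ∀ v, P v → E v s) :
    ∃ f : {v // P v} ≃ Fin (Fintype.card {v // P v}),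
      ∀ u v : {v // P v}, E u.1 v.1 ↔ f u < f v := by
  classical
  let lt : {v // P v} → {v // P v} → Prop := fun u v => E u.1 v.1
  haveI : IsTrans _ lt := ⟨by
    intro a b c h1 h2
    by_contra h3
    have hac : a.1 ≠ c.1 := by
      intro h
      have h2' : E b.1 c.1 := h2
      rw [← h] at h2'
      exact tasym hT h1 h2' 
    have h4 : E c.1 a.1 := (ttotal hT hac).resolve_left h3
    exact hL4 (containsL4 hT h1 h2 h4 (hP _ a.2) (hP _ b.2) (hP _ c.2))⟩
  haveI : IsIrrefl _ lt := ⟨fun a => hT.1 a.1⟩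
  haveI : IsTrichotomous _ lt := ⟨by
    intro a b hab hba
    by_contra h
    rcases ttotal hT (fun h' => h (Subtype.ext h')) with h1 | h1
    · exact hab h1
    · exact hba h1⟩
  haveI : IsStrictTotalOrder _ lt := { }
  letI := linearOrderOfSTO lt
  refine ⟨(monoEquivOfFin _ rfl).symm.toEquiv, ?_⟩
  intro a b
  show lt a b ↔ _
  have h1 : lt a b ↔ a < b := Iff.rfl
  rw [h1, ← OrderIso.lt_iff_lt (monoEquivOfFin {v // P v} rfl).symm]
  rfl

end TournAux

theorem stmt5 {V : Type} [Fintype V] (E : V → V → Prop) (hT : IsTournament E)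
    (hnt : ¬ IsTransitive E)
    (hW4 : ¬ ContainsSub E W4Edge) (hL4 : ¬ ContainsSub E L4Edge)
    (hC5 : ¬ ContainsSub E C5Edge) :
    ∃ a b c : ℕ, 0 < a ∧ 0 < b ∧ 0 < c ∧ IsoToT E a b c := by
  classical
  rw [IsTransitive] at hnt
  push_neg at hnt
  obtain ⟨x, y, z, hxy, hyz, hnxz⟩ := hnt
  have hxnez : x ≠ z := by
    rintro rfl
    exact tasym hT hxy hyz
  have hzx : E z x := (ttotal hT hxnez).resolve_left hnxz
  have hpart : ∀ v, (E v y ∧ E z v) ∨ (E v z ∧ E x v) ∨ (E v x ∧ E y v) := by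
    intro v
    by_cases hvx : v = x
    · exact Or.inl ⟨hvx ▸ hxy, hvx ▸ hzx⟩
    by_cases hvy : v = y
    · exact Or.inr (Or.inl ⟨hvy ▸ hyz, hvy ▸ hxy⟩)
    by_cases hvz : v = z
    · exact Or.inr (Or.inr ⟨hvz ▸ hzx, hvz ▸ hyz⟩)
    rcases ttotal hT hvx with h1 | h1 <;> rcases ttotal hT hvy with h2 | h2 <;>
      rcases ttotal hT hvz with h3 | h3
    · exact absurd (containsW4 hT hxy hyz hzx h1 h2 h3) hW4
    · exact Or.inl ⟨h2, h3⟩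
    · exact Or.inr (Or.inr ⟨h1, h2⟩)
    · exact Or.inr (Or.inr ⟨h1, h2⟩)
    · exact Or.inr (Or.inl ⟨h3, h1⟩)
    · exact Or.inl ⟨h2, h3⟩
    · exact Or.inr (Or.inl ⟨h3, h1⟩)
    · exact absurd (containsL4 hT hxy hyz hzx h1 h2 h3) hL4
  have hAB : ∀ v, (E v y ∧ E z v) → (E v z ∧ E x v) → False :=
    fun v h h' => tasym hT h'.1 h.2
  have hBC : ∀ v, (E v z ∧ E x v) → (E v x ∧ E y v) → False :=
    fun v h h' => tasym hT h'.1 h.2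
  have hAC : ∀ v, (E v y ∧ E z v) → (E v x ∧ E y v) → False :=
    fun v h h' => tasym hT h.1 h'.2
  have crossAB : ∀ u v, (E u y ∧ E z u) → (E v z ∧ E x v) → E u v :=
    fun u v hu hv => crossLemma hT hW4 hL4 hC5 hxy hyz hzx hu.1 hu.2 hv.1 hv.2
  have crossBC : ∀ u v, (E u z ∧ E x u) → (E v x ∧ E y v) → E u v :=
    fun u v hu hv => crossLemma hT hW4 hL4 hC5 hyz hzx hxy hu.1 hu.2 hv.1 hv.2
  have crossCA : ∀ u v, (E u x ∧ E y u) → (E v y ∧ E z v) → E u v :=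
    fun u v hu hv => crossLemma hT hW4 hL4 hC5 hzx hxy hyz hu.1 hu.2 hv.1 hv.2
  obtain ⟨fA, hfA⟩ := orderEmb hT hL4 y (fun v => E v y ∧ E z v) (fun v hv => hv.1)
  obtain ⟨fB, hfB⟩ := orderEmb hT hL4 z (fun v => E v z ∧ E x v) (fun v hv => hv.1)
  obtain ⟨fC, hfC⟩ := orderEmb hT hL4 x (fun v => E v x ∧ E y v) (fun v hv => hv.1)
  refine ⟨Fintype.card {v // E v y ∧ E z v}, Fintype.card {v // E v z ∧ E x v},
    Fintype.card {v // E v x ∧ E y v},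
    Fintype.card_pos_iff.mpr ⟨⟨x, hxy, hzx⟩⟩,
    Fintype.card_pos_iff.mpr ⟨⟨y, hyz, hxy⟩⟩,
    Fintype.card_pos_iff.mpr ⟨⟨z, hzx, hyz⟩⟩, ?_⟩
  have hCnot : ∀ v, ¬ (E v y ∧ E z v) → ¬ (E v z ∧ E x v) → (E v x ∧ E y v) :=
    fun v h h' => ((hpart v).resolve_left h).resolve_left h'
  let toF : V → CV (Fintype.card {v // E v y ∧ E z v}) (Fintype.card {v // E v z ∧ E x v})
      (Fintype.card {v // E v x ∧ E y v}) := fun v =>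
    if h : E v y ∧ E z v then .inl (fA ⟨v, h⟩)
    else if h' : E v z ∧ E x v then .inr (.inl (fB ⟨v, h'⟩))
    else .inr (.inr (fC ⟨v, hCnot v h h'⟩))
  let invF : CV (Fintype.card {v // E v y ∧ E z v}) (Fintype.card {v // E v z ∧ E x v})
      (Fintype.card {v // E v x ∧ E y v}) → V := fun w =>
    match w with
    | .inl i => (fA.symm i).1
    | .inr (.inl i) => (fB.symm i).1
    | .inr (.inr i) => (fC.symm i).1
  have hleft : Function.LeftInverse invF toF := by
    intro v
    by_cases h : E v y ∧ E z v
    · simp only [toF, invF, dif_pos h, Equiv.symm_apply_apply]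
    · by_cases h' : E v z ∧ E x v
      · simp only [toF, invF, dif_neg h, dif_pos h', Equiv.symm_apply_apply]
      · simp only [toF, invF, dif_neg h, dif_neg h', Equiv.symm_apply_apply]
  have hright : Function.RightInverse invF toF := by
    rintro (i | i | i)
    · have h := (fA.symm i).2
      simp only [toF, invF, dif_pos h, Subtype.coe_eta, Equiv.apply_symm_apply]
    · have h := (fB.symm i).2
      have h0 : ¬ (E (fB.symm i).1 y ∧ E z (fB.symm i).1) := fun hc => hAB _ hc h
      simp only [toF, invF, dif_neg h0, dif_pos h, Subtype.coe_eta, Equiv.apply_symm_apply]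
    · have h := (fC.symm i).2
      have h0 : ¬ (E (fC.symm i).1 y ∧ E z (fC.symm i).1) := fun hc => hAC _ hc h
      have h1 : ¬ (E (fC.symm i).1 z ∧ E x (fC.symm i).1) := fun hc => hBC _ hc h
      simp only [toF, invF, dif_neg h0, dif_neg h1, Subtype.coe_eta, Equiv.apply_symm_apply]
  refine ⟨⟨toF, invF, hleft, hright⟩, ?_⟩
  intro u v
  simp only [Equiv.coe_fn_mk]
  by_cases hu : E u y ∧ E z u
  · by_cases hv : E v y ∧ E z v
    · simp only [toF, dif_pos hu, dif_pos hv]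
      rw [TEdgeAA]
      exact hfA ⟨u, hu⟩ ⟨v, hv⟩
    · by_cases hv' : E v z ∧ E x v
      · simp only [toF, dif_pos hu, dif_neg hv, dif_pos hv']
        simp [TEdge, cpart, cidx, crossAB u v hu hv']
      · simp only [toF, dif_pos hu, dif_neg hv, dif_neg hv']
        simp [TEdge, cpart, cidx, tasym hT (crossCA v u (hCnot v hv hv') hu)]
  · by_cases hu' : E u z ∧ E x u
    · by_cases hv : E v y ∧ E z v
      · simp only [toF, dif_neg hu, dif_pos hu', dif_pos hv]
        simp [TEdge, cpart, cidx, tasym hT (crossAB v u hv hu')]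
      · by_cases hv' : E v z ∧ E x v
        · simp only [toF, dif_neg hu, dif_pos hu', dif_neg hv, dif_pos hv']
          rw [TEdgeBB]
          exact hfB ⟨u, hu'⟩ ⟨v, hv'⟩
        · simp only [toF, dif_neg hu, dif_pos hu', dif_neg hv, dif_neg hv']
          simp [TEdge, cpart, cidx, crossBC u v hu' (hCnot v hv hv')]
    · have huC := hCnot u hu hu'
      by_cases hv : E v y ∧ E z v
      · simp only [toF, dif_neg hu, dif_neg hu', dif_pos hv]
        simp [TEdge, cpart, cidx, crossCA u v huC hv]
      · by_cases hv' : E v z ∧ E x v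
        · simp only [toF, dif_neg hu, dif_neg hu', dif_neg hv, dif_pos hv']
          simp [TEdge, cpart, cidx, tasym hT (crossBC v u hv' huC)]
        · simp only [toF, dif_neg hu, dif_neg hu', dif_neg hv, dif_neg hv']
          rw [TEdgeCC]
          exact hfC ⟨u, huC⟩ ⟨v, hCnot v hv hv'⟩

end
end

section
/- Let W be a tournamenton and let a, b, k be positive integers. Define N⁺_k(x₁,…,x_k) = ∫ ∏_{i∈[k]} W(x_i, z) dz, N⁻_k(x₁,…,x_k) = ∫ ∏_{i∈[k]} W(z, x_i) dz, and, whenever N⁺_k(x) > 0 and N⁻_k(x) > 0, D_k(x₁,…,x_k) = (∫∫ W(y,z) ∏_{i∈[k]} W(x_i, y) W(z, x_i) dy dz) / (N⁺_k(x) N⁻_k(x)) (and D_k(x) = 0 otherwise). Then t(C[a,b,k], W) ≥ ∫_{[0,1]^k} N⁺_k(x)^a · D_k(x)^{ab} · N⁻_k(x)^b dx. -/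
open MeasureTheory

noncomputable section

def Nplus (W : ℝ → ℝ → ℝ) (k : ℕ) (x : Fin k → ℝ) : ℝ :=
  ∫ z in I01, ∏ i, W (x i) z

def Nminus (W : ℝ → ℝ → ℝ) (k : ℕ) (x : Fin k → ℝ) : ℝ :=
  ∫ z in I01, ∏ i, W z (x i)

def Dk (W : ℝ → ℝ → ℝ) (k : ℕ) (x : Fin k → ℝ) : ℝ :=
  if 0 < Nplus W k x ∧ 0 < Nminus W k x then
    (∫ y in I01, ∫ z in I01, W y z * ∏ i, (W (x i) y * W z (x i))) /
      (Nplus W k x * Nminus W k x)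
  else 0

/-! ### Auxiliary lemmas -/

section Aux

variable {α : Type*} [MeasurableSpace α] {μ : Measure α}

lemma integrable_bdd [IsFiniteMeasure μ] {f : α → ℝ}
    (hf : AEStronglyMeasurable f μ) (hb : ∀ᵐ x ∂μ, ‖f x‖ ≤ 1) : Integrable f μ :=
  (integrable_const (1:ℝ)).mono' hf hb

lemma chebyshev_int [IsFiniteMeasure μ] {w v : α → ℝ} (m : ℕ)
    (hw : Measurable w) (hv : Measurable v)
    (hw01 : ∀ᵐ x ∂μ, 0 ≤ w x ∧ w x ≤ 1) (hv01 : ∀ᵐ x ∂μ, 0 ≤ v x ∧ v x ≤ 1) :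
    (∫ x, w x * v x ∂μ) * (∫ x, w x * v x ^ m ∂μ) ≤
      (∫ x, w x ∂μ) * (∫ x, w x * v x ^ (m+1) ∂μ) := by
  have hbdd : ∀ (j : ℕ), Integrable (fun x => w x * v x ^ j) μ := by
    intro j
    refine integrable_bdd ((hw.mul (hv.pow_const j)).aestronglyMeasurable) ?_
    filter_upwards [hw01, hv01] with x ⟨hw0, hw1⟩ ⟨hv0, hv1⟩
    rw [Real.norm_eq_abs, abs_mul, abs_of_nonneg hw0, abs_of_nonneg (pow_nonneg hv0 j)]
    exact mul_le_one₀ hw1 (pow_nonneg hv0 j) (pow_le_one₀ hv0 hv1)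
  have hbw : Integrable w μ := by simpa using hbdd 0
  have hb1 : Integrable (fun x => w x * v x) μ := by simpa using hbdd 1
  set A := ∫ x, w x ∂μ
  set B := ∫ x, w x * v x ∂μ
  set C := ∫ x, w x * v x ^ m ∂μ
  set D := ∫ x, w x * v x ^ (m+1) ∂μ
  have key : 0 ≤ ∫ x, ∫ y, w x * w y * (v x - v y) * (v x ^ m - v y ^ m) ∂μ ∂μ := by
    refine integral_nonneg_of_ae ?_
    filter_upwards [hw01, hv01] with x ⟨hwx, _⟩ ⟨hvx, _⟩
    refine integral_nonneg_of_ae ?_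
    filter_upwards [hw01, hv01] with y ⟨hwy, _⟩ ⟨hvy, _⟩
    have hsign : 0 ≤ (v x - v y) * (v x ^ m - v y ^ m) := by
      rcases le_total (v y) (v x) with h | h
      · exact mul_nonneg (by linarith) (by nlinarith [pow_le_pow_left₀ hvy h m])
      · exact mul_nonneg_iff.mpr (Or.inr ⟨by linarith, by nlinarith [pow_le_pow_left₀ hvx h m]⟩)
    rw [mul_assoc]
    exact mul_nonneg (mul_nonneg hwx hwy) hsign
  have inner : ∀ x : α, (∫ y, w x * w y * (v x - v y) * (v x ^ m - v y ^ m) ∂μ)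
      = w x * (v x ^ (m+1) * A - v x * C - v x ^ m * B + D) := by
    intro x
    have : ∀ y, w x * w y * (v x - v y) * (v x ^ m - v y ^ m)
        = w x * ((v x ^ (m+1)) * w y - v x * (w y * v y ^ m)
            - v x ^ m * (w y * v y) + w y * v y ^ (m+1)) := by
      intro y; ring
    simp_rw [this]
    rw [integral_const_mul]
    congr 1
    have h1 : Integrable (fun y => v x ^ (m+1) * w y) μ := hbw.const_mul _
    have h2 : Integrable (fun y => v x ^ (m+1) * w y - v x * (w y * v y ^ m)) μ :=
      h1.sub ((hbdd m).const_mul _)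
    have h3 : Integrable
        (fun y => v x ^ (m+1) * w y - v x * (w y * v y ^ m) - v x ^ m * (w y * v y)) μ :=
      h2.sub ((hb1).const_mul _)
    rw [integral_add h3 (hbdd (m+1)), integral_sub h2 ((hb1).const_mul _),
      integral_sub h1 ((hbdd m).const_mul _),
      integral_const_mul, integral_const_mul, integral_const_mul]
  rw [show (fun x => ∫ y, w x * w y * (v x - v y) * (v x ^ m - v y ^ m) ∂μ)
      = fun x => w x * (v x ^ (m+1) * A - v x * C - v x ^ m * B + D) from funext inner] at key
  have outer : (∫ x, w x * (v x ^ (m+1) * A - v x * C - v x ^ m * B + D) ∂μ)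
      = A * D - C * B - B * C + D * A := by
    have : ∀ x, w x * (v x ^ (m+1) * A - v x * C - v x ^ m * B + D)
        = A * (w x * v x ^ (m+1)) - C * (w x * v x) - B * (w x * v x ^ m) + D * w x := by
      intro x; ring
    simp_rw [this]
    have h1 : Integrable (fun y => A * (w y * v y ^ (m+1))) μ := (hbdd (m+1)).const_mul _
    have h2 : Integrable (fun y => A * (w y * v y ^ (m+1)) - C * (w y * v y)) μ :=
      h1.sub (hb1.const_mul _)
    have h3 : Integrable
        (fun y => A * (w y * v y ^ (m+1)) - C * (w y * v y) - B * (w y * v y ^ m)) μ :=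
      h2.sub ((hbdd m).const_mul _)
    rw [integral_add h3 (hbw.const_mul D), integral_sub h2 ((hbdd m).const_mul _),
      integral_sub h1 (hb1.const_mul _),
      integral_const_mul, integral_const_mul, integral_const_mul, integral_const_mul]
  rw [outer] at key
  nlinarith [key]

lemma pow_int_le [IsFiniteMeasure μ] {w v : α → ℝ} (m : ℕ) (hm : 1 ≤ m)
    (hw : Measurable w) (hv : Measurable v)
    (hw01 : ∀ᵐ x ∂μ, 0 ≤ w x ∧ w x ≤ 1) (hv01 : ∀ᵐ x ∂μ, 0 ≤ v x ∧ v x ≤ 1) :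
    (∫ x, w x * v x ∂μ) ^ m ≤ (∫ x, w x ∂μ) ^ (m - 1) * ∫ x, w x * v x ^ m ∂μ := by
  induction m, hm using Nat.le_induction with
  | base => simp
  | succ m hm ih =>
    have hA : (0:ℝ) ≤ ∫ x, w x ∂μ := by
      refine integral_nonneg_of_ae ?_; filter_upwards [hw01] with x hx using hx.1
    have hB : (0:ℝ) ≤ ∫ x, w x * v x ∂μ := by
      refine integral_nonneg_of_ae ?_
      filter_upwards [hw01, hv01] with x hx hy using mul_nonneg hx.1 hy.1
    calc (∫ x, w x * v x ∂μ) ^ (m+1)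
        = (∫ x, w x * v x ∂μ) ^ m * (∫ x, w x * v x ∂μ) := by rw [pow_succ]
      _ ≤ ((∫ x, w x ∂μ) ^ (m-1) * ∫ x, w x * v x ^ m ∂μ) * (∫ x, w x * v x ∂μ) :=
          mul_le_mul_of_nonneg_right ih hB
      _ = (∫ x, w x ∂μ) ^ (m-1) * ((∫ x, w x * v x ∂μ) * (∫ x, w x * v x ^ m ∂μ)) := by ring
      _ ≤ (∫ x, w x ∂μ) ^ (m-1) * ((∫ x, w x ∂μ) * ∫ x, w x * v x ^ (m+1) ∂μ) :=
          mul_le_mul_of_nonneg_left (chebyshev_int m hw hv hw01 hv01) (pow_nonneg hA _)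
      _ = (∫ x, w x ∂μ) ^ ((m-1)+1) * ∫ x, w x * v x ^ (m+1) ∂μ := by rw [pow_succ]; ring
      _ = (∫ x, w x ∂μ) ^ ((m+1)-1) * ∫ x, w x * v x ^ (m+1) ∂μ := by congr 2; omega

lemma integral_pi_prod (μ : Measure α) [SigmaFinite μ] :
    ∀ (n : ℕ) (f : Fin n → α → ℝ),
    (∫ x, ∏ i, f i (x i) ∂(Measure.pi (fun _ : Fin n => μ))) = ∏ i, ∫ x, f i x ∂μ := by
  intro n
  induction n with
  | zero => intro f; simp [Measure.pi_empty_univ, Measure.real]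
  | succ n ih =>
    intro f
    calc (∫ x, ∏ i, f i (x i) ∂(Measure.pi (fun _ : Fin (n+1) => μ)))
        = ∫ p, f 0 p.1 * ∏ i : Fin n, f i.succ (p.2 i)
            ∂(μ.prod (Measure.pi (fun _ : Fin n => μ))) := by
          rw [← ((measurePreserving_piFinSuccAbove (fun _ : Fin (n+1) => μ) 0).symm).integral_comp']
          refine integral_congr_ae (Filter.Eventually.of_forall fun p => ?_)
          simp only [MeasurableEquiv.piFinSuccAbove_symm_apply, Fin.insertNthEquiv,
            Fin.prod_univ_succ, Fin.insertNth_zero, Equiv.coe_fn_mk, Fin.cons_succ,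
            Fin.zero_succAbove, Fin.cons_zero, cast_eq]
      _ = (∫ x, f 0 x ∂μ) * ∏ i : Fin n, ∫ x, f i.succ x ∂μ := by
          rw [← ih (fun i => f i.succ), ← integral_prod_mul]
      _ = ∏ i, ∫ x, f i x ∂μ := by rw [Fin.prod_univ_succ]

lemma integral_pi_pow (μ : Measure α) [SigmaFinite μ] (n : ℕ) (f : α → ℝ) :
    (∫ x, ∏ i, f (x i) ∂(Measure.pi (fun _ : Fin n => μ))) = (∫ x, f x ∂μ) ^ n := by
  rw [integral_pi_prod μ n (fun _ => f), Finset.prod_const, Finset.card_univ, Fintype.card_fin]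

lemma pi_full (μ : Measure α) [IsProbabilityMeasure μ] {s : Set α} (h1 : μ s = 1) (n : ℕ) :
    (Measure.pi (fun _ : Fin n => μ)) (Set.pi Set.univ (fun _ : Fin n => s)) = 1 := by
  rw [Measure.pi_pi]; simp [h1]

lemma ae_of_full [IsProbabilityMeasure μ] {s : Set α}
    (hs : MeasurableSet s) (h1 : μ s = 1) : ∀ᵐ x ∂μ, x ∈ s := by
  have h0 : μ sᶜ = 0 := by rw [prob_compl_eq_zero_iff hs]; exact h1
  filter_upwards [measure_eq_zero_iff_ae_notMem.mp h0] with x hx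
  simpa using hx

lemma ae_pi_mem (μ : Measure α) [IsProbabilityMeasure μ]
    {s : Set α} (hs : MeasurableSet s) (h1 : μ s = 1) (n : ℕ) :
    ∀ᵐ x ∂(Measure.pi (fun _ : Fin n => μ)), ∀ i, x i ∈ s := by
  have := ae_of_full (μ := Measure.pi (fun _ : Fin n => μ))
    (MeasurableSet.univ_pi (fun _ : Fin n => hs)) (pi_full μ h1 n)
  filter_upwards [this] with x hx
  simpa [Set.mem_pi] using hx

lemma ae_prod_mem {β γ : Type*} [MeasurableSpace β] [MeasurableSpace γ]
    (ρ : Measure β) (σ : Measure γ) [IsProbabilityMeasure ρ] [IsProbabilityMeasure σ]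
    {s : Set β} {t : Set γ} (hs : MeasurableSet s) (ht : MeasurableSet t)
    (h1 : ρ s = 1) (h2 : σ t = 1) :
    ∀ᵐ z ∂ρ.prod σ, z.1 ∈ s ∧ z.2 ∈ t := by
  have hst : (ρ.prod σ) (s ×ˢ t) = 1 := by rw [Measure.prod_prod, h1, h2, one_mul]
  have := ae_of_full (μ := ρ.prod σ) (hs.prod ht) hst
  filter_upwards [this] with z hz
  exact ⟨hz.1, hz.2⟩

end Aux

open scoped Classical in
lemma prod_CEdge (a b k : ℕ) (F : CV a b k → CV a b k → ℝ) :
    ∏ p ∈ Finset.univ.filter (fun p : CV a b k × CV a b k => CEdge a b k p.1 p.2),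
      F p.1 p.2
    = (∏ j : Fin a, ∏ l : Fin b, F (.inl j) (.inr (.inl l))) *
      ((∏ l : Fin b, ∏ i : Fin k, F (.inr (.inl l)) (.inr (.inr i))) *
       (∏ i : Fin k, ∏ j : Fin a, F (.inr (.inr i)) (.inl j))) := by
  rw [Finset.prod_filter, ← Finset.univ_product_univ, Finset.prod_product]
  rw [Fintype.prod_sum_type]
  simp only [Fintype.prod_sum_type, CEdge, cpart]
  norm_num [Fin.ext_iff]
  norm_num [show ((3:Fin 3):ℕ) = 0 from rfl]
  simp +decide

lemma pi_restrict_eq (ι : Type) [Fintype ι] :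
    (volume : Measure (ι → ℝ)).restrict (Set.pi Set.univ fun _ => I01)
      = Measure.pi (fun _ : ι => (volume : Measure ℝ).restrict I01) := by
  have : SigmaFinite ((volume : Measure ℝ).restrict I01) := inferInstance
  refine (Measure.pi_eq fun s hs => ?_).symm
  rw [Measure.restrict_apply (MeasurableSet.univ_pi hs)]
  rw [show Set.pi Set.univ s ∩ Set.pi Set.univ (fun _ => I01)
      = Set.pi Set.univ (fun i => s i ∩ I01) from by ext; simp [Set.mem_pi, forall_and]]
  rw [volume_pi, Measure.pi_pi]
  simp [Measure.restrict_apply (hs _)]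

lemma alg_final {Np Nm S I1 R : ℝ} (hNp : 0 < Np) (hNm : 0 < Nm) (hS : 0 ≤ S)
    (c d : ℕ) (h1 : S ^ (c+1) ≤ Nm ^ c * I1) (h2 : I1 ^ (d+1) ≤ (Np ^ (c+1)) ^ d * R) :
    Np ^ (c+1) * (S / (Np * Nm)) ^ ((c+1) * (d+1)) * Nm ^ (d+1) ≤ R := by
  have hI1 : 0 ≤ I1 := by
    by_contra h
    push_neg at h
    nlinarith [pow_pos hNm c, pow_nonneg hS (c+1)]
  have hP : (0:ℝ) < (Np * Nm) ^ ((c+1) * (d+1)) := by positivity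
  rw [div_pow, show Np ^ (c+1) * (S ^ ((c+1)*(d+1)) / (Np*Nm) ^ ((c+1)*(d+1))) * Nm ^ (d+1)
      = (Np ^ (c+1) * S ^ ((c+1)*(d+1)) * Nm ^ (d+1)) / (Np*Nm) ^ ((c+1)*(d+1)) from by ring,
    div_le_iff₀ hP]
  calc Np ^ (c+1) * S ^ ((c+1)*(d+1)) * Nm ^ (d+1)
      = (S ^ (c+1)) ^ (d+1) * (Np ^ (c+1) * Nm ^ (d+1)) := by rw [← pow_mul]; ring
    _ ≤ (Nm ^ c * I1) ^ (d+1) * (Np ^ (c+1) * Nm ^ (d+1)) := by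
        have := pow_le_pow_left₀ (pow_nonneg hS (c+1)) h1 (d+1)
        exact mul_le_mul_of_nonneg_right this (by positivity)
    _ = I1 ^ (d+1) * (Nm ^ (c*(d+1)) * Np ^ (c+1) * Nm ^ (d+1)) := by
        rw [mul_pow, ← pow_mul]; ring
    _ ≤ ((Np ^ (c+1)) ^ d * R) * (Nm ^ (c*(d+1)) * Np ^ (c+1) * Nm ^ (d+1)) := by
        refine mul_le_mul_of_nonneg_right h2 (by positivity)
    _ = R * (Np * Nm) ^ ((c+1) * (d+1)) := by
        have e1 : (Np*Nm) ^ ((c+1)*(d+1))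
            = Np ^ ((c+1)*d) * Np ^ (c+1) * (Nm ^ (c*(d+1)) * Nm ^ (d+1)) := by
          ring
        rw [e1, ← pow_mul]
        ring


section KeyPart

def fW (W : ℝ → ℝ → ℝ) {k : ℕ} (x : Fin k → ℝ) : ℝ → ℝ := fun t => ∏ i, W (x i) t
def gW (W : ℝ → ℝ → ℝ) {k : ℕ} (x : Fin k → ℝ) : ℝ → ℝ := fun t => ∏ i, W t (x i)

lemma hWcomp {W : ℝ → ℝ → ℝ} (hWm : Measurable (Function.uncurry W))
    {γ : Type*} [MeasurableSpace γ] {u v : γ → ℝ}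
    (hu : Measurable u) (hv : Measurable v) : Measurable fun t => W (u t) (v t) :=
  hWm.comp (hu.prodMk hv)

lemma box_facts {α : Type*} [MeasurableSpace α] (μ : Measure α) [IsProbabilityMeasure μ]
    {s : Set α} (hsae : ∀ᵐ x ∂μ, x ∈ s) {φ : α → ℝ} (hm : AEStronglyMeasurable φ μ)
    (h01 : ∀ t ∈ s, 0 ≤ φ t ∧ φ t ≤ 1) :
    Integrable φ μ ∧ 0 ≤ (∫ x, φ x ∂μ) ∧ (∫ x, φ x ∂μ) ≤ 1 := by
  have hb : ∀ᵐ x ∂μ, ‖φ x‖ ≤ 1 := by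
    filter_upwards [hsae] with t ht
    rw [Real.norm_eq_abs, abs_le]
    exact ⟨by linarith [(h01 t ht).1], (h01 t ht).2⟩
  have hint := integrable_bdd hm hb
  refine ⟨hint, integral_nonneg_of_ae ?_, ?_⟩
  · filter_upwards [hsae] with t ht using (h01 t ht).1
  · calc (∫ x, φ x ∂μ) ≤ ∫ _, (1:ℝ) ∂μ := integral_mono_ae hint (integrable_const 1)
          (by filter_upwards [hsae] with t ht using (h01 t ht).2)
    _ = 1 := by simp

lemma keyC (W : ℝ → ℝ → ℝ) (hW : IsTournamenton W) (a b k : ℕ) (ha : 0 < a) (hb : 0 < b)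
    (x : Fin k → ℝ) (hx : ∀ i, x i ∈ I01) :
    Nplus W k x ^ a * Dk W k x ^ (a * b) * Nminus W k x ^ b ≤
      ∫ p, (∏ j, ∏ l, W (p.1 j) (p.2 l)) *
          ((∏ l, ∏ i, W (p.2 l) (x i)) * (∏ i, ∏ j, W (x i) (p.1 j)))
        ∂((Measure.pi fun _ : Fin a => (volume : Measure ℝ).restrict I01).prod
           (Measure.pi fun _ : Fin b => (volume : Measure ℝ).restrict I01)) := by
  obtain ⟨hWm, hWb⟩ := hW
  set μ : Measure ℝ := (volume : Measure ℝ).restrict I01 with hμ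
  haveI hprob : IsProbabilityMeasure μ := ⟨by
    rw [hμ, Measure.restrict_apply_univ]
    simp [I01, Real.volume_Icc]⟩
  set P : Measure (Fin a → ℝ) := Measure.pi (fun _ => μ) with hP
  set Q : Measure (Fin b → ℝ) := Measure.pi (fun _ => μ) with hQ
  have hI01meas : MeasurableSet I01 := measurableSet_Icc
  have hI01full : μ I01 = 1 := by
    rw [hμ, Measure.restrict_apply_self]
    simp [I01, Real.volume_Icc]
  have hμae : ∀ᵐ t ∂μ, t ∈ I01 := ae_of_full hI01meas hI01full
  have hPae : ∀ᵐ y ∂P, ∀ j, y j ∈ I01 := ae_pi_mem μ hI01meas hI01full a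
  have hQae : ∀ᵐ z ∂Q, ∀ l, z l ∈ I01 := ae_pi_mem μ hI01meas hI01full b
  -- measurability of building blocks
  have hfm : Measurable (fW W x) :=
    Finset.measurable_prod _ fun i _ => hWcomp hWm measurable_const measurable_id
  have hgm : Measurable (gW W x) :=
    Finset.measurable_prod _ fun i _ => hWcomp hWm measurable_id measurable_const
  have hf01 : ∀ t ∈ I01, 0 ≤ fW W x t ∧ fW W x t ≤ 1 := by
    intro t ht
    exact ⟨Finset.prod_nonneg fun i _ => (hWb _ (hx i) _ ht).1,
      Finset.prod_le_one (fun i _ => (hWb _ (hx i) _ ht).1)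
        (fun i _ => (hWb _ (hx i) _ ht).2.1)⟩
  have hg01 : ∀ t ∈ I01, 0 ≤ gW W x t ∧ gW W x t ≤ 1 := by
    intro t ht
    exact ⟨Finset.prod_nonneg fun i _ => (hWb _ ht _ (hx i)).1,
      Finset.prod_le_one (fun i _ => (hWb _ ht _ (hx i)).1)
        (fun i _ => (hWb _ ht _ (hx i)).2.1)⟩
  -- N⁺, N⁻ as integrals against μ
  have hNp : Nplus W k x = ∫ t, fW W x t ∂μ := rfl
  have hNm : Nminus W k x = ∫ t, gW W x t ∂μ := rfl
  have hNp01 := box_facts μ hμae hfm.aestronglyMeasurable hf01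
  have hNm01 := box_facts μ hμae hgm.aestronglyMeasurable hg01
  -- the inner-neighbourhood functions
  set T : (Fin a → ℝ) → ℝ := fun y => ∫ t, gW W x t * ∏ j, W (y j) t ∂μ with hT
  set U : ℝ → ℝ := fun t => ∫ s, fW W x s * W s t ∂μ with hU
  have hTm : Measurable T := by
    have : Measurable (fun q : (Fin a → ℝ) × ℝ => gW W x q.2 * ∏ j, W (q.1 j) q.2) :=
      (hgm.comp measurable_snd).mul (Finset.measurable_prod _ fun j _ =>
        hWcomp hWm ((measurable_pi_apply j).comp measurable_fst) measurable_snd)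
    exact this.stronglyMeasurable.integral_prod_right'.measurable
  have hUm : Measurable U := by
    have : Measurable (fun q : ℝ × ℝ => fW W x q.2 * W q.2 q.1) :=
      (hfm.comp measurable_snd).mul (hWcomp hWm measurable_snd measurable_fst)
    exact this.stronglyMeasurable.integral_prod_right'.measurable
  have hT01 : ∀ᵐ y ∂P, 0 ≤ T y ∧ T y ≤ 1 := by
    filter_upwards [hPae] with y hy
    have := box_facts μ hμae (φ := fun t => gW W x t * ∏ j, W (y j) t)
      ((hgm.mul (Finset.measurable_prod _ fun j _ =>
        hWcomp hWm measurable_const measurable_id)).aestronglyMeasurable)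
      (fun t ht => ⟨mul_nonneg (hg01 t ht).1 (Finset.prod_nonneg fun j _ =>
          (hWb _ (hy j) _ ht).1),
        mul_le_one₀ (hg01 t ht).2 (Finset.prod_nonneg fun j _ => (hWb _ (hy j) _ ht).1)
          (Finset.prod_le_one (fun j _ => (hWb _ (hy j) _ ht).1)
            (fun j _ => (hWb _ (hy j) _ ht).2.1))⟩)
    exact ⟨this.2.1, this.2.2⟩
  have hU01 : ∀ᵐ t ∂μ, 0 ≤ U t ∧ U t ≤ 1 := by
    filter_upwards [hμae] with t ht
    have := box_facts μ hμae (φ := fun s => fW W x s * W s t)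
      ((hfm.mul (hWcomp hWm measurable_id measurable_const)).aestronglyMeasurable)
      (fun s hs => ⟨mul_nonneg (hf01 s hs).1 (hWb _ hs _ ht).1,
        mul_le_one₀ (hf01 s hs).2 (hWb _ hs _ ht).1 (hWb _ hs _ ht).2.1⟩)
    exact ⟨this.2.1, this.2.2⟩
  -- the big integrand on P × Q
  set BIG : (Fin a → ℝ) × (Fin b → ℝ) → ℝ := fun p =>
    (∏ j, ∏ l, W (p.1 j) (p.2 l)) *
      ((∏ l, ∏ i, W (p.2 l) (x i)) * (∏ i, ∏ j, W (x i) (p.1 j))) with hBIG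
  have hBIGm : Measurable BIG := by
    refine Measurable.mul ?_ (Measurable.mul ?_ ?_)
    · exact Finset.measurable_prod _ fun j _ => Finset.measurable_prod _ fun l _ =>
        hWcomp hWm ((measurable_pi_apply j).comp measurable_fst)
          ((measurable_pi_apply l).comp measurable_snd)
    · exact Finset.measurable_prod _ fun l _ => Finset.measurable_prod _ fun i _ =>
        hWcomp hWm ((measurable_pi_apply l).comp measurable_snd) measurable_const
    · exact Finset.measurable_prod _ fun i _ => Finset.measurable_prod _ fun j _ =>
        hWcomp hWm measurable_const ((measurable_pi_apply j).comp measurable_fst)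
  haveI iP : IsProbabilityMeasure P := by rw [hP]; infer_instance
  haveI iQ : IsProbabilityMeasure Q := by rw [hQ]; infer_instance
  have hPQae : ∀ᵐ p ∂(P.prod Q),
      p ∈ {p : (Fin a → ℝ) × (Fin b → ℝ) | (∀ j, p.1 j ∈ I01) ∧ (∀ l, p.2 l ∈ I01)} := by
    have := ae_prod_mem P Q (MeasurableSet.univ_pi fun _ => hI01meas)
      (MeasurableSet.univ_pi fun _ => hI01meas)
      (by rw [hP]; exact pi_full μ hI01full a) (by rw [hQ]; exact pi_full μ hI01full b)
    filter_upwards [this] with p hp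
    exact ⟨fun j => hp.1 j (Set.mem_univ j), fun l => hp.2 l (Set.mem_univ l)⟩
  have hBIG01 : ∀ p ∈ {p : (Fin a → ℝ) × (Fin b → ℝ) |
      (∀ j, p.1 j ∈ I01) ∧ (∀ l, p.2 l ∈ I01)}, 0 ≤ BIG p ∧ BIG p ≤ 1 := by
    rintro p ⟨h1, h2⟩
    have A0 : 0 ≤ ∏ j, ∏ l, W (p.1 j) (p.2 l) :=
      Finset.prod_nonneg fun j _ => Finset.prod_nonneg fun l _ => (hWb _ (h1 j) _ (h2 l)).1
    have A1 : (∏ j, ∏ l, W (p.1 j) (p.2 l)) ≤ 1 :=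
      Finset.prod_le_one (fun j _ => Finset.prod_nonneg fun l _ => (hWb _ (h1 j) _ (h2 l)).1)
        (fun j _ => Finset.prod_le_one (fun l _ => (hWb _ (h1 j) _ (h2 l)).1)
          (fun l _ => (hWb _ (h1 j) _ (h2 l)).2.1))
    have B0 : 0 ≤ ∏ l, ∏ i, W (p.2 l) (x i) :=
      Finset.prod_nonneg fun l _ => Finset.prod_nonneg fun i _ => (hWb _ (h2 l) _ (hx i)).1
    have B1 : (∏ l, ∏ i, W (p.2 l) (x i)) ≤ 1 :=
      Finset.prod_le_one (fun l _ => Finset.prod_nonneg fun i _ => (hWb _ (h2 l) _ (hx i)).1)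
        (fun l _ => Finset.prod_le_one (fun i _ => (hWb _ (h2 l) _ (hx i)).1)
          (fun i _ => (hWb _ (h2 l) _ (hx i)).2.1))
    have C0 : 0 ≤ ∏ i, ∏ j, W (x i) (p.1 j) :=
      Finset.prod_nonneg fun i _ => Finset.prod_nonneg fun j _ => (hWb _ (hx i) _ (h1 j)).1
    have C1 : (∏ i, ∏ j, W (x i) (p.1 j)) ≤ 1 :=
      Finset.prod_le_one (fun i _ => Finset.prod_nonneg fun j _ => (hWb _ (hx i) _ (h1 j)).1)
        (fun i _ => Finset.prod_le_one (fun j _ => (hWb _ (hx i) _ (h1 j)).1)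
          (fun j _ => (hWb _ (hx i) _ (h1 j)).2.1))
    exact ⟨mul_nonneg A0 (mul_nonneg B0 C0),
      mul_le_one₀ A1 (mul_nonneg B0 C0) (mul_le_one₀ B1 C0 C1)⟩
  have hBF := box_facts (P.prod Q) hPQae hBIGm.aestronglyMeasurable hBIG01
  -- weight function on P
  set w : (Fin a → ℝ) → ℝ := fun y => ∏ j, fW W x (y j) with hw
  have hwm : Measurable w := Finset.measurable_prod _ fun j _ => hfm.comp (measurable_pi_apply j)
  have hw01 : ∀ᵐ y ∂P, 0 ≤ w y ∧ w y ≤ 1 := by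
    filter_upwards [hPae] with y hy
    exact ⟨Finset.prod_nonneg fun j _ => (hf01 _ (hy j)).1,
      Finset.prod_le_one (fun j _ => (hf01 _ (hy j)).1) (fun j _ => (hf01 _ (hy j)).2)⟩
  -- Step 1 : collapse the inner b-fold integral
  have step1 : (∫ p, BIG p ∂(P.prod Q)) = ∫ y, w y * T y ^ b ∂P := by
    rw [integral_prod _ hBF.1]
    refine integral_congr_ae (Filter.Eventually.of_forall fun y => ?_)
    have hz : ∀ z : Fin b → ℝ, BIG (y, z)
        = w y * ∏ l, (gW W x (z l) * ∏ j, W (y j) (z l)) := by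
      intro z
      simp only [hBIG, hw, fW, gW]
      rw [Finset.prod_mul_distrib,
        show (∏ j, ∏ l, W (y j) (z l)) = ∏ l, ∏ j, W (y j) (z l) from Finset.prod_comm,
        show (∏ i : Fin k, ∏ j : Fin a, W (x i) (y j))
          = ∏ j : Fin a, ∏ i : Fin k, W (x i) (y j) from Finset.prod_comm]
      ring
    simp_rw [hz]
    rw [integral_const_mul, hQ, integral_pi_pow μ b (fun t => gW W x t * ∏ j, W (y j) t)]
  -- Step 2 : Jensen on P
  have jensen1 := pow_int_le (μ := P) b hb hwm hTm hw01 hT01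
  -- ∫ w = N⁺ ^ a
  have hIntW : (∫ y, w y ∂P) = Nplus W k x ^ a := by
    rw [hNp, hP]
    exact integral_pi_pow μ a (fW W x)
  -- Step 3 : ∫ w·T = ∫ g·Uᵃ
  have hswapint1 : Integrable (Function.uncurry
      (fun (y : Fin a → ℝ) (t : ℝ) => w y * (gW W x t * ∏ j, W (y j) t))) ((P.prod μ)) := by
    have hmeas : Measurable (Function.uncurry
        (fun (y : Fin a → ℝ) (t : ℝ) => w y * (gW W x t * ∏ j, W (y j) t))) :=
      (hwm.comp measurable_fst).mul ((hgm.comp measurable_snd).mul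
        (Finset.measurable_prod _ fun j _ =>
          hWcomp hWm ((measurable_pi_apply j).comp measurable_fst) measurable_snd))
    have hae : ∀ᵐ q ∂(P.prod μ),
        q ∈ {q : (Fin a → ℝ) × ℝ | (∀ j, q.1 j ∈ I01) ∧ q.2 ∈ I01} := by
      have := ae_prod_mem P μ (MeasurableSet.univ_pi fun _ => hI01meas) hI01meas
        (by rw [hP]; exact pi_full μ hI01full a) hI01full
      filter_upwards [this] with q hq
      exact ⟨fun j => hq.1 j (Set.mem_univ j), hq.2⟩
    refine (box_facts (P.prod μ) hae hmeas.aestronglyMeasurable ?_).1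
    rintro q ⟨h1, h2⟩
    have hw' : 0 ≤ w q.1 ∧ w q.1 ≤ 1 :=
      ⟨Finset.prod_nonneg fun j _ => (hf01 _ (h1 j)).1,
        Finset.prod_le_one (fun j _ => (hf01 _ (h1 j)).1) (fun j _ => (hf01 _ (h1 j)).2)⟩
    have hpr : 0 ≤ (∏ j, W (q.1 j) q.2) ∧ (∏ j, W (q.1 j) q.2) ≤ 1 :=
      ⟨Finset.prod_nonneg fun j _ => (hWb _ (h1 j) _ h2).1,
        Finset.prod_le_one (fun j _ => (hWb _ (h1 j) _ h2).1)
          (fun j _ => (hWb _ (h1 j) _ h2).2.1)⟩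
    exact ⟨mul_nonneg hw'.1 (mul_nonneg (hg01 _ h2).1 hpr.1),
      mul_le_one₀ hw'.2 (mul_nonneg (hg01 _ h2).1 hpr.1)
        (mul_le_one₀ (hg01 _ h2).2 hpr.1 hpr.2)⟩
  have step3 : (∫ y, w y * T y ∂P) = ∫ t, gW W x t * U t ^ a ∂μ := by
    have h1 : ∀ y, w y * T y = ∫ t, w y * (gW W x t * ∏ j, W (y j) t) ∂μ := by
      intro y; rw [integral_const_mul]
    simp_rw [h1]
    rw [integral_integral_swap hswapint1]
    refine integral_congr_ae (Filter.Eventually.of_forall fun t => ?_)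
    have h2 : ∀ y : Fin a → ℝ, w y * (gW W x t * ∏ j, W (y j) t)
        = gW W x t * ∏ j, (fW W x (y j) * W (y j) t) := by
      intro y
      simp only [hw]
      rw [Finset.prod_mul_distrib]
      ring
    simp_rw [h2]
    rw [integral_const_mul, hP, integral_pi_pow μ a (fun s => fW W x s * W s t)]
  -- Step 4 : Jensen on μ
  have hgae : ∀ᵐ t ∂μ, 0 ≤ gW W x t ∧ gW W x t ≤ 1 := by
    filter_upwards [hμae] with t ht using hg01 t ht
  have jensen2 := pow_int_le (μ := μ) a ha hgm hUm hgae hU01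
  -- Step 5 : identify ∫ g·U with the numerator of Dk
  have hswapint2 : Integrable (Function.uncurry
      (fun (t : ℝ) (s : ℝ) => gW W x t * (fW W x s * W s t))) (μ.prod μ) := by
    have hmeas : Measurable (Function.uncurry
        (fun (t : ℝ) (s : ℝ) => gW W x t * (fW W x s * W s t))) :=
      (hgm.comp measurable_fst).mul ((hfm.comp measurable_snd).mul
        (hWcomp hWm measurable_snd measurable_fst))
    have hae : ∀ᵐ q ∂(μ.prod μ), q ∈ {q : ℝ × ℝ | q.1 ∈ I01 ∧ q.2 ∈ I01} := by
      have := ae_prod_mem μ μ hI01meas hI01meas hI01full hI01full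
      filter_upwards [this] with q hq using hq
    refine (box_facts (μ.prod μ) hae hmeas.aestronglyMeasurable ?_).1
    rintro q ⟨h1, h2⟩
    exact ⟨mul_nonneg (hg01 _ h1).1 (mul_nonneg (hf01 _ h2).1 (hWb _ h2 _ h1).1),
      mul_le_one₀ (hg01 _ h1).2 (mul_nonneg (hf01 _ h2).1 (hWb _ h2 _ h1).1)
        (mul_le_one₀ (hf01 _ h2).2 (hWb _ h2 _ h1).1 (hWb _ h2 _ h1).2.1)⟩
  have step5 : (∫ t, gW W x t * U t ∂μ)
      = ∫ y in I01, ∫ z in I01, W y z * ∏ i, (W (x i) y * W z (x i)) := by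
    have h1 : ∀ t, gW W x t * U t = ∫ s, gW W x t * (fW W x s * W s t) ∂μ := by
      intro t; rw [integral_const_mul]
    simp_rw [h1]
    rw [integral_integral_swap hswapint2]
    refine integral_congr_ae (Filter.Eventually.of_forall fun s => ?_)
    refine integral_congr_ae (Filter.Eventually.of_forall fun t => ?_)
    simp only [fW, gW]
    rw [Finset.prod_mul_distrib]
    ring
  -- conclude
  rw [show (∫ p, (∏ j, ∏ l, W (p.1 j) (p.2 l)) *
          ((∏ l, ∏ i, W (p.2 l) (x i)) * (∏ i, ∏ j, W (x i) (p.1 j)))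
        ∂(P.prod Q)) = ∫ p, BIG p ∂(P.prod Q) from rfl, step1]
  by_cases hcase : 0 < Nplus W k x ∧ 0 < Nminus W k x
  · rw [Dk, if_pos hcase]
    obtain ⟨c, rfl⟩ : ∃ c, a = c + 1 := ⟨a - 1, by omega⟩
    obtain ⟨d, rfl⟩ : ∃ d, b = d + 1 := ⟨b - 1, by omega⟩
    simp only [Nat.add_sub_cancel] at jensen1 jensen2
    rw [hIntW] at jensen1
    rw [step3] at jensen1
    rw [hNm.symm] at jensen2
    rw [step5] at jensen2
    have hS : 0 ≤ (∫ y in I01, ∫ z in I01, W y z * ∏ i, (W (x i) y * W z (x i))) := by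
      rw [← step5]
      refine integral_nonneg_of_ae ?_
      filter_upwards [hgae, hU01] with t h1 h2 using mul_nonneg h1.1 h2.1
    exact alg_final hcase.1 hcase.2 hS c d jensen2 jensen1
  · rw [Dk, if_neg hcase, zero_pow (by positivity), mul_zero, zero_mul]
    refine integral_nonneg_of_ae ?_
    filter_upwards [hw01, hT01] with y h1 h2
    exact mul_nonneg h1.1 (pow_nonneg h2.1 b)

end KeyPart



theorem stmt7 (W : ℝ → ℝ → ℝ) (hW : IsTournamenton W)
    (a b k : ℕ) (ha : 0 < a) (hb : 0 < b) (hk : 0 < k) :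
    (∫ x in Set.univ.pi (fun _ : Fin k => I01),
        Nplus W k x ^ a * Dk W k x ^ (a * b) * Nminus W k x ^ b) ≤
      homDensity (CEdge a b k) W := by
  obtain ⟨hWm, hWb⟩ := hW
  set μ : Measure ℝ := (volume : Measure ℝ).restrict I01 with hμ
  haveI hprob : IsProbabilityMeasure μ := ⟨by
    rw [hμ, Measure.restrict_apply_univ]
    simp [I01, Real.volume_Icc]⟩
  have hI01meas : MeasurableSet I01 := measurableSet_Icc
  have hI01full : μ I01 = 1 := by
    rw [hμ, Measure.restrict_apply_self]
    simp [I01, Real.volume_Icc]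
  have hμae : ∀ᵐ t ∂μ, t ∈ I01 := ae_of_full hI01meas hI01full
  set P : Measure (Fin a → ℝ) := Measure.pi (fun _ => μ) with hP
  set Q : Measure (Fin b → ℝ) := Measure.pi (fun _ => μ) with hQ
  set R : Measure (Fin k → ℝ) := Measure.pi (fun _ => μ) with hR
  haveI iP : IsProbabilityMeasure P := by rw [hP]; infer_instance
  haveI iQ : IsProbabilityMeasure Q := by rw [hQ]; infer_instance
  haveI iR : IsProbabilityMeasure R := by rw [hR]; infer_instance
  have hRae : ∀ᵐ x ∂ R, ∀ i, x i ∈ I01 := by rw [hR]; exact ae_pi_mem μ hI01meas hI01full k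
  -- the inner double integral as a function of x
  set H : (Fin k → ℝ) × ((Fin a → ℝ) × (Fin b → ℝ)) → ℝ := fun q =>
    (∏ j, ∏ l, W (q.2.1 j) (q.2.2 l)) *
      ((∏ l, ∏ i, W (q.2.2 l) (q.1 i)) * (∏ i, ∏ j, W (q.1 i) (q.2.1 j))) with hH
  have hHm : Measurable H := by
    refine Measurable.mul ?_ (Measurable.mul ?_ ?_)
    · exact Finset.measurable_prod _ fun j _ => Finset.measurable_prod _ fun l _ =>
        hWcomp hWm ((measurable_pi_apply j).comp (measurable_fst.comp measurable_snd))
          ((measurable_pi_apply l).comp (measurable_snd.comp measurable_snd))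
    · exact Finset.measurable_prod _ fun l _ => Finset.measurable_prod _ fun i _ =>
        hWcomp hWm ((measurable_pi_apply l).comp (measurable_snd.comp measurable_snd))
          ((measurable_pi_apply i).comp measurable_fst)
    · exact Finset.measurable_prod _ fun i _ => Finset.measurable_prod _ fun j _ =>
        hWcomp hWm ((measurable_pi_apply i).comp measurable_fst)
          ((measurable_pi_apply j).comp (measurable_fst.comp measurable_snd))
  have hbox : ∀ q ∈ {q : (Fin k → ℝ) × ((Fin a → ℝ) × (Fin b → ℝ)) |
      (∀ i, q.1 i ∈ I01) ∧ (∀ j, q.2.1 j ∈ I01) ∧ (∀ l, q.2.2 l ∈ I01)},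
      0 ≤ H q ∧ H q ≤ 1 := by
    rintro q ⟨hx, h1, h2⟩
    have A0 : 0 ≤ ∏ j, ∏ l, W (q.2.1 j) (q.2.2 l) :=
      Finset.prod_nonneg fun j _ => Finset.prod_nonneg fun l _ => (hWb _ (h1 j) _ (h2 l)).1
    have A1 : (∏ j, ∏ l, W (q.2.1 j) (q.2.2 l)) ≤ 1 :=
      Finset.prod_le_one (fun j _ => Finset.prod_nonneg fun l _ => (hWb _ (h1 j) _ (h2 l)).1)
        (fun j _ => Finset.prod_le_one (fun l _ => (hWb _ (h1 j) _ (h2 l)).1)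
          (fun l _ => (hWb _ (h1 j) _ (h2 l)).2.1))
    have B0 : 0 ≤ ∏ l, ∏ i, W (q.2.2 l) (q.1 i) :=
      Finset.prod_nonneg fun l _ => Finset.prod_nonneg fun i _ => (hWb _ (h2 l) _ (hx i)).1
    have B1 : (∏ l, ∏ i, W (q.2.2 l) (q.1 i)) ≤ 1 :=
      Finset.prod_le_one (fun l _ => Finset.prod_nonneg fun i _ => (hWb _ (h2 l) _ (hx i)).1)
        (fun l _ => Finset.prod_le_one (fun i _ => (hWb _ (h2 l) _ (hx i)).1)
          (fun i _ => (hWb _ (h2 l) _ (hx i)).2.1))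
    have C0 : 0 ≤ ∏ i, ∏ j, W (q.1 i) (q.2.1 j) :=
      Finset.prod_nonneg fun i _ => Finset.prod_nonneg fun j _ => (hWb _ (hx i) _ (h1 j)).1
    have C1 : (∏ i, ∏ j, W (q.1 i) (q.2.1 j)) ≤ 1 :=
      Finset.prod_le_one (fun i _ => Finset.prod_nonneg fun j _ => (hWb _ (hx i) _ (h1 j)).1)
        (fun i _ => Finset.prod_le_one (fun j _ => (hWb _ (hx i) _ (h1 j)).1)
          (fun j _ => (hWb _ (hx i) _ (h1 j)).2.1))
    exact ⟨mul_nonneg A0 (mul_nonneg B0 C0),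
      mul_le_one₀ A1 (mul_nonneg B0 C0) (mul_le_one₀ B1 C0 C1)⟩
  have haeH : ∀ᵐ q ∂(R.prod (P.prod Q)),
      q ∈ {q : (Fin k → ℝ) × ((Fin a → ℝ) × (Fin b → ℝ)) |
        (∀ i, q.1 i ∈ I01) ∧ (∀ j, q.2.1 j ∈ I01) ∧ (∀ l, q.2.2 l ∈ I01)} := by
    have h2 := ae_prod_mem P Q (MeasurableSet.univ_pi fun _ => hI01meas)
      (MeasurableSet.univ_pi fun _ => hI01meas)
      (by rw [hP]; exact pi_full μ hI01full a) (by rw [hQ]; exact pi_full μ hI01full b)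
    have h3 : (P.prod Q) ((Set.pi Set.univ fun _ => I01) ×ˢ (Set.pi Set.univ fun _ => I01)) = 1 := by
      rw [Measure.prod_prod, (by rw [hP]; exact pi_full μ hI01full a :
          P (Set.pi Set.univ fun _ => I01) = 1),
        (by rw [hQ]; exact pi_full μ hI01full b : Q (Set.pi Set.univ fun _ => I01) = 1), one_mul]
    have := ae_prod_mem R (P.prod Q) (MeasurableSet.univ_pi fun _ => hI01meas)
      ((MeasurableSet.univ_pi fun _ => hI01meas).prod (MeasurableSet.univ_pi fun _ => hI01meas))
      (by rw [hR]; exact pi_full μ hI01full k) h3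
    filter_upwards [this] with q hq
    exact ⟨fun i => hq.1 i (Set.mem_univ i), fun j => hq.2.1 j (Set.mem_univ j),
      fun l => hq.2.2 l (Set.mem_univ l)⟩
  have hHBF := box_facts (R.prod (P.prod Q)) haeH hHm.aestronglyMeasurable hbox
  -- the coordinate-assembling map
  set Ψ : ((Fin k → ℝ) × ((Fin a → ℝ) × (Fin b → ℝ))) → (CV a b k → ℝ) := fun q =>
    Sum.elim q.2.1 (Sum.elim q.2.2 q.1) with hΨ
  have hΨm : Measurable Ψ := by
    refine measurable_pi_lambda _ fun v => ?_
    rcases v with j | l | i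
    · exact (measurable_pi_apply j).comp (measurable_fst.comp measurable_snd)
    · exact (measurable_pi_apply l).comp (measurable_snd.comp measurable_snd)
    · exact (measurable_pi_apply i).comp measurable_fst
  have hΨmp : MeasurePreserving Ψ (R.prod (P.prod Q)) (Measure.pi (fun _ : CV a b k => μ)) := by
    refine ⟨hΨm, ?_⟩
    refine (Measure.pi_eq fun s hs => ?_).symm
    rw [Measure.map_apply hΨm (MeasurableSet.univ_pi hs)]
    have hpre : Ψ ⁻¹' (Set.pi Set.univ s)
        = (Set.pi Set.univ fun i => s (.inr (.inr i))) ×ˢ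
          ((Set.pi Set.univ fun j => s (.inl j)) ×ˢ
           (Set.pi Set.univ fun l => s (.inr (.inl l)))) := by
      ext q
      simp only [hΨ, Set.mem_preimage, Set.mem_pi, Set.mem_prod, Set.mem_univ, true_implies,
        Sum.forall, Sum.elim_inl, Sum.elim_inr]
      tauto
    rw [hpre, Measure.prod_prod, Measure.prod_prod, hR, hP, hQ,
      Measure.pi_pi, Measure.pi_pi, Measure.pi_pi, Fintype.prod_sum_type]
    simp only [Fintype.prod_sum_type]
    ring
  -- rewrite homDensity
  have hGm : Measurable (fun x' : CV a b k → ℝ =>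
      (∏ j : Fin a, ∏ l : Fin b, W (x' (.inl j)) (x' (.inr (.inl l)))) *
      ((∏ l : Fin b, ∏ i : Fin k, W (x' (.inr (.inl l))) (x' (.inr (.inr i)))) *
       (∏ i : Fin k, ∏ j : Fin a, W (x' (.inr (.inr i))) (x' (.inl j))))) := by
    refine Measurable.mul ?_ (Measurable.mul ?_ ?_)
    · exact Finset.measurable_prod _ fun j _ => Finset.measurable_prod _ fun l _ =>
        hWcomp hWm (measurable_pi_apply _) (measurable_pi_apply _)
    · exact Finset.measurable_prod _ fun l _ => Finset.measurable_prod _ fun i _ =>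
        hWcomp hWm (measurable_pi_apply _) (measurable_pi_apply _)
    · exact Finset.measurable_prod _ fun i _ => Finset.measurable_prod _ fun j _ =>
        hWcomp hWm (measurable_pi_apply _) (measurable_pi_apply _)
  have hhd : homDensity (CEdge a b k) W = ∫ x, ∫ p, H (x, p) ∂(P.prod Q) ∂ R := by
    classical
    rw [homDensity]
    calc (∫ x' in Set.univ.pi (fun _ : CV a b k => I01),
            ∏ p ∈ Finset.univ.filter (fun p : CV a b k × CV a b k => CEdge a b k p.1 p.2),
              W (x' p.1) (x' p.2))
        = ∫ x' in Set.univ.pi (fun _ : CV a b k => I01),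
            (∏ j : Fin a, ∏ l : Fin b, W (x' (.inl j)) (x' (.inr (.inl l)))) *
            ((∏ l : Fin b, ∏ i : Fin k, W (x' (.inr (.inl l))) (x' (.inr (.inr i)))) *
             (∏ i : Fin k, ∏ j : Fin a, W (x' (.inr (.inr i))) (x' (.inl j)))) := by
          refine integral_congr_ae (Filter.Eventually.of_forall fun x' => ?_)
          exact prod_CEdge a b k (fun u v => W (x' u) (x' v))
      _ = ∫ x', (∏ j : Fin a, ∏ l : Fin b, W (x' (.inl j)) (x' (.inr (.inl l)))) *
            ((∏ l : Fin b, ∏ i : Fin k, W (x' (.inr (.inl l))) (x' (.inr (.inr i)))) *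
             (∏ i : Fin k, ∏ j : Fin a, W (x' (.inr (.inr i))) (x' (.inl j))))
            ∂(Measure.pi (fun _ : CV a b k => μ)) := by
          rw [pi_restrict_eq (CV a b k)]
      _ = ∫ q, H q ∂(R.prod (P.prod Q)) := by
          rw [← hΨmp.map_eq, integral_map hΨm.aemeasurable hGm.aestronglyMeasurable]
          refine integral_congr_ae (Filter.Eventually.of_forall fun q => ?_)
          simp only [hΨ, hH, Sum.elim_inl, Sum.elim_inr]
      _ = ∫ x, ∫ p, H (x, p) ∂(P.prod Q) ∂ R := integral_prod _ hHBF.1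
  rw [hhd, show (Set.univ.pi (fun _ : Fin k => I01) : Set (Fin k → ℝ)) = Set.univ.pi (fun _ : Fin k => I01) from rfl]
  have hLHS : (∫ x in Set.univ.pi (fun _ : Fin k => I01),
      Nplus W k x ^ a * Dk W k x ^ (a * b) * Nminus W k x ^ b)
      = ∫ x, Nplus W k x ^ a * Dk W k x ^ (a * b) * Nminus W k x ^ b ∂ R := by
    rw [hR, ← pi_restrict_eq (Fin k)]
  rw [hLHS]
  -- pointwise comparison
  refine integral_mono_of_nonneg ?_ ?_ ?_
  · filter_upwards [hRae] with x hx
    have hNp0 : 0 ≤ Nplus W k x := by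
      refine integral_nonneg_of_ae ?_
      filter_upwards [hμae] with t ht
      exact Finset.prod_nonneg fun i _ => (hWb _ (hx i) _ ht).1
    have hNm0 : 0 ≤ Nminus W k x := by
      refine integral_nonneg_of_ae ?_
      filter_upwards [hμae] with t ht
      exact Finset.prod_nonneg fun i _ => (hWb _ ht _ (hx i)).1
    have hD0 : 0 ≤ Dk W k x := by
      rw [Dk]
      split_ifs with hc
      · refine div_nonneg ?_ (le_of_lt (mul_pos hc.1 hc.2))
        refine integral_nonneg_of_ae ?_
        filter_upwards [hμae] with s hs
        refine integral_nonneg_of_ae ?_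
        filter_upwards [hμae] with t ht
        exact mul_nonneg (hWb _ hs _ ht).1 (Finset.prod_nonneg fun i _ =>
          mul_nonneg (hWb _ (hx i) _ hs).1 (hWb _ ht _ (hx i)).1)
      · exact le_refl 0
    positivity
  · -- integrability of the inner double integral
    have hm : Measurable fun x : Fin k → ℝ => ∫ p, H (x, p) ∂(P.prod Q) :=
      hHm.stronglyMeasurable.integral_prod_right'.measurable
    refine integrable_bdd hm.aestronglyMeasurable ?_
    filter_upwards [hRae] with x hx
    have hPQae : ∀ᵐ p ∂(P.prod Q),
        p ∈ {p : (Fin a → ℝ) × (Fin b → ℝ) | (∀ j, p.1 j ∈ I01) ∧ (∀ l, p.2 l ∈ I01)} := by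
      have := ae_prod_mem P Q (MeasurableSet.univ_pi fun _ => hI01meas)
        (MeasurableSet.univ_pi fun _ => hI01meas)
        (by rw [hP]; exact pi_full μ hI01full a) (by rw [hQ]; exact pi_full μ hI01full b)
      filter_upwards [this] with p hp
      exact ⟨fun j => hp.1 j (Set.mem_univ j), fun l => hp.2 l (Set.mem_univ l)⟩
    have := box_facts (P.prod Q) hPQae (φ := fun p => H (x, p))
      (hHm.comp (measurable_prodMk_left)).aestronglyMeasurable
      (fun p hp => hbox (x, p) ⟨hx, hp.1, hp.2⟩)
    rw [Real.norm_eq_abs, abs_le]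
    exact ⟨by linarith [this.2.1], this.2.2⟩
  · filter_upwards [hRae] with x hx
    exact keyC W ⟨hWm, hWb⟩ a b k ha hb x hx

end
end

section
/- Let H be a finite simple digraph containing an independent set A of vertices that are pairwise twins, and let H' be the digraph obtained from H by adding a transitive tournament on the vertex set A. Then for every tournamenton W it holds that t(H', W) ≥ 2^(-(|A| choose 2)) · t(H, W). -/
set_option maxHeartbeats 1000000


open MeasureTheory

noncomputable section

/-! Auxiliary -/

open scoped ENNReal

def UU (W : ℝ → ℝ → ℝ) (z y : ℝ) : ℝ≥0∞ := min 1 (ENNReal.ofReal (W z y))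

def nuI : Measure ℝ := volume.restrict I01

instance : IsProbabilityMeasure nuI :=
  ⟨by simp [nuI, I01, Real.volume_Icc]⟩

open scoped Classical in
def FF {V : Type} [Fintype V] (E : V → V → Prop) (W : ℝ → ℝ → ℝ) : (V → ℝ) → ℝ≥0∞ :=
  fun x => ∏ p ∈ Finset.univ.filter (fun p : V × V => E p.1 p.2), UU W (x p.1) (x p.2)

def LL {V : Type} [Fintype V] (E : V → V → Prop) (W : ℝ → ℝ → ℝ) : ℝ≥0∞ :=
  ∫⁻ x, FF E W x ∂(Measure.pi fun _ : V => nuI)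

lemma mUU {W : ℝ → ℝ → ℝ} (hW : IsTournamenton W) :
    Measurable (fun q : ℝ × ℝ => UU W q.1 q.2) :=
  measurable_const.min (ENNReal.measurable_ofReal.comp hW.1)

lemma measSet_I01 : MeasurableSet I01 := measurableSet_Icc

lemma UU_le_one (W : ℝ → ℝ → ℝ) (z y : ℝ) : UU W z y ≤ 1 := min_le_left _ _

lemma mFF {V : Type} [Fintype V] (E : V → V → Prop) {W : ℝ → ℝ → ℝ}
    (hW : IsTournamenton W) : Measurable (FF E W) := by
  classical
  refine Finset.measurable_prod _ fun p _ => ?_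
  exact (mUU hW).comp (((measurable_pi_apply p.1).prodMk (measurable_pi_apply p.2)) :
    Measurable fun x : V → ℝ => (x p.1, x p.2))

lemma FF_le_one {V : Type} [Fintype V] (E : V → V → Prop) (W : ℝ → ℝ → ℝ) (x : V → ℝ) :
    FF E W x ≤ 1 := by
  classical
  exact Finset.prod_le_one (fun p _ => zero_le) (fun p _ => UU_le_one W _ _)

lemma pi_nuI_eq {V : Type} [Fintype V] :
    (Measure.pi fun _ : V => nuI)
      = (volume : Measure (V → ℝ)).restrict (Set.univ.pi fun _ => I01) := by
  refine Measure.pi_eq fun s hs => ?_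
  rw [Measure.restrict_apply (MeasurableSet.univ_pi hs), ← Set.pi_inter_distrib,
    volume_pi, Measure.pi_pi]
  simp only [nuI]
  congr 1
  ext i
  rw [Measure.restrict_apply (hs i)]

lemma ae_box {V : Type} [Fintype V] :
    ∀ᵐ x ∂(Measure.pi fun _ : V => nuI), ∀ v, x v ∈ I01 := by
  have h1 : (Measure.pi fun _ : V => nuI) (Set.univ.pi fun _ => I01) = 1 := by
    rw [Measure.pi_pi]
    simp [nuI, I01, Real.volume_Icc]
  have h2 : (Measure.pi fun _ : V => nuI) (Set.univ.pi fun _ : V => I01)ᶜ = 0 := by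
    rw [measure_compl (MeasurableSet.univ_pi fun _ => measSet_I01) (by simp), h1]
    simp
  rw [ae_iff]
  convert h2 using 2
  ext x
  simp [Set.mem_pi]

lemma hd_eq {V : Type} [Fintype V] (E : V → V → Prop) {W : ℝ → ℝ → ℝ}
    (hW : IsTournamenton W) : homDensity E W = (LL E W).toReal := by
  classical
  rw [homDensity, ← pi_nuI_eq]
  rw [integral_eq_lintegral_of_nonneg_ae]
  · congr 1
    refine lintegral_congr_ae ?_
    filter_upwards [ae_box] with x hx
    rw [ENNReal.ofReal_prod_of_nonneg (fun p _ => (hW.2 _ (hx p.1) _ (hx p.2)).1)]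
    refine Finset.prod_congr rfl fun p _ => ?_
    have h01 := hW.2 _ (hx p.1) _ (hx p.2)
    rw [UU, min_eq_right]
    exact ENNReal.ofReal_le_one.2 h01.2.1
  · filter_upwards [ae_box] with x hx
    exact Finset.prod_nonneg fun p _ => (hW.2 _ (hx p.1) _ (hx p.2)).1
  · refine (Finset.measurable_prod _ fun p _ => ?_).aestronglyMeasurable
    have := hW.1.comp ((measurable_pi_apply p.1).prodMk (measurable_pi_apply p.2) :
      Measurable fun x : V → ℝ => (x p.1, x p.2))
    exact this

lemma LL_le_one {V : Type} [Fintype V] (E : V → V → Prop) (W : ℝ → ℝ → ℝ) :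
    LL E W ≤ 1 := by
  calc LL E W ≤ ∫⁻ _, 1 ∂(Measure.pi fun _ : V => nuI) :=
        lintegral_mono fun x => FF_le_one E W x
    _ = 1 := by simp

open Finset in
lemma lmarg_prod {V : Type} [Fintype V] [DecidableEq V]
    (g : ℝ → (V → ℝ) → ℝ≥0∞)
    (hg : Measurable (fun q : ℝ × (V → ℝ) => g q.1 q.2))
    (s : Finset V) (p : (V → ℝ) → ℝ≥0∞)
    (hp : Measurable p)
    (hps : ∀ x y a, a ∈ s → p (Function.update x a y) = p x)
    (hgs : ∀ z x y a, a ∈ s → g z (Function.update x a y) = g z x) :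
    (∫⋯∫⁻_s, (fun x => p x * ∏ a ∈ s, g (x a) x) ∂(fun _ => nuI))
      = fun x => p x * (∫⁻ z, g z x ∂nuI) ^ s.card := by
  classical
  induction s using Finset.induction generalizing p with
  | empty => simp
  | @insert i s hi ih =>
    have hga : ∀ a : V, Measurable fun x : V → ℝ => g (x a) x :=
      fun a => hg.comp (((measurable_pi_apply a).prodMk measurable_id) :
        Measurable fun x : V → ℝ => (x a, x))
    have hgx : ∀ x : V → ℝ, Measurable fun z => g z x :=
      fun x => hg.comp ((measurable_id.prodMk measurable_const) :
        Measurable fun z : ℝ => (z, x))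
    have hmeas : Measurable fun x => p x * ∏ a ∈ insert i s, g (x a) x :=
      hp.mul (Finset.measurable_prod _ fun a _ => hga a)
    funext x
    rw [lmarginal_insert _ hmeas hi x]
    have hre : (fun x => p x * ∏ a ∈ insert i s, g (x a) x)
        = fun x => (p x * g (x i) x) * ∏ a ∈ s, g (x a) x := by
      funext y
      rw [Finset.prod_insert hi, mul_assoc]
    rw [hre]
    rw [ih (fun x => p x * g (x i) x) (hp.mul (hga i))
      (fun x y a ha => by
        have hai : a ≠ i := by rintro rfl; exact hi ha
        show p (Function.update x a y) * g (Function.update x a y i) (Function.update x a y)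
          = p x * g (x i) x
        rw [hps x y a (Finset.mem_insert_of_mem ha), Function.update_of_ne (Ne.symm hai),
          hgs (x i) x y a (Finset.mem_insert_of_mem ha)])
      (fun z x y a ha => hgs z x y a (Finset.mem_insert_of_mem ha))]
    have hint : ∀ xi : ℝ,
        (p (Function.update x i xi) * g (Function.update x i xi i) (Function.update x i xi))
          * (∫⁻ z, g z (Function.update x i xi) ∂nuI) ^ s.card
        = (p x * (∫⁻ z, g z x ∂nuI) ^ s.card) * g xi x := by
      intro xi
      have h1 : p (Function.update x i xi) = p x := hps x xi i (Finset.mem_insert_self i s)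
      have h2 : ∀ z, g z (Function.update x i xi) = g z x :=
        fun z => hgs z x xi i (Finset.mem_insert_self i s)
      rw [h1, Function.update_self, h2]
      have h3 : (∫⁻ z, g z (Function.update x i xi) ∂nuI) = ∫⁻ z, g z x ∂nuI :=
        lintegral_congr fun z => h2 z
      rw [h3]
      ring
    simp only [hint]
    rw [lintegral_const_mul _ (hgx x), Finset.card_insert_of_notMem hi, pow_succ]
    ring

lemma core_ineq (Φ : ℝ → ℝ≥0∞) (hΦm : Measurable Φ) (hΦ1 : ∀ z, Φ z ≤ 1)
    (u : ℝ → ℝ → ℝ≥0∞) (hum : Measurable (fun q : ℝ × ℝ => u q.1 q.2))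
    (huT : ∀ z ∈ I01, ∀ y ∈ I01, u z y + u y z = 1) (n : ℕ) :
    (∫⁻ z, Φ z ∂nuI) ^ (n + 1) ≤ 2 ^ n * ∫⁻ y, Φ y * (∫⁻ z, Φ z * u z y ∂nuI) ^ n ∂nuI := by
  set S := ∫⁻ z, Φ z ∂nuI with hS
  set d : ℝ → ℝ≥0∞ := fun y => ∫⁻ z, Φ z * u z y ∂nuI with hd
  have hum' : ∀ y, Measurable fun z => u z y :=
    fun y => hum.comp ((measurable_id.prodMk measurable_const) :
      Measurable fun z : ℝ => (z, y))
  have hdm : Measurable d := by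
    apply Measurable.lintegral_prod_right
    exact (hΦm.comp measurable_snd).mul
      (hum.comp ((measurable_snd.prodMk measurable_fst) :
        Measurable fun q : ℝ × ℝ => (q.2, q.1)))
  have hSle : S ≤ 1 := by
    have h := lintegral_mono (μ := nuI) (f := Φ) (g := fun _ => (1:ℝ≥0∞)) fun z => hΦ1 z
    simpa using h
  have hSne : S ≠ ⊤ := (lt_of_le_of_lt hSle (by norm_num)).ne
  rcases Nat.eq_zero_or_pos n with hn0 | hnpos
  · subst hn0
    simp [hS]
  set R := ∫⁻ y, Φ y * d y ^ n ∂nuI with hR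
  -- step 1: S * S = 2 * Q where Q = ∫ Φ d
  set Q := ∫⁻ y, Φ y * d y ∂nuI with hQdef
  have hae : ∀ᵐ z ∂nuI, z ∈ I01 := ae_restrict_mem measSet_I01
  have hQ1 : Q = ∫⁻ y, ∫⁻ z, Φ y * (Φ z * u z y) ∂nuI ∂nuI := by
    refine lintegral_congr fun y => ?_
    rw [lintegral_const_mul _ (show Measurable fun z => Φ z * u z y from hΦm.mul (hum' y))]
  have hQ2swap : (∫⁻ y, ∫⁻ z, Φ y * (Φ z * u y z) ∂nuI ∂nuI)
      = ∫⁻ y, ∫⁻ z, Φ y * (Φ z * u z y) ∂nuI ∂nuI := by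
    have hmeas : Measurable fun q : ℝ × ℝ => Φ q.1 * (Φ q.2 * u q.1 q.2) :=
      (hΦm.comp measurable_fst).mul ((hΦm.comp measurable_snd).mul hum)
    rw [lintegral_lintegral_swap hmeas.aemeasurable]
    refine lintegral_congr fun a => lintegral_congr fun b => by ring
  have hsum : (∫⁻ y, ∫⁻ z, Φ y * (Φ z * u z y) ∂nuI ∂nuI)
      + (∫⁻ y, ∫⁻ z, Φ y * (Φ z * u y z) ∂nuI ∂nuI) = S * S := by
    rw [← lintegral_add_left]
    · have : ∀ᵐ y ∂nuI,
          (∫⁻ z, Φ y * (Φ z * u z y) ∂nuI) + (∫⁻ z, Φ y * (Φ z * u y z) ∂nuI)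
            = Φ y * S := by
        filter_upwards [hae] with y hy
        rw [← lintegral_add_left]
        · have : ∀ᵐ z ∂nuI, Φ y * (Φ z * u z y) + Φ y * (Φ z * u y z) = Φ y * Φ z := by
            filter_upwards [hae] with z hz
            rw [← mul_add, ← mul_add, huT z hz y hy, mul_one]
          rw [lintegral_congr_ae this, lintegral_const_mul _ hΦm]
        · exact (measurable_const.mul (hΦm.mul (hum' y)))
      rw [lintegral_congr_ae this, lintegral_mul_const _ hΦm]
    · apply Measurable.lintegral_prod_right
      exact (hΦm.comp measurable_fst).mul
        ((hΦm.comp measurable_snd).mul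
          (hum.comp ((measurable_snd.prodMk measurable_fst) :
            Measurable fun q : ℝ × ℝ => (q.2, q.1))))
  have hSS : S * S = 2 * Q := by
    rw [two_mul]
    rw [hQ1]
    rw [← hsum, hQ2swap]
  -- step 2 : Hoelder
  have hHolder : Q ^ n ≤ S ^ (n - 1) * R := by
    rcases eq_or_lt_of_le (Nat.one_le_iff_ne_zero.mpr hnpos.ne') with hn1 | hn2
    · obtain rfl : n = 1 := hn1.symm
      simp [hQdef, hR]
    · -- n ≥ 2
      have hn1R : (1 : ℝ) < (n : ℝ) := by exact_mod_cast hn2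
      have hpq : ((n : ℝ)).HolderConjugate ((n : ℝ) / ((n : ℝ) - 1)) :=
        Real.HolderConjugate.conjExponent hn1R
      have hnne : (n : ℝ) ≠ 0 := by positivity
      have hsub0 : (0:ℝ) ≤ (n : ℝ) - 1 := by linarith
      have hsubne : (n : ℝ) - 1 ≠ 0 := by linarith
      set f : ℝ → ℝ≥0∞ := fun y => (Φ y) ^ ((1 : ℝ)/(n : ℝ)) * d y with hf
      set g : ℝ → ℝ≥0∞ := fun y => (Φ y) ^ (((n : ℝ) - 1)/(n : ℝ)) with hgdef
      have hfg : ∀ y, (f * g) y = Φ y * d y := by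
        intro y
        simp only [f, g, Pi.mul_apply]
        rw [mul_comm ((Φ y) ^ ((1:ℝ)/(n:ℝ))) (d y), mul_assoc,
          ← ENNReal.rpow_add_of_nonneg _ _ (by positivity) (div_nonneg hsub0 (by positivity))]
        have : (1 : ℝ)/(n : ℝ) + ((n : ℝ) - 1)/(n : ℝ) = 1 := by field_simp; ring
        rw [this, ENNReal.rpow_one, mul_comm]
      have hfm : AEMeasurable f nuI := ((hΦm.pow_const _).mul hdm).aemeasurable
      have hgm : AEMeasurable g nuI := (hΦm.pow_const _).aemeasurable
      have H := ENNReal.lintegral_mul_le_Lp_mul_Lq nuI hpq hfm hgm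
      have hfp : ∀ y, f y ^ (n : ℝ) = Φ y * d y ^ n := by
        intro y
        rw [hf]
        rw [ENNReal.mul_rpow_of_nonneg _ _ (by positivity : (0:ℝ) ≤ (n:ℝ)),
          ← ENNReal.rpow_mul, one_div_mul_cancel hnne, ENNReal.rpow_one,
          ENNReal.rpow_natCast]
      have hgq : ∀ y, g y ^ ((n : ℝ)/((n : ℝ) - 1)) = Φ y := by
        intro y
        rw [hgdef, ← ENNReal.rpow_mul]
        have : ((n : ℝ) - 1)/(n : ℝ) * ((n : ℝ)/((n : ℝ) - 1)) = 1 := by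
          field_simp
        rw [this, ENNReal.rpow_one]
      simp only [hfg, hfp, hgq] at H
      -- H : Q ≤ R ^ (1/n) * S ^ (1/(n/(n-1)))
      have hQle : Q ≤ R ^ ((1:ℝ)/(n:ℝ)) * S ^ (((n:ℝ) - 1)/(n:ℝ)) := by
        rw [hQdef]
        convert H using 3
        rw [one_div_div]
      calc Q ^ n ≤ (R ^ ((1:ℝ)/(n:ℝ)) * S ^ (((n:ℝ) - 1)/(n:ℝ))) ^ n :=
            pow_le_pow_left' hQle n
        _ = R * S ^ ((n:ℕ) - 1) := by
            rw [← ENNReal.rpow_natCast (R ^ ((1:ℝ)/(n:ℝ)) * S ^ (((n:ℝ) - 1)/(n:ℝ))) n,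
              ENNReal.mul_rpow_of_nonneg _ _ (by positivity : (0:ℝ) ≤ (n:ℝ)),
              ← ENNReal.rpow_mul, ← ENNReal.rpow_mul,
              one_div_mul_cancel hnne, ENNReal.rpow_one]
            congr 1
            have : ((n : ℝ) - 1)/(n : ℝ) * (n : ℝ) = ((n : ℕ) - 1 : ℕ) := by
              push_cast [Nat.cast_sub (Nat.one_le_iff_ne_zero.mpr hnpos.ne')]
              field_simp
            rw [this, ENNReal.rpow_natCast]
        _ = S ^ (n - 1) * R := mul_comm _ _
  -- combine
  by_cases hS0 : S = 0
  · rw [hS0]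
    simp
  · have h2n : S ^ (2 * n) = S ^ (n - 1) * S ^ (n + 1) := by
      rw [← pow_add]
      congr 1
      omega
    have hmain : S ^ (n - 1) * S ^ (n + 1) ≤ S ^ (n - 1) * (2 ^ n * R) := by
      calc S ^ (n - 1) * S ^ (n + 1) = (S * S) ^ n := by
            rw [← h2n, pow_mul, pow_two]
        _ = 2 ^ n * Q ^ n := by rw [hSS, mul_pow]
        _ ≤ 2 ^ n * (S ^ (n - 1) * R) := mul_le_mul_right hHolder _
        _ = S ^ (n - 1) * (2 ^ n * R) := by ring
    exact (ENNReal.mul_le_mul_iff_right (pow_ne_zero _ hS0)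
      (ENNReal.pow_ne_top hSne)).mp hmain

lemma UU_tourn {W : ℝ → ℝ → ℝ} (hW : IsTournamenton W) :
    ∀ z ∈ I01, ∀ y ∈ I01, UU W z y + UU W y z = 1 := by
  intro z hz y hy
  obtain ⟨h0, h1, hT⟩ := hW.2 z hz y hy
  obtain ⟨h0', h1', _⟩ := hW.2 y hy z hz
  rw [UU, UU, min_eq_right (ENNReal.ofReal_le_one.2 h1),
    min_eq_right (ENNReal.ofReal_le_one.2 h1'), ← ENNReal.ofReal_add h0 h0', hT]
  exact ENNReal.ofReal_one

lemma lmarginal_cmul {V : Type} [Fintype V] [DecidableEq V] (s : Finset V) (c : ℝ≥0∞)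
    (f : (V → ℝ) → ℝ≥0∞) (hf : Measurable f) :
    (∫⋯∫⁻_s, (fun x => c * f x) ∂(fun _ => nuI))
      = fun x => c * (∫⋯∫⁻_s, f ∂(fun _ => nuI)) x := by
  funext x
  rw [lmarginal, lmarginal, lintegral_const_mul]
  exact hf.comp measurable_updateFinset

open Finset in
lemma prod_filter_or_disj {α : Type} [Fintype α] [DecidableEq α] (p q : α → Prop) [DecidablePred p]
    [DecidablePred q] [DecidablePred fun a => p a ∨ q a]
    (hd : ∀ a, p a → ¬ q a) (f : α → ℝ≥0∞) :
    ∏ a ∈ univ.filter (fun a => p a ∨ q a), f a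
      = (∏ a ∈ univ.filter p, f a) * ∏ a ∈ univ.filter q, f a := by
  have hsplit : univ.filter (fun a => p a ∨ q a) = univ.filter p ∪ univ.filter q := by
    ext a
    simp [Finset.mem_union]
  have hdisj : Disjoint (univ.filter p) (univ.filter q) := by
    rw [Finset.disjoint_left]
    intro a ha ha'
    exact hd a (mem_filter.mp ha).2 (mem_filter.mp ha').2
  rw [hsplit, Finset.prod_union hdisj]

open Finset in
lemma stepL {V : Type} [Fintype V] [DecidableEq V] (E : V → V → Prop) (A : Finset V)
    (b : V) (hb : b ∈ A)
    (hIndep : ∀ u ∈ A, ∀ v ∈ A, ¬ E u v)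
    (hTwins : ∀ u ∈ A, ∀ v ∈ A, ∀ w : V, (E u w ↔ E v w) ∧ (E w u ↔ E w v))
    {W : ℝ → ℝ → ℝ} (hW : IsTournamenton W) :
    LL E W ≤ 2 ^ (A.erase b).card
      * LL (fun u v => E u v ∨ (u ∈ A.erase b ∧ v = b)) W := by
  classical
  set A' := A.erase b with hA'
  set n := A'.card with hn
  set Estar : V → V → Prop := fun u v => E u v ∨ (u ∈ A' ∧ v = b) with hEstar
  -- basic auxiliary functions
  set φ : ℝ → (V → ℝ) → ℝ≥0∞ := fun z x =>
    (∏ w ∈ univ.filter (fun w => E b w), UU W z (x w)) *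
    (∏ w ∈ univ.filter (fun w => E w b), UU W (x w) z) with hφ
  set Cc : (V → ℝ) → ℝ≥0∞ := fun x =>
    ∏ p ∈ univ.filter (fun p : V × V => E p.1 p.2 ∧ p.1 ∉ A ∧ p.2 ∉ A),
      UU W (x p.1) (x p.2) with hCc
  have hout_notA : ∀ w, E b w → w ∉ A := fun w hw hwA => hIndep b hb w hwA hw
  have hin_notA : ∀ w, E w b → w ∉ A := fun w hw hwA => hIndep w hwA b hb hw
  -- measurability of building blocks
  have hφm : Measurable (fun q : ℝ × (V → ℝ) => φ q.1 q.2) := by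
    refine Measurable.mul ?_ ?_
    · refine Finset.measurable_prod _ fun w _ => ?_
      exact (mUU hW).comp ((measurable_fst.prodMk
        ((measurable_pi_apply w).comp measurable_snd)) :
        Measurable fun q : ℝ × (V → ℝ) => (q.1, q.2 w))
    · refine Finset.measurable_prod _ fun w _ => ?_
      exact (mUU hW).comp ((((measurable_pi_apply w).comp measurable_snd).prodMk
        measurable_fst) : Measurable fun q : ℝ × (V → ℝ) => (q.2 w, q.1))
  have hφmx : ∀ x : V → ℝ, Measurable fun z => φ z x := fun x =>
    hφm.comp ((measurable_id.prodMk measurable_const) :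
      Measurable fun z : ℝ => (z, x))
  have hCm : Measurable Cc := by
    refine Finset.measurable_prod _ fun p _ => ?_
    exact (mUU hW).comp (((measurable_pi_apply p.1).prodMk (measurable_pi_apply p.2)) :
      Measurable fun x : V → ℝ => (x p.1, x p.2))
  -- invariance under updates at coordinates in A
  have hφinv : ∀ (z : ℝ) (x : V → ℝ) (y : ℝ) (a : V), a ∈ A →
      φ z (Function.update x a y) = φ z x := by
    intro z x y a ha
    rw [hφ]
    simp only
    congr 1
    · refine Finset.prod_congr rfl fun w hw => ?_
      have : w ≠ a := fun h => hout_notA w (by simpa using (mem_filter.mp hw).2) (h ▸ ha)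
      rw [Function.update_of_ne this]
    · refine Finset.prod_congr rfl fun w hw => ?_
      have : w ≠ a := fun h => hin_notA w (by simpa using (mem_filter.mp hw).2) (h ▸ ha)
      rw [Function.update_of_ne this]
  have hCinv : ∀ (x : V → ℝ) (y : ℝ) (a : V), a ∈ A →
      Cc (Function.update x a y) = Cc x := by
    intro x y a ha
    rw [hCc]
    simp only
    refine Finset.prod_congr rfl fun p hp => ?_
    obtain ⟨-, h1, h2⟩ := (mem_filter.mp hp).2
    rw [Function.update_of_ne (fun h => h1 (by rw [h]; exact ha)),
      Function.update_of_ne (fun h => h2 (by rw [h]; exact ha))]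
  have hφ1 : ∀ z x, φ z x ≤ 1 := by
    intro z x
    rw [hφ]
    simp only
    refine mul_le_one' ?_ ?_ <;>
      exact Finset.prod_le_one (fun _ _ => zero_le) (fun _ _ => UU_le_one W _ _)
  -- the factorization of FF E W
  have hfact : ∀ x : V → ℝ, FF E W x = Cc x * ∏ a ∈ A, φ (x a) x := by
    intro x
    rw [FF]
    rw [← Finset.prod_filter_mul_prod_filter_not (univ.filter fun p : V × V => E p.1 p.2)
      (fun p => p.1 ∈ A) (fun p => UU W (x p.1) (x p.2))]
    rw [← Finset.prod_filter_mul_prod_filter_not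
      ((univ.filter fun p : V × V => E p.1 p.2).filter (fun p => p.1 ∉ A))
      (fun p => p.2 ∈ A) (fun p => UU W (x p.1) (x p.2))]
    have hS1 : (univ.filter fun p : V × V => E p.1 p.2).filter (fun p => p.1 ∈ A)
        = (A ×ˢ univ).filter (fun p : V × V => E p.1 p.2) := by
      ext p
      simp only [mem_filter, mem_univ, true_and, mem_product, and_true]
      tauto
    have hS2 : ((univ.filter fun p : V × V => E p.1 p.2).filter (fun p => p.1 ∉ A)).filter
          (fun p => p.2 ∈ A)
        = (univ ×ˢ A).filter (fun p : V × V => E p.1 p.2) := by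
      ext p
      have hI : E p.1 p.2 → p.2 ∈ A → p.1 ∉ A := fun hE h2 h1 => hIndep _ h1 _ h2 hE
      simp only [mem_filter, mem_univ, true_and, mem_product]
      tauto
    have hS0 : (((univ.filter fun p : V × V => E p.1 p.2).filter (fun p => p.1 ∉ A)).filter
          (fun p => p.2 ∉ A))
        = univ.filter (fun p : V × V => E p.1 p.2 ∧ p.1 ∉ A ∧ p.2 ∉ A) := by
      ext p
      simp only [mem_filter, mem_univ, true_and]
      tauto
    have hT1 : ∏ p ∈ (univ.filter fun p : V × V => E p.1 p.2).filter (fun p => p.1 ∈ A),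
          UU W (x p.1) (x p.2)
        = ∏ a ∈ A, ∏ w ∈ univ.filter (fun w => E b w), UU W (x a) (x w) := by
      rw [hS1, Finset.prod_filter, Finset.prod_product]
      refine Finset.prod_congr rfl fun a ha => ?_
      rw [← Finset.prod_filter]
      refine Finset.prod_congr (Finset.filter_congr fun w _ => ?_) fun _ _ => rfl
      simpa using (hTwins a ha b hb w).1
    have hT2 : ∏ p ∈ ((univ.filter fun p : V × V => E p.1 p.2).filter
            (fun p => p.1 ∉ A)).filter (fun p => p.2 ∈ A), UU W (x p.1) (x p.2)
        = ∏ a ∈ A, ∏ w ∈ univ.filter (fun w => E w b), UU W (x w) (x a) := by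
      rw [hS2, Finset.prod_filter, Finset.prod_product_right]
      refine Finset.prod_congr rfl fun a ha => ?_
      rw [← Finset.prod_filter]
      refine Finset.prod_congr (Finset.filter_congr fun w _ => ?_) fun _ _ => rfl
      simpa using (hTwins a ha b hb w).2
    rw [hT1, hT2, hS0]
    simp only [hφ, hCc]
    rw [Finset.prod_mul_distrib]
    ring
  -- factorization of FF Estar
  have hstar : ∀ x : V → ℝ, FF (fun u v => E u v ∨ (u ∈ A' ∧ v = b)) W x
      = FF E W x * ∏ a ∈ A', UU W (x a) (x b) := by
    intro x
    simp only [FF]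
    beta_reduce
    rw [Finset.filter_congr_decidable]
    rw [prod_filter_or_disj (fun p : V × V => E p.1 p.2)
      (fun p : V × V => p.1 ∈ A' ∧ p.2 = b)
      (fun p hE hq => hIndep p.1 (Finset.mem_of_mem_erase hq.1) b hb (hq.2 ▸ hE))
      (fun p => UU W (x p.1) (x p.2))]
    congr 1
    have hsetB : (univ.filter fun p : V × V => p.1 ∈ A' ∧ p.2 = b) = A' ×ˢ {b} := by
      ext p
      simp only [mem_filter, mem_univ, true_and, mem_product, mem_singleton]
    refine (Finset.prod_congr hsetB fun _ _ => rfl).trans ?_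
    rw [Finset.prod_product]
    simp
  -- the degree functions
  set D : (V → ℝ) → ℝ≥0∞ := fun x => ∫⁻ z, φ z x ∂nuI with hD
  set Dstar : (V → ℝ) → ℝ → ℝ≥0∞ := fun x y => ∫⁻ z, φ z x * UU W z y ∂nuI with hDstar
  have hbA' : b ∉ A' := Finset.notMem_erase b A
  have hA : A = insert b A' := (Finset.insert_erase hb).symm
  have hφbm : Measurable fun x : V → ℝ => φ (x b) x :=
    hφm.comp (((measurable_pi_apply b).prodMk measurable_id) :
      Measurable fun x : V → ℝ => (x b, x))
  have hpm : Measurable fun x : V → ℝ => Cc x * φ (x b) x := hCm.mul hφbm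
  have hps : ∀ (x : V → ℝ) (y : ℝ) (a : V), a ∈ A' →
      (fun x => Cc x * φ (x b) x) (Function.update x a y)
        = (fun x => Cc x * φ (x b) x) x := by
    intro x y a ha
    simp only
    rw [hCinv x y a (Finset.mem_of_mem_erase ha),
      Function.update_of_ne (Finset.ne_of_mem_erase ha).symm,
      hφinv (x b) x y a (Finset.mem_of_mem_erase ha)]
  -- marginal over A of FF E W
  have hFFE : FF E W = fun x => (Cc x * φ (x b) x) * ∏ a ∈ A', φ (x a) x := by
    funext y
    rw [hfact y, hA, Finset.prod_insert hbA']
    simp only [hφ]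
    ring
  have hLold : ∀ x : V → ℝ, (∫⋯∫⁻_A, FF E W ∂(fun _ => nuI)) x
      = Cc x * D x ^ (n + 1) := by
    intro x
    rw [hA, lmarginal_insert _ (mFF E hW) hbA']
    have hmarg := lmarg_prod φ hφm A' (fun x => Cc x * φ (x b) x) hpm hps
      (fun z x y a ha => hφinv z x y a (Finset.mem_of_mem_erase ha))
    rw [hFFE, hmarg]
    have heval : ∀ y : ℝ,
        (fun x => Cc x * φ (x b) x) (Function.update x b y)
          * (∫⁻ z, φ z (Function.update x b y) ∂nuI) ^ A'.card
        = (Cc x * D x ^ n) * φ y x := by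
      intro y
      simp only
      rw [hCinv x y b hb, Function.update_self, hφinv y x y b hb]
      have : (∫⁻ z, φ z (Function.update x b y) ∂nuI) = D x :=
        lintegral_congr fun z => hφinv z x y b hb
      rw [this, ← hn]
      ring
    simp only [heval]
    rw [lintegral_const_mul _ (hφmx x), pow_succ]
    rw [hD]
    ring
  -- marginal over A of FF Estar W
  have hFFEs : FF (fun u v => E u v ∨ (u ∈ A' ∧ v = b)) W
      = fun x => (Cc x * φ (x b) x) * ∏ a ∈ A', (φ (x a) x * UU W (x a) (x b)) := by
    funext y
    rw [hstar y, hfact y, hA, Finset.prod_insert hbA']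
    simp only [hφ, Finset.prod_mul_distrib]
    ring
  have hgsm : Measurable (fun q : ℝ × (V → ℝ) => φ q.1 q.2 * UU W q.1 (q.2 b)) :=
    hφm.mul ((mUU hW).comp (f := fun q : ℝ × (V → ℝ) => (q.1, q.2 b)) ((measurable_fst.prodMk
      ((measurable_pi_apply b).comp measurable_snd)) :
      Measurable fun q : ℝ × (V → ℝ) => (q.1, q.2 b)))
  have hLnew : ∀ x : V → ℝ,
      (∫⋯∫⁻_A, FF (fun u v => E u v ∨ (u ∈ A' ∧ v = b)) W ∂(fun _ => nuI)) x
        = ∫⁻ y, (Cc x * φ y x) * Dstar x y ^ n ∂nuI := by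
    intro x
    rw [hA, lmarginal_insert _ (mFF _ hW) hbA']
    have hmarg := lmarg_prod (fun z x => φ z x * UU W z (x b)) hgsm A'
      (fun x => Cc x * φ (x b) x) hpm hps
      (fun z x y a ha => by
        rw [hφinv z x y a (Finset.mem_of_mem_erase ha),
          Function.update_of_ne (Finset.ne_of_mem_erase ha).symm])
    rw [hFFEs, hmarg]
    refine lintegral_congr fun y => ?_
    simp only
    rw [hCinv x y b hb, Function.update_self, hφinv y x y b hb]
    have : (∫⁻ z, φ z (Function.update x b y) * UU W z y ∂nuI) = Dstar x y := by
      refine lintegral_congr fun z => ?_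
      rw [hφinv z x y b hb]
    rw [this, ← hn]
  -- pointwise comparison of the marginals over A
  have hDsm : ∀ x : V → ℝ, Measurable fun y => Dstar x y := by
    intro x
    apply Measurable.lintegral_prod_right
    exact ((hφmx x).comp measurable_snd).mul
      ((mUU hW).comp (f := fun q : ℝ × ℝ => (q.2, q.1)) ((measurable_snd.prodMk measurable_fst) :
        Measurable fun q : ℝ × ℝ => (q.2, q.1)))
  have hpoint : ∀ x : V → ℝ, (∫⋯∫⁻_A, FF E W ∂(fun _ => nuI)) x
      ≤ 2 ^ n * (∫⋯∫⁻_A, FF (fun u v => E u v ∨ (u ∈ A' ∧ v = b)) W ∂(fun _ => nuI)) x := by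
    intro x
    rw [hLold x, hLnew x]
    have hre : ∀ y : ℝ, (Cc x * φ y x) * Dstar x y ^ n
        = Cc x * (φ y x * Dstar x y ^ n) := fun y => by ring
    simp only [hre]
    rw [lintegral_const_mul _ (show Measurable fun y => φ y x * Dstar x y ^ n from (hφmx x).mul ((hDsm x).pow_const n))]
    have hcore := core_ineq (fun z => φ z x) (hφmx x) (fun z => hφ1 z x)
      (fun z y => UU W z y) (mUU hW) (UU_tourn hW) n
    calc Cc x * D x ^ (n + 1) ≤ Cc x * (2 ^ n * ∫⁻ y, φ y x * Dstar x y ^ n ∂nuI) :=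
          mul_le_mul_right hcore (Cc x)
      _ = 2 ^ n * (Cc x * ∫⁻ y, φ y x * Dstar x y ^ n ∂nuI) := by ring
  -- assemble
  rw [LL, LL, lintegral_eq_lmarginal_univ (fun _ : V => (0:ℝ)),
    lintegral_eq_lmarginal_univ (fun _ : V => (0:ℝ))]
  have huniv : (univ : Finset V) = (univ \ A) ∪ A :=
    (Finset.sdiff_union_of_subset (Finset.subset_univ A)).symm
  rw [huniv, lmarginal_union _ _ (mFF E hW) Finset.sdiff_disjoint,
    lmarginal_union _ _ (mFF _ hW) Finset.sdiff_disjoint]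
  calc (∫⋯∫⁻_univ \ A, (∫⋯∫⁻_A, FF E W ∂(fun _ => nuI)) ∂(fun _ => nuI)) (fun _ => 0)
      ≤ (∫⋯∫⁻_univ \ A, (fun x => 2 ^ n *
          (∫⋯∫⁻_A, FF (fun u v => E u v ∨ (u ∈ A' ∧ v = b)) W ∂(fun _ => nuI)) x)
            ∂(fun _ => nuI)) (fun _ => 0) :=
        lmarginal_mono (fun x => hpoint x) _
    _ = 2 ^ n * (∫⋯∫⁻_univ \ A,
          (∫⋯∫⁻_A, FF (fun u v => E u v ∨ (u ∈ A' ∧ v = b)) W ∂(fun _ => nuI))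
            ∂(fun _ => nuI)) (fun _ => 0) := by
        rw [lmarginal_cmul]
        exact Measurable.lmarginal _ (mFF _ hW)

open Finset in
lemma mainL {V : Type} [Fintype V] [DecidableEq V] (m : ℕ) :
    ∀ (A : Finset V) (E : V → V → Prop), A.card = m →
    (∀ u ∈ A, ∀ v ∈ A, ¬ E u v) →
    (∀ u ∈ A, ∀ v ∈ A, ∀ w : V, (E u w ↔ E v w) ∧ (E w u ↔ E w v)) →
    ∀ (ord : V → ℕ), Function.Injective ord →
    ∀ {W : ℝ → ℝ → ℝ}, IsTournamenton W →
    LL E W ≤ 2 ^ (m.choose 2)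
      * LL (fun u v => E u v ∨ (u ∈ A ∧ v ∈ A ∧ ord u < ord v)) W := by
  induction m with
  | zero =>
    intro A E hcard hIndep hTwins ord hord W hW
    have hA : A = ∅ := Finset.card_eq_zero.mp hcard
    subst hA
    have hrel : (fun u v => E u v ∨ (u ∈ (∅ : Finset V) ∧ v ∈ (∅ : Finset V)
        ∧ ord u < ord v)) = E := by
      funext u v
      apply propext
      simp
    rw [hrel]
    simp
  | succ m ih =>
    intro A E hcard hIndep hTwins ord hord W hW
    have hne : A.Nonempty := by
      rw [← Finset.card_pos, hcard]
      omega
    obtain ⟨b, hb, hmax⟩ := Finset.exists_max_image A ord hne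
    have hcard' : (A.erase b).card = m := by
      rw [Finset.card_erase_of_mem hb, hcard]
      omega
    have hstep := stepL E A b hb hIndep hTwins hW
    have hI' : ∀ u ∈ A.erase b, ∀ v ∈ A.erase b,
        ¬ (E u v ∨ (u ∈ A.erase b ∧ v = b)) := by
      intro u hu v hv h
      rcases h with h | ⟨-, rfl⟩
      · exact hIndep u (Finset.mem_of_mem_erase hu) v (Finset.mem_of_mem_erase hv) h
      · exact Finset.ne_of_mem_erase hv rfl
    have hT' : ∀ u ∈ A.erase b, ∀ v ∈ A.erase b, ∀ w : V,
        ((E u w ∨ (u ∈ A.erase b ∧ w = b)) ↔ (E v w ∨ (v ∈ A.erase b ∧ w = b))) ∧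
        ((E w u ∨ (w ∈ A.erase b ∧ u = b)) ↔ (E w v ∨ (w ∈ A.erase b ∧ v = b))) := by
      intro u hu v hv w
      have h1 := hTwins u (Finset.mem_of_mem_erase hu) v (Finset.mem_of_mem_erase hv) w
      have hub : u ≠ b := Finset.ne_of_mem_erase hu
      have hvb : v ≠ b := Finset.ne_of_mem_erase hv
      constructor
      · have := h1.1
        tauto
      · have := h1.2
        tauto
    have hIH := ih (A.erase b) (fun u v => E u v ∨ (u ∈ A.erase b ∧ v = b))
      hcard' hI' hT' ord hord hW
    have hrel : (fun u v => (E u v ∨ (u ∈ A.erase b ∧ v = b))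
        ∨ (u ∈ A.erase b ∧ v ∈ A.erase b ∧ ord u < ord v))
        = (fun u v => E u v ∨ (u ∈ A ∧ v ∈ A ∧ ord u < ord v)) := by
      funext u v
      apply propext
      constructor
      · rintro (h | h)
        · rcases h with h | ⟨hu, heq⟩
          · exact Or.inl h
          · rw [heq]
            refine Or.inr ⟨Finset.mem_of_mem_erase hu, hb, ?_⟩
            have h1 : ord u ≤ ord b := hmax u (Finset.mem_of_mem_erase hu)
            have h2 : ord u ≠ ord b := fun he => (Finset.ne_of_mem_erase hu) (hord he)
            omega
        · exact Or.inr ⟨Finset.mem_of_mem_erase h.1,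
            Finset.mem_of_mem_erase h.2.1, h.2.2⟩
      · rintro (h | ⟨hu, hv, hlt⟩)
        · exact Or.inl (Or.inl h)
        · by_cases hvb : v = b
          · subst hvb
            refine Or.inl (Or.inr ⟨Finset.mem_erase.mpr ⟨?_, hu⟩, rfl⟩)
            intro he
            subst he
            exact absurd hlt (lt_irrefl _)
          · have hub : u ≠ b := by
              intro he
              subst he
              have := hmax v hv
              omega
            exact Or.inr ⟨Finset.mem_erase.mpr ⟨hub, hu⟩,
              Finset.mem_erase.mpr ⟨hvb, hv⟩, hlt⟩
    beta_reduce at hIH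
    rw [hrel] at hIH
    calc LL E W ≤ 2 ^ (A.erase b).card
          * LL (fun u v => E u v ∨ (u ∈ A.erase b ∧ v = b)) W := hstep
      _ ≤ 2 ^ (A.erase b).card * (2 ^ (m.choose 2)
          * LL (fun u v => E u v ∨ (u ∈ A ∧ v ∈ A ∧ ord u < ord v)) W) :=
        mul_le_mul_right hIH _
      _ = 2 ^ ((m + 1).choose 2)
          * LL (fun u v => E u v ∨ (u ∈ A ∧ v ∈ A ∧ ord u < ord v)) W := by
        rw [hcard', ← mul_assoc, ← pow_add]
        congr 2
        rw [Nat.choose_succ_succ, Nat.choose_one_right]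

theorem stmt8 {V : Type} [Fintype V] [DecidableEq V] (E : V → V → Prop)
    (hsimple : ∀ w : V, ¬ E w w) (A : Finset V)
    (hIndep : ∀ u ∈ A, ∀ v ∈ A, ¬ E u v)
    (hTwins : ∀ u ∈ A, ∀ v ∈ A, ∀ w : V, (E u w ↔ E v w) ∧ (E w u ↔ E w v))
    (ord : V → ℕ) (hord : Function.Injective ord)
    (W : ℝ → ℝ → ℝ) (hW : IsTournamenton W) :
    (2 : ℝ) ^ (-(A.card.choose 2 : ℤ)) * homDensity E W ≤
      homDensity (fun u v => E u v ∨ (u ∈ A ∧ v ∈ A ∧ ord u < ord v)) W := by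
  classical
  have hmain := mainL A.card A E rfl hIndep hTwins ord hord hW
  rw [hd_eq E hW, hd_eq _ hW]
  have hfin : LL (fun u v => E u v ∨ (u ∈ A ∧ v ∈ A ∧ ord u < ord v)) W ≠ ⊤ :=
    (lt_of_le_of_lt (LL_le_one _ _) (by norm_num)).ne
  have h1 : (LL E W).toReal
      ≤ 2 ^ (A.card.choose 2)
        * (LL (fun u v => E u v ∨ (u ∈ A ∧ v ∈ A ∧ ord u < ord v)) W).toReal := by
    have h2 := ENNReal.toReal_mono
      (ENNReal.mul_ne_top (by simp) hfin) hmain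
    rwa [ENNReal.toReal_mul, ENNReal.toReal_pow, ENNReal.toReal_ofNat] at h2
  rw [zpow_neg, zpow_natCast]
  rw [inv_mul_le_iff₀ (by positivity)]
  exact h1


end
end
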